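/- arXiv:1412.0906 — 6 statements merged into one kernel-verified Lean document; each statement's English description precedes it below -/
import Mathlib

section
/- Let t ≥ 1 and let σ_1 ≤ σ_2 ≤ … ≤ σ_t be non-negative integers. Then the following are equivalent: (1) for every integer k with 0 ≤ k ≤ σ_1 + … + σ_t there exists a subset A ⊆ {1,…,t} with k = Σ_{i∈A} σ_i; (2) (σ_1,…,σ_t) satisfies the changemaker condition. -/
/-- The changemaker condition for a tuple `σ_1 ≤ … ≤ σ_t` of non-negative integers
(indexed here by `Fin t`, so `σ i` corresponds to `σ_{i+1}` in 1-based notation):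
`σ_1 ≤ 1` and `σ_{i-1} ≤ σ_i ≤ σ_1 + … + σ_{i-1} + 1` for `1 < i ≤ t`. -/
def Changemaker {t : ℕ} (σ : Fin t → ℕ) : Prop :=
  (∀ i : Fin t, (i : ℕ) = 0 → σ i ≤ 1) ∧
  (∀ i j : Fin t, (j : ℕ) + 1 = (i : ℕ) →
    σ j ≤ σ i ∧ σ i ≤ (∑ k ∈ Finset.univ.filter (fun k : Fin t => (k : ℕ) < (i : ℕ)), σ k) + 1)

/-- Prefix sum of the first `n` values. -/
def pSum {t : ℕ} (σ : Fin t → ℕ) (n : ℕ) : ℕ :=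
  ∑ k ∈ Finset.univ.filter (fun k : Fin t => (k : ℕ) < n), σ k

lemma pSum_zero {t : ℕ} (σ : Fin t → ℕ) : pSum σ 0 = 0 := by
  unfold pSum; simp

lemma pSum_succ {t : ℕ} (σ : Fin t → ℕ) (n : ℕ) (hn : n < t) :
    pSum σ (n + 1) = pSum σ n + σ ⟨n, hn⟩ := by
  unfold pSum
  have hset : (Finset.univ.filter (fun k : Fin t => (k : ℕ) < n + 1))
      = insert (⟨n, hn⟩ : Fin t) (Finset.univ.filter (fun k : Fin t => (k : ℕ) < n)) := by
    ext k
    simp [Fin.ext_iff]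
    omega
  rw [hset, Finset.sum_insert (by simp)]
  omega

lemma pSum_total {t : ℕ} (σ : Fin t → ℕ) : pSum σ t = ∑ i, σ i := by
  unfold pSum
  congr 1
  apply Finset.filter_true_of_mem
  intro k _
  exact k.isLt

lemma cm_bound {t : ℕ} (σ : Fin t → ℕ) (hcm : Changemaker σ) (i : Fin t) :
    σ i ≤ pSum σ (i : ℕ) + 1 := by
  rcases Nat.eq_zero_or_pos (i : ℕ) with h0 | hpos
  · have := hcm.1 i h0
    omega
  · obtain ⟨m, hm⟩ : ∃ m, (i : ℕ) = m + 1 := ⟨(i : ℕ) - 1, by omega⟩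
    have hmt : m < t := by have := i.isLt; omega
    have := (hcm.2 i ⟨m, hmt⟩ (by simp [hm])).2
    simpa [pSum] using this

lemma greedy {t : ℕ} (σ : Fin t → ℕ) (hcm : Changemaker σ) :
    ∀ n, n ≤ t → ∀ k, k ≤ pSum σ n →
      ∃ A ⊆ Finset.univ.filter (fun i : Fin t => (i : ℕ) < n), k = ∑ i ∈ A, σ i := by
  intro n
  induction n with
  | zero =>
    intro _ k hk
    rw [pSum_zero] at hk
    exact ⟨∅, by simp, by simpa using (Nat.le_zero.mp hk)⟩
  | succ n ih =>
    intro hn k hk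
    have hn' : n < t := hn
    rw [pSum_succ σ n hn'] at hk
    by_cases h : k ≤ pSum σ n
    · obtain ⟨A, hA, hk'⟩ := ih (le_of_lt hn') k h
      refine ⟨A, hA.trans ?_, hk'⟩
      intro x
      simp only [Finset.mem_filter, Finset.mem_univ, true_and]
      omega
    · push_neg at h
      have hle : σ ⟨n, hn'⟩ ≤ pSum σ n + 1 := cm_bound σ hcm ⟨n, hn'⟩
      obtain ⟨A, hA, hk'⟩ := ih (le_of_lt hn') (k - σ ⟨n, hn'⟩) (by omega)
      have hni : (⟨n, hn'⟩ : Fin t) ∉ A := by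
        intro hmem
        have := hA hmem
        simp at this
      refine ⟨insert ⟨n, hn'⟩ A, ?_, ?_⟩
      · intro x hx
        simp only [Finset.mem_insert] at hx
        simp only [Finset.mem_filter, Finset.mem_univ, true_and]
        rcases hx with rfl | hx
        · exact Nat.lt_succ_self n
        · have := hA hx
          simp only [Finset.mem_filter, Finset.mem_univ, true_and] at this
          omega
      · have hσk : σ ⟨n, hn'⟩ ≤ k := le_trans hle h
        rw [Finset.sum_insert hni, ← hk']
        exact (Nat.add_sub_cancel' hσk).symm

/-- Brown's criterion: for `t ≥ 1` and non-negative integers `σ_1 ≤ … ≤ σ_t`,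
every integer `0 ≤ k ≤ σ_1 + … + σ_t` is a subset sum of the `σ_i` if and only if
`(σ_1, …, σ_t)` satisfies the changemaker condition. -/
theorem stmt0 (t : ℕ) (ht : 1 ≤ t) (σ : Fin t → ℕ) (hmono : Monotone σ) :
    (∀ k : ℕ, k ≤ ∑ i, σ i → ∃ A : Finset (Fin t), k = ∑ i ∈ A, σ i) ↔ Changemaker σ := by
  constructor
  · intro H
    constructor
    · intro i hi
      by_contra hcon
      push_neg at hcon
      have h2 : 2 ≤ σ i := hcon
      have hall : ∀ m : Fin t, 2 ≤ σ m := by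
        intro m
        exact le_trans h2 (hmono (by simp [Fin.le_def, hi]))
      have h1sum : 1 ≤ ∑ j, σ j :=
        le_trans (by omega : 1 ≤ σ i) (Finset.single_le_sum (fun j _ => Nat.zero_le _) (Finset.mem_univ i))
      obtain ⟨A, hA⟩ := H 1 h1sum
      rcases Finset.eq_empty_or_nonempty A with rfl | ⟨m, hm⟩
      · simp at hA
      · have := Finset.single_le_sum (fun j _ => Nat.zero_le (σ j)) hm
        have := hall m
        omega
    · intro i j hij
      have hji : j ≤ i := by rw [Fin.le_def]; omega
      refine ⟨hmono hji, ?_⟩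
      by_contra hcon
      push_neg at hcon
      set P := pSum σ (i : ℕ) with hP
      have hcon' : P + 2 ≤ σ i := by
        have : (∑ k ∈ Finset.univ.filter (fun k : Fin t => (k : ℕ) < (i : ℕ)), σ k) = P := rfl
        omega
      -- P + 1 ≤ total sum
      have hsplit : P + ∑ k ∈ Finset.univ.filter (fun k : Fin t => ¬ (k : ℕ) < (i : ℕ)), σ k
          = ∑ k, σ k := by
        rw [hP]; unfold pSum
        exact Finset.sum_filter_add_sum_filter_not _ _ _
      have hige : σ i ≤ ∑ k ∈ Finset.univ.filter (fun k : Fin t => ¬ (k : ℕ) < (i : ℕ)), σ k := by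
        apply Finset.single_le_sum (fun j _ => Nat.zero_le (σ j))
        simp
      obtain ⟨A, hA⟩ := H (P + 1) (by omega)
      by_cases hsub : ∀ m ∈ A, (m : ℕ) < (i : ℕ)
      · have : ∑ k ∈ A, σ k ≤ P := by
          rw [hP]; unfold pSum
          apply Finset.sum_le_sum_of_subset
          intro m hm
          simp only [Finset.mem_filter, Finset.mem_univ, true_and]
          exact hsub m hm
        omega
      · push_neg at hsub
        obtain ⟨m, hm, hmi⟩ := hsub
        have h1 : σ i ≤ σ m := hmono (by rw [Fin.le_def]; omega)
        have h2 : σ m ≤ ∑ k ∈ A, σ k :=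
          Finset.single_le_sum (fun j _ => Nat.zero_le (σ j)) hm
        omega
  · intro hcm k hk
    rw [← pSum_total σ] at hk
    obtain ⟨A, _, hA⟩ := greedy σ hcm t le_rfl k hk
    exact ⟨A, hA⟩
end

section
/- If ρ realizes (V_i), then for every integer k with 0 ≤ 2k ≤ n, the set {‖c‖² : c ∈ ℤ^{t+1} characteristic, c·ρ = 2k − n} has least element 8V_k + t + 1. -/
/-- The standard inner product on `ℤ^{t+1}`. -/
def dotP {t : ℕ} (x y : Fin (t + 1) → ℤ) : ℤ := ∑ i, x i * y i

/-- A vector of `ℤ^{t+1}` is characteristic if all of its coordinates are odd. -/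
def CharVec {t : ℕ} (c : Fin (t + 1) → ℤ) : Prop := ∀ i, Odd (c i)

/-- `ρ ∈ ℤ^{t+1}` realizes the sequence `(V_i)` if, with `n = ‖ρ‖²`, for every integer `k`
with `2|k| ≤ n` the set `{‖c‖² : c characteristic, c·ρ ≡ n + 2k (mod 2n)}` has least
element `8V_{|k|} + t + 1`. -/
def Realizes {t : ℕ} (V : ℕ → ℕ) (ρ : Fin (t + 1) → ℤ) : Prop :=
  ∀ k : ℤ, 2 * |k| ≤ dotP ρ ρ →
    IsLeast {N : ℤ | ∃ c : Fin (t + 1) → ℤ, CharVec c ∧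
        dotP c ρ ≡ dotP ρ ρ + 2 * k [ZMOD 2 * dotP ρ ρ] ∧ N = dotP c c}
      (8 * (V k.natAbs : ℤ) + t + 1)

lemma dotP_addmul {t : ℕ} (c ρ : Fin (t + 1) → ℤ) (a : ℤ) :
    dotP (fun i => c i + a * ρ i) ρ = dotP c ρ + a * dotP ρ ρ := by
  simp only [dotP, Finset.mul_sum, ← Finset.sum_add_distrib]
  exact Finset.sum_congr rfl fun i _ => by ring

lemma dotP_addmul_self {t : ℕ} (c ρ : Fin (t + 1) → ℤ) (a : ℤ) :
    dotP (fun i => c i + a * ρ i) (fun i => c i + a * ρ i)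
      = dotP c c + 2 * a * dotP c ρ + a ^ 2 * dotP ρ ρ := by
  simp only [dotP, Finset.mul_sum, ← Finset.sum_add_distrib]
  exact Finset.sum_congr rfl fun i _ => by ring

lemma dotP_neg {t : ℕ} (c ρ : Fin (t + 1) → ℤ) :
    dotP (fun i => -c i) ρ = -dotP c ρ := by
  simp [dotP, Finset.sum_neg_distrib]

lemma dotP_neg_self {t : ℕ} (c : Fin (t + 1) → ℤ) :
    dotP (fun i => -c i) (fun i => -c i) = dotP c c := by
  simp [dotP]

lemma charVec_addmul {t : ℕ} {c : Fin (t + 1) → ℤ} (hc : CharVec c) (a : ℤ)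
    (ρ : Fin (t + 1) → ℤ) : CharVec (fun i => c i + 2 * a * ρ i) := by
  intro i
  exact (hc i).add_even ⟨a * ρ i, by ring⟩

/-- If `ρ` realizes `(V_i)`, then for every integer `k` with `0 ≤ 2k ≤ n`, the set
`{‖c‖² : c characteristic, c·ρ = 2k − n}` has least element `8V_k + t + 1`. -/
theorem stmt1 (t : ℕ) (V : ℕ → ℕ) (g : ℕ)
    (hV1 : ∀ i, V (i + 1) ≤ V i)
    (hV2 : ∀ i, V i = 0 ↔ g ≤ i)
    (hV3 : ∀ i, V i ≤ V (i + 1) + 1)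
    (ρ : Fin (t + 1) → ℤ)
    (hmono : ∀ i j : Fin (t + 1), i ≤ j → ρ j ≤ ρ i)
    (hpos : ∀ i, 1 ≤ ρ i)
    (hg : 2 * (g : ℤ) ≤ dotP ρ ρ)
    (hreal : Realizes V ρ) :
    ∀ k : ℤ, 0 ≤ k → 2 * k ≤ dotP ρ ρ →
      IsLeast {N : ℤ | ∃ c : Fin (t + 1) → ℤ, CharVec c ∧
          dotP c ρ = 2 * k - dotP ρ ρ ∧ N = dotP c c}
        (8 * (V k.natAbs : ℤ) + t + 1) := by
  intro k hk0 hkn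
  have hnpos : 0 < dotP ρ ρ := by
    refine Finset.sum_pos (fun i _ => ?_) Finset.univ_nonempty
    have := hpos i; nlinarith
  set n := dotP ρ ρ with hn
  obtain ⟨⟨c, hc, hcong, hcc⟩, hlb⟩ := hreal k (by rwa [abs_of_nonneg hk0])
  -- the congruence class determined by `2k - n` is the same
  have hmem_of_eq : ∀ c' : Fin (t + 1) → ℤ, CharVec c' → dotP c' ρ = 2 * k - n →
      dotP c' ρ ≡ n + 2 * k [ZMOD 2 * n] := by
    intro c' _ h
    rw [h]
    exact Int.modEq_iff_dvd.mpr ⟨1, by ring⟩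
  constructor
  · -- membership: produce a characteristic vector with exact dot product
    -- lower bounds for c ± 2ρ in the same congruence class
    have haux : ∀ a : ℤ, dotP (fun i => c i + 2 * a * ρ i) ρ ≡ n + 2 * k [ZMOD 2 * n] := by
      intro a
      rw [dotP_addmul]
      calc dotP c ρ + 2 * a * n ≡ dotP c ρ [ZMOD 2 * n] :=
            Int.modEq_iff_dvd.mpr ⟨-a, by ring⟩
        _ ≡ n + 2 * k [ZMOD 2 * n] := hcong
    have hbd : ∀ a : ℤ, dotP c c ≤ dotP c c + 2 * (2 * a) * dotP c ρ + (2 * a) ^ 2 * n := by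
      intro a
      have := hlb ⟨fun i => c i + 2 * a * ρ i, charVec_addmul hc a ρ, haux a,
        (dotP_addmul_self c ρ (2 * a)).symm⟩
      rw [hcc] at this
      linarith
    have h1 : -n ≤ dotP c ρ := by have := hbd 1; linarith
    have h2 : dotP c ρ ≤ n := by have := hbd (-1); linarith
    have hdvd : 2 * n ∣ dotP c ρ - (2 * k - n) := by
      have h3 : 2 * n ∣ (n + 2 * k) - dotP c ρ := Int.ModEq.dvd hcong
      have : dotP c ρ - (2 * k - n) = 2 * n - ((n + 2 * k) - dotP c ρ) := by ring
      rw [this]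
      exact dvd_sub (dvd_refl _) h3
    obtain ⟨m, hm⟩ := hdvd
    have hm0 : 0 ≤ m := by
      by_contra h
      push_neg at h
      have hm1 : m ≤ -1 := by omega
      nlinarith
    have hm1 : m ≤ 1 := by
      by_contra h
      push_neg at h
      have : 2 ≤ m := by omega
      nlinarith
    interval_cases m
    · -- m = 0 : c itself works
      exact ⟨c, hc, by linarith [hm], hcc⟩
    · -- m = 1 : then k = 0 and dotP c ρ = n; use -c
      have hk : k = 0 := by omega
      refine ⟨fun i => -c i, fun i => (hc i).neg, ?_, by rw [dotP_neg_self]; exact hcc⟩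
      rw [dotP_neg, hk]
      omega
  · -- lower bound
    rintro N ⟨c', hc', hdot, hN⟩
    exact hlb ⟨c', hc', hmem_of_eq c' hc' hdot, hN⟩
end

section
/- If ρ realizes (V_i), then: (1) 2g̃ = Σ_{i=0}^t ρ_i(ρ_i − 1); (2) for every integer m with 0 ≤ m < V_0, T_m = max{ρ·α : α ∈ S_m}; and (3) g̃ ≤ max{ρ·α : α ∈ S_{V_0}}. -/
/-- `T_m = #{i : 0 ≤ i < g̃ and 0 < V_i ≤ m}` (note `T_0 = 0`). -/
def Tq (V : ℕ → ℕ) (g m : ℕ) : ℕ :=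
  ((Finset.range g).filter (fun i => 0 < V i ∧ V i ≤ m)).card

/-- `S_m = {α ∈ ℤ^{t+1} : α_i ≥ 0 for all i, Σ α_i(α_i+1) = 2m}`. -/
def Sset (t m : ℕ) : Set (Fin (t + 1) → ℤ) :=
  {α | (∀ i, 0 ≤ α i) ∧ ∑ i, α i * (α i + 1) = 2 * (m : ℤ)}

lemma succ_mul_nonneg (a : ℤ) : 0 ≤ a * (a + 1) := by
  rcases le_or_gt 0 a with h | h
  · exact mul_nonneg h (by linarith)
  · exact mul_nonneg_of_nonpos_of_nonpos (by linarith) (by linarith)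

lemma dotP_lin {t : ℕ} (a b r : Fin (t+1) → ℤ) (k : ℤ) :
    dotP (fun i => a i + k * b i) r = dotP a r + k * dotP b r := by
  unfold dotP
  rw [Finset.mul_sum, ← Finset.sum_add_distrib]
  exact Finset.sum_congr rfl fun i _ => by ring

lemma dotP_quad {t : ℕ} (a b : Fin (t+1) → ℤ) (k : ℤ) :
    dotP (fun i => a i + k * b i) (fun i => a i + k * b i)
      = dotP a a + 2 * k * dotP a b + k ^ 2 * dotP b b := by
  unfold dotP
  rw [Finset.mul_sum, Finset.mul_sum, ← Finset.sum_add_distrib, ← Finset.sum_add_distrib]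
  exact Finset.sum_congr rfl fun i _ => by ring

lemma normDecomp {t : ℕ} (γ : Fin (t+1) → ℤ) :
    dotP (fun i => 2 * γ i + 1) (fun i => 2 * γ i + 1)
      = 4 * (∑ i, γ i * (γ i + 1)) + (t + 1) := by
  unfold dotP
  rw [Finset.sum_congr rfl (fun i (_ : i ∈ Finset.univ) =>
    show (2*γ i+1) * (2*γ i+1) = 4 * (γ i * (γ i + 1)) + 1 by ring)]
  rw [Finset.sum_add_distrib, ← Finset.mul_sum]
  simp [Finset.card_univ]

lemma dotDecomp {t : ℕ} (γ r : Fin (t+1) → ℤ) :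
    dotP (fun i => 2 * γ i + 1) r = 2 * (∑ i, γ i * r i) + ∑ i, r i := by
  unfold dotP
  rw [Finset.sum_congr rfl (fun i (_ : i ∈ Finset.univ) =>
    show (2*γ i+1) * r i = 2 * (γ i * r i) + r i by ring)]
  rw [Finset.sum_add_distrib, ← Finset.mul_sum]

lemma const_sum_le {t : ℕ} (f : Fin (t+1) → ℤ) (hf : ∀ i, 1 ≤ f i) :
    (t+1 : ℤ) ≤ ∑ i, f i := by
  calc (t+1 : ℤ) = ∑ _i : Fin (t+1), (1:ℤ) := by simp
  _ ≤ ∑ i, f i := Finset.sum_le_sum fun i _ => hf i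

set_option maxHeartbeats 2000000 in
/-- If `ρ` realizes `(V_i)` then: (1) `2g̃ = Σ ρ_i(ρ_i − 1)`; (2) for `0 ≤ m < V_0`,
`T_m = max{ρ·α : α ∈ S_m}`; (3) `g̃ ≤ max{ρ·α : α ∈ S_{V_0}}`. -/
theorem stmt2 (t : ℕ) (V : ℕ → ℕ) (g : ℕ)
    (hV1 : ∀ i, V (i + 1) ≤ V i)
    (hV2 : ∀ i, V i = 0 ↔ g ≤ i)
    (hV3 : ∀ i, V i ≤ V (i + 1) + 1)
    (ρ : Fin (t + 1) → ℤ)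
    (hmono : ∀ i j : Fin (t + 1), i ≤ j → ρ j ≤ ρ i)
    (hpos : ∀ i, 1 ≤ ρ i)
    (hg : 2 * (g : ℤ) ≤ dotP ρ ρ)
    (hreal : Realizes V ρ) :
    2 * (g : ℤ) = (∑ i, ρ i * (ρ i - 1)) ∧
    (∀ m : ℕ, m < V 0 →
      IsGreatest {x : ℤ | ∃ α ∈ Sset t m, x = dotP ρ α} (Tq V g m : ℤ)) ∧
    (∃ α ∈ Sset t (V 0), (g : ℤ) ≤ dotP ρ α) := by
  -- basic facts about V
  have hanti : ∀ i j : ℕ, i ≤ j → V j ≤ V i := by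
    intro i j hij
    exact Nat.le_induction (le_refl (V i)) (fun k _ ih => le_trans (hV1 k) ih) j hij
  have hchain : ∀ j : ℕ, V 0 ≤ V j + j := by
    intro j
    induction j with
    | zero => simp
    | succ k ih =>
      have := hV3 k
      omega
  have hVg : V g = 0 := (hV2 g).mpr le_rfl
  have hV0g : V 0 ≤ g := by have := hchain g; omega
  -- basic facts about ρ
  have hρ2 : ∀ i : Fin (t+1), ρ i ≤ ρ i * ρ i := fun i => by nlinarith [hpos i]
  have htn : (t+1 : ℤ) ≤ dotP ρ ρ := const_sum_le _ (fun i => by nlinarith [hpos i])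
  have htp : (t+1 : ℤ) ≤ ∑ i, ρ i := const_sum_le _ hpos
  have hpn : (∑ i, ρ i) ≤ dotP ρ ρ := Finset.sum_le_sum fun i _ => hρ2 i
  have hsum1 : (∑ i, ρ i * (ρ i - 1)) = dotP ρ ρ - ∑ i, ρ i := by
    unfold dotP
    rw [← Finset.sum_sub_distrib]
    exact Finset.sum_congr rfl fun i _ => by ring
  -- part 1
  obtain ⟨s, hs⟩ : ∃ s : ℕ, dotP ρ ρ - (∑ i, ρ i) = 2 * (s : ℤ) := by
    have heven : Even (dotP ρ ρ - ∑ i, ρ i) := by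
      rw [← hsum1]
      apply Finset.even_sum
      intro i _
      have he : ρ i * (ρ i - 1) = (ρ i - 1) * (ρ i - 1 + 1) := by ring
      rw [he]
      exact Int.even_mul_succ_self _
    obtain ⟨r, hr⟩ := heven
    have hr0 : 0 ≤ r := by linarith
    exact ⟨r.toNat, by rw [Int.toNat_of_nonneg hr0]; linarith⟩
  have ht0 : (0:ℤ) ≤ (t:ℤ) := Int.ofNat_nonneg t
  have hgs : g = s := by
    have hgle : g ≤ s := by
      have habs : 2 * |(-(s:ℤ))| ≤ dotP ρ ρ := by
        rw [abs_neg, abs_of_nonneg (by positivity : (0:ℤ) ≤ (s:ℤ))]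
        linarith
      have hone : CharVec (fun _ : Fin (t+1) => (1:ℤ)) := fun i => ⟨0, by ring⟩
      have hd1 : dotP (fun _ : Fin (t+1) => (1:ℤ)) ρ = ∑ i, ρ i := by
        unfold dotP; exact Finset.sum_congr rfl fun i _ => one_mul _
      have hd2 : dotP (fun _ : Fin (t+1) => (1:ℤ)) (fun _ => (1:ℤ)) = (t:ℤ)+1 := by
        unfold dotP; simp
      have hcong : dotP (fun _ : Fin (t+1) => (1:ℤ)) ρ ≡
          dotP ρ ρ + 2 * (-(s:ℤ)) [ZMOD 2 * dotP ρ ρ] := by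
        have he : dotP (fun _ : Fin (t+1) => (1:ℤ)) ρ = dotP ρ ρ + 2 * (-(s:ℤ)) := by
          rw [hd1]; linarith
        rw [he]
      have hle := (hreal (-(s:ℤ)) habs).2 ⟨fun _ => (1:ℤ), hone, hcong, hd2.symm⟩
      have hna : ((-(s:ℤ)).natAbs) = s := by simp
      rw [hna] at hle
      have hVs : V s = 0 := by omega
      exact (hV2 s).1 hVs
    have hsle : s ≤ g := by
      rcases Nat.eq_zero_or_pos s with hs0 | hs1
      · omega
      by_contra hgs'
      push_neg at hgs'
      have hVs1 : V (s-1) = 0 := (hV2 (s-1)).mpr (by omega)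
      have hs1' : (1:ℤ) ≤ (s:ℤ) := by exact_mod_cast hs1
      have habs : 2 * |(s:ℤ)-1| ≤ dotP ρ ρ := by
        rw [abs_of_nonneg (by linarith)]
        linarith
      obtain ⟨c, hchar, hcong, hcval⟩ := (hreal ((s:ℤ)-1) habs).1
      have hna : ((s:ℤ)-1).natAbs = s - 1 := by omega
      rw [hna, hVs1] at hcval
      choose γ hγ using hchar
      have hcfun : c = fun i => 2*γ i + 1 := funext hγ
      rw [hcfun] at hcval hcong
      rw [normDecomp] at hcval
      have hzero : (∑ i, γ i * (γ i + 1)) = 0 := by push_cast at hcval; linarith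
      have hterm := (Finset.sum_eq_zero_iff_of_nonneg
        (fun i _ => succ_mul_nonneg (γ i))).1 hzero
      have hbound : ∀ i, -1 ≤ γ i ∧ γ i ≤ 0 := by
        intro i
        have h := hterm i (Finset.mem_univ i)
        rcases mul_eq_zero.1 h with h' | h'
        · constructor <;> omega
        · constructor <;> omega
      have hup : (∑ i, γ i * ρ i) ≤ 0 := Finset.sum_nonpos fun i _ =>
        mul_nonpos_iff.mpr (Or.inr ⟨(hbound i).2, by linarith [hpos i]⟩)
      have hlo : -(∑ i, ρ i) ≤ ∑ i, γ i * ρ i := by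
        rw [← Finset.sum_neg_distrib]
        apply Finset.sum_le_sum
        intro i _
        have := mul_le_mul_of_nonneg_right (hbound i).1 (by linarith [hpos i] : (0:ℤ) ≤ ρ i)
        linarith
      obtain ⟨l, hl⟩ := Int.ModEq.dvd hcong
      rw [dotDecomp] at hl
      -- hl : (dotP ρ ρ + 2*((s:ℤ)-1)) - (2*(∑ i, γ i * ρ i) + ∑ i, ρ i) = 2 * dotP ρ ρ * l
      have hnpos : (0:ℤ) < dotP ρ ρ := by linarith
      have h2 : 2 ≤ 2 * dotP ρ ρ * l := by linarith
      have h3 : 2 * dotP ρ ρ * l ≤ 2 * dotP ρ ρ - 2 := by linarith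
      rcases le_or_gt l 0 with hll | hll
      · nlinarith
      · have hll1 : 1 ≤ l := hll
        nlinarith
    omega
  have h2g : 2 * (g : ℤ) = dotP ρ ρ - ∑ i, ρ i := by rw [hgs, hs]
  have hpart1 : 2 * (g : ℤ) = ∑ i, ρ i * (ρ i - 1) := by rw [hsum1, h2g]
  -- the staircase function u
  have hex : ∀ m : ℕ, ∃ i, V i ≤ m := fun m => ⟨g, by omega⟩
  obtain ⟨u, hu_iff⟩ : ∃ u : ℕ → ℕ, ∀ m i : ℕ, V i ≤ m ↔ u m ≤ i :=
    ⟨fun m => Nat.find (hex m), fun m i =>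
      ⟨fun h => Nat.find_min' (hex m) h,
       fun h => le_trans (hanti _ _ h) (Nat.find_spec (hex m))⟩⟩
  have hug : ∀ m, u m ≤ g := fun m => (hu_iff m g).1 (by omega)
  have hTq : ∀ m, Tq V g m = g - u m := by
    intro m
    unfold Tq
    have : (Finset.range g).filter (fun i => 0 < V i ∧ V i ≤ m) = Finset.Ico (u m) g := by
      ext i
      simp only [Finset.mem_filter, Finset.mem_range, Finset.mem_Ico]
      constructor
      · rintro ⟨h1, _, h3⟩; exact ⟨(hu_iff m i).1 h3, h1⟩
      · rintro ⟨h1, h2⟩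
        have := (hV2 i)
        exact ⟨h2, by omega, (hu_iff m i).2 h1⟩
    rw [this, Nat.card_Ico]
  have humem : ∀ m : ℕ, m < V 0 → 1 ≤ u m ∧ V (u m) = m := by
    intro m hm
    have hspec : V (u m) ≤ m := (hu_iff m (u m)).2 le_rfl
    have h0 : 1 ≤ u m := by
      by_contra h
      push_neg at h
      have h' : u m = 0 := by omega
      rw [h'] at hspec; omega
    have hprev : ¬ V (u m - 1) ≤ m := by
      intro hcon
      have := (hu_iff m (u m - 1)).1 hcon
      omega
    have h3 := hV3 (u m - 1)
    have he : u m - 1 + 1 = u m := by omega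
    rw [he] at h3
    exact ⟨h0, by omega⟩
  -- upper bound lemma (B)
  have hnn : dotP ρ ρ = ∑ i, ρ i * ρ i := rfl
  have hB : ∀ m : ℕ, m < V 0 → ∀ α ∈ Sset t m, dotP ρ α ≤ (g : ℤ) - (u m : ℤ) := by
    intro m hm α hαS
    obtain ⟨hα0, hαsum⟩ := hαS
    have hx0 : (0:ℤ) ≤ dotP ρ α := Finset.sum_nonneg fun i _ =>
      mul_nonneg (by linarith [hpos i]) (hα0 i)
    have hxcomm : (∑ i, α i * ρ i) = dotP ρ α := Finset.sum_congr rfl fun i _ => mul_comm _ _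
    have hcρ : dotP (fun i => 2*α i + 1) ρ = 2 * dotP ρ α + ∑ i, ρ i := by
      rw [dotDecomp, hxcomm]
    have hmZ : (m:ℤ) < (V 0 : ℤ) := by exact_mod_cast hm
    have hV0gZ : ((V 0 : ℕ) : ℤ) ≤ (g:ℤ) := by exact_mod_cast hV0g
    have hxle : dotP ρ α ≤ (g:ℤ) := by
      by_contra hxg
      push_neg at hxg
      set k : ℤ := dotP ρ α - g with hk_def
      have hk1 : 1 ≤ k := by linarith
      have hdchar : CharVec (fun i => 2*(α i - ρ i) + 1) := fun i => ⟨α i - ρ i, rfl⟩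
      have hdρ : dotP (fun i => 2*(α i - ρ i) + 1) ρ = 2*k - dotP ρ ρ := by
        rw [dotDecomp]
        have he : (∑ i, (α i - ρ i) * ρ i) = dotP ρ α - dotP ρ ρ := by
          rw [Finset.sum_congr rfl (fun i (_ : i ∈ Finset.univ) =>
            show (α i - ρ i) * ρ i = α i * ρ i - ρ i * ρ i by ring),
            Finset.sum_sub_distrib, hxcomm, ← hnn]
        rw [he]
        linarith [h2g]
      have hdsum : (∑ i, (α i - ρ i) * ((α i - ρ i) + 1)) = 2*(m:ℤ) - 2*k := by
        rw [Finset.sum_congr rfl (fun i (_ : i ∈ Finset.univ) =>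
          show (α i - ρ i) * ((α i - ρ i) + 1)
            = α i * (α i + 1) - 2*(α i * ρ i) + ρ i * ρ i - ρ i by ring)]
        rw [Finset.sum_sub_distrib, Finset.sum_add_distrib, Finset.sum_sub_distrib,
          ← Finset.mul_sum, hxcomm, hαsum, ← hnn]
        linarith [h2g]
      have hknorm : dotP (fun i => 2*(α i - ρ i) + 1) (fun i => 2*(α i - ρ i) + 1)
          = 8*(m:ℤ) - 8*k + ((t:ℤ)+1) := by
        rw [normDecomp, hdsum]; ring
      have hk_m : k ≤ (m:ℤ) := by
        have h0 : (0:ℤ) ≤ ∑ i, (α i - ρ i) * ((α i - ρ i) + 1) :=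
          Finset.sum_nonneg fun i _ => succ_mul_nonneg _
        linarith
      have habs : 2*|k| ≤ dotP ρ ρ := by
        rw [abs_of_nonneg (by linarith)]
        linarith
      have hcong : dotP (fun i => 2*(α i - ρ i) + 1) ρ ≡
          dotP ρ ρ + 2*k [ZMOD 2*dotP ρ ρ] := by
        rw [hdρ]
        exact Int.modEq_iff_dvd.mpr ⟨1, by ring⟩
      have hle := (hreal k habs).2 ⟨_, hdchar, hcong, hknorm.symm⟩
      have hkna : (k.natAbs : ℤ) = k := Int.natAbs_of_nonneg (by linarith)
      have hchZ : (V 0 : ℤ) ≤ (V k.natAbs : ℤ) + (k.natAbs : ℤ) := by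
        exact_mod_cast hchain k.natAbs
      rw [hkna] at hchZ
      linarith
    set k : ℤ := dotP ρ α - g with hk_def
    have habs : 2*|k| ≤ dotP ρ ρ := by
      rw [abs_of_nonpos (by linarith)]
      linarith
    have hcchar : CharVec (fun i => 2*α i + 1) := fun i => ⟨α i, rfl⟩
    have hccnorm : dotP (fun i => 2*α i + 1) (fun i => 2*α i + 1) = 8*(m:ℤ) + ((t:ℤ)+1) := by
      rw [normDecomp, hαsum]; ring
    have hcong : dotP (fun i => 2*α i+1) ρ ≡ dotP ρ ρ + 2*k [ZMOD 2*dotP ρ ρ] := by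
      have he : dotP (fun i => 2*α i+1) ρ = dotP ρ ρ + 2*k := by
        rw [hcρ]; linarith [h2g]
      rw [he]
    have hle := (hreal k habs).2 ⟨_, hcchar, hcong, hccnorm.symm⟩
    have hVk : V k.natAbs ≤ m := by
      have h' : (V k.natAbs : ℤ) ≤ (m:ℤ) := by linarith
      exact_mod_cast h'
    have hukna : u m ≤ k.natAbs := (hu_iff m _).1 hVk
    have hknaZ : (k.natAbs : ℤ) = (g:ℤ) - dotP ρ α := by
      rw [← Int.abs_eq_natAbs, abs_of_nonpos (by linarith : k ≤ 0)]
      linarith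
    have hfin : (u m : ℤ) ≤ (g:ℤ) - dotP ρ α := by
      calc (u m : ℤ) ≤ (k.natAbs : ℤ) := by exact_mod_cast hukna
      _ = _ := hknaZ
    linarith
  -- existence lemma (A)
  have hA : ∀ (m w : ℕ), w ≤ g → V w = m → ∃ α ∈ Sset t m, (g : ℤ) - (w : ℤ) ≤ dotP ρ α := by
    intro m w hwg hVw
    have hwZ : (w:ℤ) ≤ (g:ℤ) := by exact_mod_cast hwg
    have hw0Z : (0:ℤ) ≤ (w:ℤ) := Int.ofNat_nonneg w
    have hw2 : 2 * |(-(w:ℤ))| ≤ dotP ρ ρ := by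
      rw [abs_neg, abs_of_nonneg hw0Z]
      linarith
    obtain ⟨hmem, hlb⟩ := hreal (-(w:ℤ)) hw2
    obtain ⟨c, hchar, hcong, hcval⟩ := hmem
    have hna : ((-(w:ℤ)).natAbs) = w := by simp
    rw [hna, hVw] at hcval hlb
    have hcharshift : ∀ e : ℤ, Even e → CharVec (fun i => c i + e * ρ i) := by
      intro e he i
      exact (hchar i).add_even (he.mul_right _)
    have hshift : ∀ e : ℤ, Even e → dotP (fun i => c i + e * ρ i) ρ ≡
        dotP ρ ρ + 2*(-(w:ℤ)) [ZMOD 2*dotP ρ ρ] := by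
      intro e he
      obtain ⟨f, hf⟩ := he
      refine Int.ModEq.trans ?_ hcong
      rw [dotP_lin]
      exact Int.modEq_iff_dvd.mpr ⟨-f, by rw [hf]; ring⟩
    have hbnd : ∀ e : ℤ, Even e →
        8*(m:ℤ) + t + 1 ≤ dotP c c + 2*e*dotP c ρ + e^2*dotP ρ ρ := by
      intro e he
      exact hlb ⟨_, hcharshift e he, hshift e he, (dotP_quad c ρ e).symm⟩
    have hup := hbnd 2 ⟨1, by ring⟩
    have hdown := hbnd (-2) ⟨-1, by ring⟩
    rw [← hcval] at hup hdown
    have habs1 : -dotP ρ ρ ≤ dotP c ρ := by nlinarith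
    have habs2 : dotP c ρ ≤ dotP ρ ρ := by nlinarith
    obtain ⟨l, hl⟩ := Int.ModEq.dvd hcong
    have hnpos : (0:ℤ) < dotP ρ ρ := by linarith
    have hl0 : l = 0 ∨ (l = 1 ∧ (w:ℤ) = 0) := by
      rcases lt_trichotomy l 0 with h | h | h
      · exfalso
        have h1 : l ≤ -1 := by omega
        have h2 : 2*dotP ρ ρ*l ≤ 2*dotP ρ ρ*(-1) :=
          mul_le_mul_of_nonneg_left h1 (by linarith)
        linarith
      · left; exact h
      · have h1 : 1 ≤ l := by omega
        rcases eq_or_lt_of_le h1 with h2 | h2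
        · right
          rw [← h2] at hl
          refine ⟨h2.symm, le_antisymm (by linarith) hw0Z⟩
        · exfalso
          have h3 : (2:ℤ) ≤ l := by omega
          have h4 : 2*dotP ρ ρ*2 ≤ 2*dotP ρ ρ*l :=
            mul_le_mul_of_nonneg_left h3 (by linarith)
          linarith
    obtain ⟨c', hchar', hc'ρ, hc'c⟩ : ∃ c', CharVec c' ∧
        dotP c' ρ = dotP ρ ρ - 2*(w:ℤ) ∧ dotP c' c' = 8*(m:ℤ) + t + 1 := by
      rcases hl0 with h | ⟨h, hw0⟩
      · rw [h] at hl
        exact ⟨c, hchar, by linarith, hcval.symm⟩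
      · rw [h] at hl
        refine ⟨fun i => c i + 2*ρ i, hcharshift 2 ⟨1, by ring⟩, ?_, ?_⟩
        · rw [dotP_lin]; linarith
        · rw [dotP_quad]; rw [← hcval]; linarith
    choose γ hγ using hchar'
    have hcfun : c' = fun i => 2*γ i + 1 := funext hγ
    rw [hcfun] at hc'ρ hc'c
    rw [normDecomp] at hc'c
    rw [dotDecomp] at hc'ρ
    have hγsum : (∑ i, γ i * (γ i + 1)) = 2*(m:ℤ) := by linarith
    have hγρ : (∑ i, γ i * ρ i) = (g:ℤ) - w := by linarith [h2g]
    refine ⟨fun i => if 0 ≤ γ i then γ i else -γ i - 1, ⟨?_, ?_⟩, ?_⟩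
    · intro i; dsimp only; split_ifs with h
      · exact h
      · push_neg at h; linarith
    · rw [← hγsum]
      apply Finset.sum_congr rfl
      intro i _; dsimp only; split_ifs with h
      · rfl
      · ring
    · rw [← hγρ]
      unfold dotP
      apply Finset.sum_le_sum
      intro i _; dsimp only; split_ifs with h
      · exact le_of_eq (mul_comm _ _)
      · push_neg at h
        nlinarith [hpos i]
  refine ⟨hpart1, ?_, ?_⟩
  · intro m hm
    obtain ⟨hu1, hu2⟩ := humem m hm
    have hTm : (Tq V g m : ℤ) = (g : ℤ) - (u m : ℤ) := by
      rw [hTq m, Nat.cast_sub (hug m)]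
    constructor
    · obtain ⟨α, hαS, hαge⟩ := hA m (u m) (hug m) hu2
      have hle := hB m hm α hαS
      exact ⟨α, hαS, by rw [hTm]; exact le_antisymm hαge hle⟩
    · rintro y ⟨α, hαS, rfl⟩
      rw [hTm]
      exact hB m hm α hαS
  · obtain ⟨α, hαS, hαge⟩ := hA (V 0) 0 (Nat.zero_le g) rfl
    exact ⟨α, hαS, by simpa using hαge⟩
end

section
/- If ρ realizes (V_i) and V_0 ≤ 1, then g̃ ≤ 3 and ρ has one of the following forms: if g̃ = 0 then ρ_i = 1 for all i; if g̃ = 1 then ρ_0 = 2 and ρ_i = 1 for all i ≥ 1; if g̃ = 2 then t ≥ 1, ρ_0 = ρ_1 = 2 and ρ_i = 1 for all i ≥ 2; if g̃ = 3 then ρ_0 = 3 and ρ_i = 1 for all i ≥ 1. -/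
private lemma odd_bound {c : ℤ} (h : Odd c) : 4 * (|c| - 1) ≤ c * c - 1 := by
  obtain ⟨m, rfl⟩ := h
  rcases le_or_gt 0 m with hm | hm
  · rw [abs_of_nonneg (by linarith : (0:ℤ) ≤ 2*m+1)]
    rcases eq_or_lt_of_le hm with h | h
    · subst h; norm_num
    · have h1 : 1 ≤ m := h
      nlinarith [mul_nonneg hm (by linarith : (0:ℤ) ≤ m - 1)]
  · rw [abs_of_nonpos (by linarith : (2*m+1:ℤ) ≤ 0)]
    rcases le_or_gt m (-2) with hm2 | hm2
    · nlinarith [mul_nonneg (show (0:ℤ) ≤ -(m+1) by linarith) (show (0:ℤ) ≤ -(m+2) by linarith)]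
    · have : m = -1 := by omega
      subst this; norm_num

/-- If `ρ` realizes `(V_i)` and `V_0 ≤ 1`, then `g̃ ≤ 3` and `ρ` takes one of the stated
forms: `(1,…,1)` if `g̃ = 0`; `(2,1,…,1)` if `g̃ = 1`; `(2,2,1,…,1)` if `g̃ = 2`;
`(3,1,…,1)` if `g̃ = 3`. -/
theorem stmt3 (t : ℕ) (V : ℕ → ℕ) (g : ℕ)
    (hV1 : ∀ i, V (i + 1) ≤ V i)
    (hV2 : ∀ i, V i = 0 ↔ g ≤ i)
    (hV3 : ∀ i, V i ≤ V (i + 1) + 1)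
    (ρ : Fin (t + 1) → ℤ)
    (hmono : ∀ i j : Fin (t + 1), i ≤ j → ρ j ≤ ρ i)
    (hpos : ∀ i, 1 ≤ ρ i)
    (hg : 2 * (g : ℤ) ≤ dotP ρ ρ)
    (hreal : Realizes V ρ)
    (hV0 : V 0 ≤ 1) :
    g ≤ 3 ∧
    (g = 0 → ∀ i, ρ i = 1) ∧
    (g = 1 → ρ 0 = 2 ∧ ∀ i : Fin (t + 1), 1 ≤ (i : ℕ) → ρ i = 1) ∧
    (g = 2 → 1 ≤ t ∧ (∀ i : Fin (t + 1), (i : ℕ) ≤ 1 → ρ i = 2) ∧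
      (∀ i : Fin (t + 1), 2 ≤ (i : ℕ) → ρ i = 1)) ∧
    (g = 3 → ρ 0 = 3 ∧ ∀ i : Fin (t + 1), 1 ≤ (i : ℕ) → ρ i = 1) := by
  classical
  have hρ0 : ∀ i, ρ i ≤ ρ 0 := fun i => hmono 0 i (Fin.zero_le i)
  have hterm : ∀ i : Fin (t+1), 0 ≤ ρ i * ρ i - ρ i := fun i => by nlinarith [hpos i]
  have hsn : (∑ i, ρ i) ≤ dotP ρ ρ := by
    show (∑ i, ρ i) ≤ ∑ i, ρ i * ρ i
    exact Finset.sum_le_sum fun i _ => by nlinarith [hpos i]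
  have hst : (t : ℤ) + 1 ≤ ∑ i, ρ i := by
    have h1 : ∑ _i : Fin (t+1), (1:ℤ) ≤ ∑ i, ρ i := Finset.sum_le_sum fun i _ => hpos i
    simpa using h1
  have hs0 : 0 < ∑ i, ρ i := by
    have : (0:ℤ) ≤ (t:ℤ) := Int.natCast_nonneg t
    linarith
  have hn0 : 0 < dotP ρ ρ := lt_of_lt_of_le hs0 hsn
  -- key norm bound
  have keyB : ∀ c : Fin (t+1) → ℤ, CharVec c →
      4 * |dotP c ρ| ≤ 4 * (∑ i, ρ i) + ρ 0 * (dotP c c - ((t:ℤ)+1)) := by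
    intro c hc
    have habs : ∀ i : Fin (t+1), |c i * ρ i| = |c i| * ρ i := fun i => by
      rw [abs_mul, abs_of_nonneg (by linarith [hpos i] : (0:ℤ) ≤ ρ i)]
    have h1 : |dotP c ρ| ≤ ∑ i, |c i| * ρ i := by
      have h2 := Finset.abs_sum_le_sum_abs (fun i => c i * ρ i) Finset.univ
      calc |dotP c ρ| ≤ ∑ i, |c i * ρ i| := h2
        _ = ∑ i, |c i| * ρ i := Finset.sum_congr rfl fun i _ => habs i
    have h2 : ∀ i : Fin (t+1), 4 * (|c i| * ρ i) ≤ 4 * ρ i + (c i * c i - 1) * ρ 0 := by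
      intro i
      have hb := odd_bound (hc i)
      have hne : c i ≠ 0 := by
        intro h0
        have := hc i
        rw [h0] at this
        exact (Int.not_odd_iff_even.mpr Even.zero) this
      have h1a : 1 ≤ |c i| := Int.one_le_abs hne
      have hcc : 0 ≤ c i * c i - 1 := by
        have := abs_mul_abs_self (c i)
        nlinarith
      have hint1 : 4 * (|c i| - 1) * ρ i ≤ (c i * c i - 1) * ρ i :=
        mul_le_mul_of_nonneg_right hb (by linarith [hpos i])
      have hint2 : (c i * c i - 1) * ρ i ≤ (c i * c i - 1) * ρ 0 :=
        mul_le_mul_of_nonneg_left (hρ0 i) hcc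
      nlinarith [hint1, hint2]
    have h3 : ∑ i, 4 * (|c i| * ρ i) ≤ ∑ i, (4 * ρ i + (c i * c i - 1) * ρ 0) :=
      Finset.sum_le_sum fun i _ => h2 i
    have h4 : ∑ i, (4 * ρ i + (c i * c i - 1) * ρ 0)
        = 4 * (∑ i, ρ i) + ρ 0 * (dotP c c - ((t:ℤ)+1)) := by
      have e1 : ∑ i, (4 * ρ i + (c i * c i - 1) * ρ 0)
          = (∑ i, 4 * ρ i) + (∑ i, (c i * c i - 1)) * ρ 0 := by
        rw [Finset.sum_add_distrib, Finset.sum_mul]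
      have e2 : ∑ i : Fin (t+1), (c i * c i - 1) = dotP c c - ((t:ℤ)+1) := by
        show _ = (∑ i, c i * c i) - ((t:ℤ)+1)
        rw [Finset.sum_sub_distrib]
        simp
      rw [e1, e2, ← Finset.mul_sum]
      ring
    have h5 : 4 * |dotP c ρ| ≤ ∑ i, 4 * (|c i| * ρ i) := by
      rw [← Finset.mul_sum]
      linarith
    linarith
  -- L2 : 2g ≤ n - s
  have heven : Even (dotP ρ ρ - ∑ i, ρ i) := by
    have hrw : dotP ρ ρ - (∑ i, ρ i) = ∑ i, (ρ i * ρ i - ρ i) := by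
      show (∑ i, ρ i * ρ i) - (∑ i, ρ i) = _
      rw [Finset.sum_sub_distrib]
    rw [hrw]
    exact Finset.even_sum _ fun i _ => by
      have h' : ρ i * ρ i - ρ i = (ρ i - 1) * ((ρ i - 1) + 1) := by ring
      rw [h']
      exact Int.even_mul_succ_self (ρ i - 1)
  obtain ⟨e, he⟩ := heven
  have he' : dotP ρ ρ - (∑ i, ρ i) = 2 * e := by linarith
  have he0 : 0 ≤ e := by linarith
  have hL2 : 2 * (g:ℤ) ≤ dotP ρ ρ - ∑ i, ρ i := by
    have heu : ((e.toNat : ℤ)) = e := Int.toNat_of_nonneg he0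
    have hk : 2 * |(-(e.toNat:ℤ))| ≤ dotP ρ ρ := by
      rw [abs_neg, abs_of_nonneg (Int.natCast_nonneg _), heu]
      linarith
    have hmem : ((t:ℤ)+1) ∈ {N : ℤ | ∃ c : Fin (t + 1) → ℤ, CharVec c ∧
        dotP c ρ ≡ dotP ρ ρ + 2 * (-(e.toNat:ℤ)) [ZMOD 2 * dotP ρ ρ] ∧ N = dotP c c} := by
      refine ⟨fun _ => 1, fun i => odd_one, ?_, ?_⟩
      · have h1 : dotP (fun _ => (1:ℤ)) ρ = ∑ i, ρ i := by
          show (∑ i, (1:ℤ) * ρ i) = ∑ i, ρ i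
          simp
        have h2 : dotP ρ ρ + 2 * (-(e.toNat:ℤ)) = ∑ i, ρ i := by
          rw [heu]; linarith
        rw [h1, h2]
      · show ((t:ℤ)+1) = ∑ _i : Fin (t+1), (1:ℤ)*(1:ℤ)
        simp
    have hLB := (hreal (-(e.toNat:ℤ)) hk).2 hmem
    have hna : ((-(e.toNat:ℤ)).natAbs) = e.toNat := by omega
    rw [hna] at hLB
    have hVe : V e.toNat = 0 := by
      have : (V e.toNat : ℤ) ≤ 0 := by linarith
      exact_mod_cast le_antisymm (by exact_mod_cast this) (Nat.zero_le _)
    have hge : g ≤ e.toNat := (hV2 _).mp hVe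
    have : (g:ℤ) ≤ e := by rw [← heu]; exact_mod_cast hge
    linarith
  -- L1 : n - s ≤ 2g
  have hL1 : dotP ρ ρ - (∑ i, ρ i) ≤ 2 * (g:ℤ) := by
    have hkg : 2 * |(g:ℤ)| ≤ dotP ρ ρ := by
      rwa [abs_of_nonneg (Int.natCast_nonneg g)]
    obtain ⟨c, hc, hmod, hN⟩ := (hreal (g:ℤ) hkg).1
    have hVg : V g = 0 := (hV2 g).mpr le_rfl
    rw [Int.natAbs_natCast, hVg] at hN
    have hB := keyB c hc
    have hdc : dotP c c - ((t:ℤ)+1) = 0 := by push_cast at hN; linarith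
    rw [hdc, mul_zero, add_zero] at hB
    have habs := abs_le.mp (by linarith : |dotP c ρ| ≤ ∑ i, ρ i)
    obtain ⟨q, hq⟩ := hmod.dvd
    -- hq : (dotP ρ ρ + 2*g) - dotP c ρ = 2 * dotP ρ ρ * q
    rcases le_or_gt q 0 with hq0 | hq1
    · have hnq : dotP ρ ρ * q ≤ 0 := mul_nonpos_of_nonneg_of_nonpos hn0.le hq0
      have hg0 : (0:ℤ) ≤ (g:ℤ) := Int.natCast_nonneg g
      linarith [habs.2]
    · rcases le_or_gt q 1 with hq2 | hq2
      · have : q = 1 := le_antisymm hq2 hq1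
        subst this
        linarith [habs.1]
      · have h2q : 2 ≤ q := hq2
        have hnq : dotP ρ ρ * 2 ≤ dotP ρ ρ * q := mul_le_mul_of_nonneg_left h2q hn0.le
        linarith [habs.1]
  have h2g : dotP ρ ρ - (∑ i, ρ i) = 2 * (g:ℤ) := le_antisymm hL1 hL2
  have hsum : ∑ i, (ρ i * ρ i - ρ i) = 2 * (g:ℤ) := by
    rw [Finset.sum_sub_distrib]
    exact h2g
  have hsub : ∀ A : Finset (Fin (t+1)), (∑ i ∈ A, (ρ i * ρ i - ρ i)) ≤ 2 * (g:ℤ) := by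
    intro A
    calc (∑ i ∈ A, (ρ i * ρ i - ρ i)) ≤ ∑ i, (ρ i * ρ i - ρ i) :=
          Finset.sum_le_sum_of_subset_of_nonneg (Finset.subset_univ A) (fun i _ _ => hterm i)
      _ = 2 * (g:ℤ) := hsum
  have eq_one : ∀ i : Fin (t+1), ρ i * ρ i - ρ i ≤ 0 → ρ i = 1 := fun i h =>
    le_antisymm (by nlinarith [hpos i, sq_nonneg (ρ i - 1)]) (hpos i)
  -- L3 : if g ≥ 1 then n ≤ s + 2 ρ₀
  have hL3 : 1 ≤ g → dotP ρ ρ ≤ (∑ i, ρ i) + 2 * ρ 0 := by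
    intro hg1
    have hV01 : V 0 = 1 := by
      have h1 : ¬ (V 0 = 0) := fun h => by have := (hV2 0).mp h; omega
      omega
    have hk0 : 2 * |(0:ℤ)| ≤ dotP ρ ρ := by simpa using hn0.le
    obtain ⟨c, hc, hmod, hN⟩ := (hreal 0 hk0).1
    rw [show ((0:ℤ).natAbs) = 0 from rfl, hV01] at hN
    have hB := keyB c hc
    have hdc : dotP c c - ((t:ℤ)+1) = 8 := by push_cast at hN; linarith
    rw [hdc] at hB
    have habs := abs_le.mp (by linarith : |dotP c ρ| ≤ (∑ i, ρ i) + 2 * ρ 0)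
    obtain ⟨q, hq⟩ := hmod.dvd
    rcases le_or_gt q 0 with hq0 | hq1
    · have hnq : dotP ρ ρ * q ≤ 0 := mul_nonpos_of_nonneg_of_nonpos hn0.le hq0
      linarith [habs.2]
    · have hnq : dotP ρ ρ * 1 ≤ dotP ρ ρ * q := mul_le_mul_of_nonneg_left hq1 hn0.le
      linarith [habs.1]
  -- basic facts
  have hone : 1 ≤ g → 2 ≤ ρ 0 := by
    intro hg1
    by_contra hcon
    push_neg at hcon
    have hall1 : ∀ i, ρ i = 1 := fun i => le_antisymm (by linarith [hρ0 i]) (hpos i)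
    have hz : ∑ i, (ρ i * ρ i - ρ i) = 0 :=
      Finset.sum_eq_zero fun i _ => by rw [hall1 i]; ring
    rw [hz] at hsum
    have : (1:ℤ) ≤ (g:ℤ) := by exact_mod_cast hg1
    linarith
  have hρ03 : 1 ≤ g → ρ 0 ≤ 3 := by
    intro hg1
    have h1 := hL3 hg1
    have hf0 : ρ 0 * ρ 0 - ρ 0 ≤ 2 * (g:ℤ) := by
      have := hsub {0}
      simpa using this
    -- 2g = n - s ≤ 2ρ₀
    have h2 : 2 * (g:ℤ) ≤ 2 * ρ 0 := by linarith [h2g]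
    nlinarith [hpos 0]
  have hgle : g ≤ 3 := by
    rcases Nat.eq_zero_or_pos g with hg0 | hg1
    · omega
    · have h1 := hρ03 hg1
      have h2 := hL3 hg1
      have : (g:ℤ) ≤ ρ 0 := by linarith [h2g]
      have : (g:ℤ) ≤ 3 := by linarith
      exact_mod_cast this
  refine ⟨hgle, ?_, ?_, ?_, ?_⟩
  · -- g = 0
    intro hg0 i
    apply eq_one
    have := hsub {i}
    rw [hg0] at this
    simpa using this
  · -- g = 1
    intro hg1
    have hρ02 : 2 ≤ ρ 0 := hone (by omega)
    have hρ0eq : ρ 0 = 2 := by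
      have hf0 : ρ 0 * ρ 0 - ρ 0 ≤ 2 * (g:ℤ) := by simpa using hsub {0}
      rw [hg1] at hf0
      push_cast at hf0
      have hle : ρ 0 ≤ 2 := by
        by_contra hcon
        push_neg at hcon
        nlinarith [mul_nonneg (by linarith : (0:ℤ) ≤ ρ 0 - 3) (by linarith : (0:ℤ) ≤ ρ 0)]
      exact le_antisymm hle hρ02
    refine ⟨hρ0eq, ?_⟩
    intro i hi
    have hne : (0 : Fin (t+1)) ≠ i := by
      intro h
      rw [← h] at hi
      simp at hi
    have hp := hsub {0, i}
    rw [Finset.sum_pair hne, hg1] at hp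
    apply eq_one
    rw [hρ0eq] at hp
    push_cast at hp
    linarith
  · -- g = 2
    intro hg2
    have hρ02 : 2 ≤ ρ 0 := hone (by omega)
    have hf0 : ρ 0 * ρ 0 - ρ 0 ≤ 2 * (g:ℤ) := by simpa using hsub {0}
    rw [hg2] at hf0
    push_cast at hf0
    have hρ0eq : ρ 0 = 2 := by
      have hle : ρ 0 ≤ 2 := by
        by_contra hcon
        push_neg at hcon
        nlinarith [mul_nonneg (by linarith : (0:ℤ) ≤ ρ 0 - 3) (by linarith : (0:ℤ) ≤ ρ 0)]
      exact le_antisymm hle hρ02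
    have hsum4 : ∑ i, (ρ i * ρ i - ρ i) = 4 := by rw [hsum, hg2]; norm_num
    have ht1 : 1 ≤ t := by
      by_contra hcon
      have ht0 : t = 0 := by omega
      subst ht0
      have : ∑ i : Fin 1, (ρ i * ρ i - ρ i) = ρ 0 * ρ 0 - ρ 0 := by
        simp [Fin.sum_univ_one]
      rw [this, hρ0eq] at hsum4
      norm_num at hsum4
    set i1 : Fin (t+1) := ⟨1, by omega⟩ with hi1
    have hi1v : (i1 : ℕ) = 1 := rfl
    have hρ1eq : ρ i1 = 2 := by
      by_contra hcon
      have hρ1le : ρ i1 ≤ 2 := by rw [← hρ0eq]; exact hρ0 i1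
      have hρ11 : ρ i1 = 1 := by
        have := hpos i1
        omega
      have hall : ∀ j : Fin (t+1), j ≠ 0 → ρ j * ρ j - ρ j = 0 := by
        intro j hj
        have hj1 : 1 ≤ (j:ℕ) := by
          rcases Nat.eq_zero_or_pos (j:ℕ) with h | h
          · exact absurd (Fin.ext (by simpa using h)) hj
          · exact h
        have hle : ρ j ≤ ρ i1 := hmono i1 j (by rw [Fin.le_def, hi1v]; exact hj1)
        have hj1' : ρ j = 1 := le_antisymm (by omega) (hpos j)
        rw [hj1']; ring
      have hsing : ∑ i, (ρ i * ρ i - ρ i) = ρ 0 * ρ 0 - ρ 0 :=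
        Finset.sum_eq_single_of_mem 0 (Finset.mem_univ 0) (fun j _ hj => hall j hj)
      rw [hsing, hρ0eq] at hsum4
      norm_num at hsum4
    refine ⟨ht1, ?_, ?_⟩
    · intro i hi
      rcases Nat.le_one_iff_eq_zero_or_eq_one.mp hi with h | h
      · have hieq : i = 0 := Fin.ext (by simpa using h)
        rw [hieq]; exact hρ0eq
      · have hieq : i = i1 := Fin.ext (by rw [hi1v]; exact h)
        rw [hieq]; exact hρ1eq
    · intro j hj
      have hne0 : (0 : Fin (t+1)) ≠ i1 :=
        Fin.ne_of_val_ne (show (0:Fin (t+1)).val ≠ i1.val by rw [Fin.val_zero, hi1v]; omega)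
      have hne0j : (0 : Fin (t+1)) ≠ j :=
        Fin.ne_of_val_ne (show (0:Fin (t+1)).val ≠ j.val by rw [Fin.val_zero]; omega)
      have hne1j : i1 ≠ j :=
        Fin.ne_of_val_ne (show i1.val ≠ j.val by rw [hi1v]; omega)
      have htr := hsub {0, i1, j}
      rw [hg2] at htr
      have hmem0 : (0:Fin (t+1)) ∉ ({i1, j} : Finset (Fin (t+1))) := by
        simp only [Finset.mem_insert, Finset.mem_singleton]
        push_neg
        exact ⟨hne0, hne0j⟩
      rw [Finset.sum_insert hmem0, Finset.sum_pair hne1j] at htr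
      apply eq_one
      have h0v : ρ 0 * ρ 0 - ρ 0 = 2 := by rw [hρ0eq]; norm_num
      have h1v : ρ i1 * ρ i1 - ρ i1 = 2 := by rw [hρ1eq]; norm_num
      push_cast at htr
      linarith
  · -- g = 3
    intro hg3
    have hρ03' : ρ 0 ≤ 3 := hρ03 (by omega)
    have h2 := hL3 (by omega : 1 ≤ g)
    have hρ0g : (3:ℤ) ≤ ρ 0 := by
      have : (g:ℤ) ≤ ρ 0 := by linarith [h2g]
      rw [hg3] at this
      exact_mod_cast this
    have hρ0eq : ρ 0 = 3 := le_antisymm hρ03' hρ0g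
    refine ⟨hρ0eq, ?_⟩
    intro i hi
    have hne : (0 : Fin (t+1)) ≠ i := by
      intro h
      rw [← h] at hi
      simp at hi
    have hp := hsub {0, i}
    rw [Finset.sum_pair hne, hg3] at hp
    apply eq_one
    rw [hρ0eq] at hp
    push_cast at hp
    linarith
end

section
/- Suppose ρ realizes (V_i) and V_0 > 1. If ρ_0 ≥ 5, or if the sum of those coordinates ρ_i that are even is at least 6, then μ ≤ 2. -/
/-- When `V_0 > 1`, `μ = min{T_i − T_{i−1} : 1 ≤ i ≤ V_0 − 1}`. -/
noncomputable def muQ (V : ℕ → ℕ) (g : ℕ) : ℕ :=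
  sInf {d : ℕ | ∃ i : ℕ, 1 ≤ i ∧ i ≤ V 0 - 1 ∧ d = Tq V g i - Tq V g (i - 1)}

/- ============ auxiliary material ============ -/

/-- `hh ρ = ⌊(ρ-1)²/4⌋`, the maximal value of `x*(ρ-1-x)` over the integers. -/
def hh (ρ : ℤ) : ℤ := (ρ - 1)^2 / 4

/-- the deficit of `x` for `ρ`. -/
def dd (ρ x : ℤ) : ℤ := hh ρ - x * (ρ - 1 - x)

/-- the even part of `ρ`. -/
def ee (ρ : ℤ) : ℤ := if Even ρ then ρ else 0

lemma hh_odd (r : ℤ) : hh (2*r+1) = r^2 := by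
  unfold hh
  rw [show (2*r+1-1)^2 = (r^2)*4 by ring]
  exact Int.mul_ediv_cancel _ (by norm_num)

lemma hh_even (r : ℤ) : hh (2*r) = r^2 - r := by
  unfold hh
  rw [show (2*r-1)^2 = 1 + (r^2-r)*4 by ring]
  rw [Int.add_mul_ediv_right _ _ (by norm_num : (4:ℤ) ≠ 0)]
  norm_num

lemma dd_odd (r x : ℤ) : dd (2*r+1) x = (x - r)^2 := by
  unfold dd; rw [hh_odd]; ring

lemma dd_even (r x : ℤ) : dd (2*r) x = (x - r) * (x - r + 1) := by
  unfold dd; rw [hh_even]; ring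

lemma dd_nonneg (ρ x : ℤ) : 0 ≤ dd ρ x := by
  rcases Int.even_or_odd ρ with ⟨r, hr⟩ | ⟨r, hr⟩
  · rw [show ρ = 2*r by omega, dd_even]
    rcases le_or_gt r x with h | h
    · exact mul_nonneg (by omega) (by omega)
    · nlinarith [mul_nonneg (show (0:ℤ) ≤ r - x by omega) (show (0:ℤ) ≤ r - x - 1 by omega)]
  · rw [show ρ = 2*r+1 by omega, dd_odd]
    positivity

/-- coordinates with zero deficit carry value at least `ρ(ρ-1)/2 - ee ρ/2` (doubled form). -/
lemma dd_eq_zero_bound (ρ x : ℤ) (h1 : 1 ≤ ρ) (h : dd ρ x = 0) :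
    ρ*(ρ-1) - ee ρ ≤ 2*(x*ρ) := by
  rcases Int.even_or_odd ρ with ⟨r, hr⟩ | ⟨r, hr⟩
  · have hρ : ρ = 2*r := by omega
    have hr1 : 1 ≤ r := by omega
    subst hρ
    rw [dd_even] at h
    unfold ee
    rw [if_pos ⟨r, by ring⟩]
    rcases mul_eq_zero.mp h with h' | h'
    · have hx : x = r := by omega
      rw [hx]
      nlinarith [hr1]
    · have hx : x = r - 1 := by omega
      rw [hx]
      nlinarith [hr1]
  · have hρ : ρ = 2*r+1 := by omega
    subst hρ
    rw [dd_odd] at h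
    have hx : x = r := by nlinarith [sq_nonneg (x - r)]
    rw [hx]
    have hne : ¬ Even (2*r+1 : ℤ) := by rw [Int.even_iff]; omega
    unfold ee
    rw [if_neg hne]
    nlinarith [sq_nonneg r]

lemma dd_base (ρ : ℤ) : dd ρ ((ρ-1)/2) = 0 := by
  rcases Int.even_or_odd ρ with ⟨r, hr⟩ | ⟨r, hr⟩
  · have hρ : ρ = 2*r := by omega
    subst hρ
    have : (2*r-1)/2 = r - 1 := by omega
    rw [this, dd_even]; ring
  · have hρ : ρ = 2*r+1 := by omega
    subst hρ
    have : (2*r+1-1)/2 = r := by omega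
    rw [this, dd_odd]; ring

lemma dd_base_sub_one (ρ : ℤ) (hodd : ¬ Even ρ) : dd ρ ((ρ-1)/2 - 1) = 1 := by
  rcases Int.even_or_odd ρ with ⟨r, hr⟩ | ⟨r, hr⟩
  · exact absurd ⟨r, by omega⟩ hodd
  · have hρ : ρ = 2*r+1 := by omega
    subst hρ
    have : (2*r+1-1)/2 = r := by omega
    rw [this, dd_odd]; ring

/-- value of the base point, per coordinate (doubled form). -/
lemma base_val (ρ : ℤ) : ρ*(ρ-1) - 2*(((ρ-1)/2)*ρ) = ee ρ := by
  rcases Int.even_or_odd ρ with ⟨r, hr⟩ | ⟨r, hr⟩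
  · have hρ : ρ = 2*r := by omega
    subst hρ
    have h2 : (2*r-1)/2 = r - 1 := by omega
    unfold ee
    rw [h2, if_pos ⟨r, by ring⟩]; ring
  · have hρ : ρ = 2*r+1 := by omega
    subst hρ
    have h2 : (2*r+1-1)/2 = r := by omega
    have hne : ¬ Even (2*r+1 : ℤ) := by rw [Int.even_iff]; omega
    unfold ee
    rw [h2, if_neg hne]; ring

lemma coord_id (ρ x : ℤ) : x*(x+1) = x*ρ - hh ρ + dd ρ x := by
  unfold dd; ring

lemma ee_nonneg (ρ : ℤ) (h : 1 ≤ ρ) : 0 ≤ ee ρ := by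
  unfold ee; split <;> omega

lemma ee_le_sq (ρ : ℤ) (h : 1 ≤ ρ) : ee ρ ≤ ρ * ρ := by
  unfold ee; split <;> nlinarith

/- ============ bridges to `Realizes` ============ -/

section bridges

variable {t : ℕ} (V : ℕ → ℕ) (ρ : Fin (t + 1) → ℤ)

lemma dot_c_rho (x : Fin (t+1) → ℤ) :
    dotP (fun i => 2 * x i + 1) ρ = (∑ i, ρ i) + 2 * (∑ i, x i * ρ i) := by
  unfold dotP
  rw [Finset.mul_sum, ← Finset.sum_add_distrib]
  exact Finset.sum_congr rfl (fun i _ => by ring)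

lemma dot_c_c (x : Fin (t+1) → ℤ) :
    dotP (fun i => 2 * x i + 1) (fun i => 2 * x i + 1)
      = 4 * (∑ i, x i * (x i + 1)) + (t + 1) := by
  unfold dotP
  rw [Finset.mul_sum]
  have : ∀ i ∈ Finset.univ, (2 * x i + 1) * (2 * x i + 1) = 4 * (x i * (x i + 1)) + 1 :=
    fun i _ => by ring
  rw [Finset.sum_congr rfl this, Finset.sum_add_distrib]
  simp [Finset.card_univ]

lemma bridge_min (hreal : Realizes V ρ) (γ : ℤ)
    (hγ : dotP ρ ρ = (∑ i, ρ i) + 2*γ) (k : ℤ) (hk : 2 * |k| ≤ dotP ρ ρ)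
    (x : Fin (t+1) → ℤ) (hx : (∑ i, x i * ρ i) ≡ γ + k [ZMOD dotP ρ ρ]) :
    2 * (V k.natAbs : ℤ) ≤ ∑ i, x i * (x i + 1) := by
  set n := dotP ρ ρ with hn
  have hmod : dotP (fun i => 2 * x i + 1) ρ ≡ n + 2 * k [ZMOD 2 * n] := by
    have hdvd : n ∣ (γ + k) - (∑ i, x i * ρ i) := Int.ModEq.dvd hx
    have : 2 * n ∣ (n + 2*k) - dotP (fun i => 2 * x i + 1) ρ := by
      rw [dot_c_rho]
      have : (n + 2*k) - ((∑ i, ρ i) + 2 * (∑ i, x i * ρ i))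
          = 2 * ((γ + k) - (∑ i, x i * ρ i)) := by rw [hγ]; ring
      rw [this]
      exact mul_dvd_mul_left 2 hdvd
    exact (Int.modEq_iff_dvd.mpr this)
  have hmem : (dotP (fun i => 2 * x i + 1) (fun i => 2 * x i + 1)) ∈
      {N : ℤ | ∃ c : Fin (t + 1) → ℤ, CharVec c ∧
        dotP c ρ ≡ dotP ρ ρ + 2 * k [ZMOD 2 * dotP ρ ρ] ∧ N = dotP c c} :=
    ⟨_, fun i => ⟨x i, rfl⟩, hmod, rfl⟩
  have := (hreal k hk).2 hmem
  rw [dot_c_c] at this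
  linarith

lemma bridge_exists (hreal : Realizes V ρ) (γ : ℤ)
    (hγ : dotP ρ ρ = (∑ i, ρ i) + 2*γ) (k : ℤ) (hk : 2 * |k| ≤ dotP ρ ρ) :
    ∃ x : Fin (t+1) → ℤ, ((∑ i, x i * ρ i) ≡ γ + k [ZMOD dotP ρ ρ]) ∧
      (∑ i, x i * (x i + 1)) = 2 * (V k.natAbs : ℤ) := by
  obtain ⟨c, hchar, hmod, hN⟩ := (hreal k hk).1
  choose x hx using hchar
  have hc : c = fun i => 2 * x i + 1 := funext fun i => hx i
  subst hc
  refine ⟨x, ?_, ?_⟩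
  · have hdvd : 2 * dotP ρ ρ ∣ (dotP ρ ρ + 2*k) - dotP (fun i => 2 * x i + 1) ρ :=
      Int.ModEq.dvd hmod
    have h2 : (dotP ρ ρ + 2*k) - dotP (fun i => 2 * x i + 1) ρ
        = 2 * ((γ + k) - (∑ i, x i * ρ i)) := by
      rw [dot_c_rho, hγ]; ring
    rw [h2] at hdvd
    have h3 := (mul_dvd_mul_iff_left (by norm_num : (2:ℤ) ≠ 0)).mp hdvd
    exact Int.modEq_iff_dvd.mpr h3
  · rw [dot_c_c] at hN
    linarith

end bridges

/- ============ the key gap ============ -/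

lemma key_gap (t : ℕ) (V : ℕ → ℕ) (ρ : Fin (t + 1) → ℤ)
    (hpos : ∀ i, 1 ≤ ρ i)
    (hreal : Realizes V ρ)
    (hcase : 5 ≤ ρ 0 ∨ 6 ≤ ∑ i ∈ Finset.univ.filter (fun i : Fin (t + 1) => Even (ρ i)), ρ i) :
    ∃ K : ℕ, V (K + 3) + 2 ≤ V K := by
  classical
  set n := dotP ρ ρ with hn
  set s := ∑ i, ρ i with hs
  set ES := ∑ i, ee (ρ i) with hES
  clear_value n s ES
  -- ES is the filtered sum from the hypothesis
  have hESfilter : ES = ∑ i ∈ Finset.univ.filter (fun i : Fin (t + 1) => Even (ρ i)), ρ i := by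
    rw [hES, Finset.sum_filter]
    rfl
  have hESnn : 0 ≤ ES := by
    rw [hES]
    exact Finset.sum_nonneg fun i _ => ee_nonneg _ (hpos i)
  -- γ
  have hns : ∃ γ : ℤ, n = s + 2*γ := by
    have hev : (n - s) % 2 = 0 := by
      have : n - s = ∑ i, (ρ i * ρ i - ρ i) := by
        rw [hn, hs, dotP, ← Finset.sum_sub_distrib]
      rw [this, Finset.sum_int_mod]
      have : ∀ i ∈ Finset.univ, (ρ i * ρ i - ρ i) % 2 = 0 := by
        intro i _
        have hev2 : Even (ρ i * ρ i - ρ i) := by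
          have := Int.even_mul_succ_self (ρ i - 1)
          have h2 : (ρ i - 1) * (ρ i - 1 + 1) = ρ i * ρ i - ρ i := by ring
          rwa [h2] at this
        obtain ⟨m, hm⟩ := hev2
        omega
      rw [Finset.sum_congr rfl this]
      simp
    exact ⟨(n - s)/2, by omega⟩
  obtain ⟨γ, hγ⟩ := hns
  -- choose δ and establish (linearized) case facts
  obtain ⟨δ, hcf⟩ :
      ∃ δ : ℤ, ((δ = 0 ∧ 6 ≤ ES) ∨ (δ = 1 ∧ ¬ Even (ρ 0) ∧ 5 ≤ ρ 0)) := by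
    by_cases h6 : 6 ≤ ES
    · exact ⟨0, Or.inl ⟨rfl, h6⟩⟩
    · rcases hcase with h5 | h6'
      · refine ⟨1, Or.inr ⟨rfl, ?_, h5⟩⟩
        intro hev
        apply h6
        rw [hESfilter]
        have h0mem : (0 : Fin (t+1)) ∈ Finset.univ.filter (fun i : Fin (t + 1) => Even (ρ i)) := by
          simp [hev]
        have h60 : (6:ℤ) ≤ ρ 0 := by
          rcases hev with ⟨r, hr⟩
          omega
        calc (6:ℤ) ≤ ρ 0 := h60
          _ ≤ ∑ i ∈ Finset.univ.filter (fun i : Fin (t + 1) => Even (ρ i)), ρ i :=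
              Finset.single_le_sum (fun i _ => by linarith [hpos i]) h0mem
      · exact absurd (hESfilter ▸ h6') h6
  -- the construction
  set b : Fin (t+1) → ℤ := fun i => (ρ i - 1)/2 with hb
  set xstar : Fin (t+1) → ℤ := fun i => b i - (if i = 0 then δ else 0) with hxstar
  set vstar := ∑ i, xstar i * ρ i with hvstar
  set H := ∑ i, hh (ρ i) with hH
  clear_value vstar H
  have hx0 : xstar 0 = (ρ 0 - 1)/2 - δ := by
    rw [hxstar]
    simp [hb]
  have hxi : ∀ i : Fin (t+1), i ≠ 0 → xstar i = (ρ i - 1)/2 := by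
    intro i hi
    rw [hxstar]
    simp [hb, hi]
  -- deficit of xstar is δ
  have hDstar : ∑ i, dd (ρ i) (xstar i) = δ := by
    rw [Finset.sum_eq_single 0]
    · rw [hx0]
      rcases hcf with ⟨h0, _⟩ | ⟨h1, hodd, _⟩
      · rw [h0, sub_zero]
        exact dd_base _
      · rw [h1]
        exact dd_base_sub_one _ hodd
    · intro i _ hi
      rw [hxi i hi]
      exact dd_base _
    · simp
  -- value of xstar : 2*(γ - vstar) = ES + 2*δ*ρ 0
  have hvstar_val : 2*(γ - vstar) = ES + 2*δ*(ρ 0) := by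
    have h1 : ∑ i, (ρ i * (ρ i - 1) - 2 * (b i * ρ i)) = ES := by
      rw [hES]
      exact Finset.sum_congr rfl fun i _ => base_val (ρ i)
    have h2 : vstar = (∑ i, b i * ρ i) - δ * ρ 0 := by
      rw [hvstar]
      have hterm : ∀ i ∈ Finset.univ, xstar i * ρ i
          = b i * ρ i - (if i = 0 then δ * ρ i else 0) := by
        intro i _
        by_cases hi : i = 0
        · subst hi
          rw [if_pos rfl, hx0]
          have hb0 : b (0 : Fin (t+1)) = (ρ 0 - 1)/2 := by rw [hb]
          rw [hb0]; ring
        · rw [if_neg hi, hxi i hi]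
          have hbi : b i = (ρ i - 1)/2 := by rw [hb]
          rw [hbi]; ring
      rw [Finset.sum_congr rfl hterm, Finset.sum_sub_distrib,
        Finset.sum_ite_eq' Finset.univ (0 : Fin (t+1)) (fun i => δ * ρ i)]
      simp
    have h3 : ∑ i, (ρ i * (ρ i - 1)) = n - s := by
      rw [hn, hs, dotP, ← Finset.sum_sub_distrib]
      exact Finset.sum_congr rfl fun i _ => by ring
    have h4 : (∑ i, (ρ i * (ρ i - 1) - 2 * (b i * ρ i)))
        = (n - s) - 2 * ∑ i, b i * ρ i := by
      rw [Finset.sum_sub_distrib, h3, ← Finset.mul_sum]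
    rw [h2]
    have h5 := h4.symm.trans h1
    linarith
  set A := γ - vstar with hA
  clear_value A
  -- linearized key facts
  have hAfact : (δ = 0 ∧ 2*A = ES ∧ 6 ≤ ES) ∨
      (δ = 1 ∧ 2*A = ES + 2*ρ 0 ∧ ¬ Even (ρ 0) ∧ 5 ≤ ρ 0) := by
    rcases hcf with ⟨h0, h6⟩ | ⟨h1, hodd, h5⟩
    · subst h0
      refine Or.inl ⟨rfl, ?_, h6⟩
      have := hvstar_val
      rw [hA]
      linarith
    · subst h1
      refine Or.inr ⟨rfl, ?_, hodd, h5⟩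
      have := hvstar_val
      rw [hA]
      linarith
  have hA3 : 3 ≤ A := by
    rcases hAfact with ⟨h0, he, h6⟩ | ⟨h1, he, hodd, h5⟩
    · omega
    · omega
  -- n is big : 2*A ≤ n
  have hnbig : 2*A ≤ n := by
    have hsq : ES ≤ ∑ i, ρ i * ρ i := by
      rw [hES]
      exact Finset.sum_le_sum fun i _ => ee_le_sq _ (hpos i)
    have hn' : n = ∑ i, ρ i * ρ i := by rw [hn, dotP]
    rcases hAfact with ⟨h0, he, h6⟩ | ⟨h1, he, hodd, h5⟩
    · omega
    · have e0 : ee (ρ 0) = 0 := by unfold ee; rw [if_neg hodd]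
      have hsplit1 : ∑ i, ρ i * ρ i = ρ 0 * ρ 0 + ∑ i ∈ Finset.univ.erase 0, ρ i * ρ i :=
        (Finset.add_sum_erase _ _ (Finset.mem_univ 0)).symm
      have hsplit2 : ES = ee (ρ 0) + ∑ i ∈ Finset.univ.erase 0, ee (ρ i) := by
        rw [hES]
        exact (Finset.add_sum_erase _ _ (Finset.mem_univ 0)).symm
      have hrest : ∑ i ∈ Finset.univ.erase 0, ee (ρ i) ≤ ∑ i ∈ Finset.univ.erase 0, ρ i * ρ i :=
        Finset.sum_le_sum fun i _ => ee_le_sq _ (hpos i)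
      have h00 : 2 * ρ 0 ≤ ρ 0 * ρ 0 := by nlinarith
      omega
  have hn6 : 6 ≤ n := by omega
  -- cost2 of xstar
  set cstar := ∑ i, xstar i * (xstar i + 1) with hcstar
  clear_value cstar
  have sum_id : ∀ y : Fin (t+1) → ℤ,
      ∑ i, y i * (y i + 1) = (∑ i, y i * ρ i) - H + ∑ i, dd (ρ i) (y i) := by
    intro y
    rw [hH, ← Finset.sum_sub_distrib, ← Finset.sum_add_distrib]
    exact Finset.sum_congr rfl fun i _ => coord_id (ρ i) (y i)
  have even_cost : ∀ y : Fin (t+1) → ℤ, (∑ i, y i * (y i + 1)) % 2 = 0 := by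
    intro y
    rw [Finset.sum_int_mod]
    have hterm : ∀ i ∈ Finset.univ, (y i * (y i + 1)) % 2 = 0 := by
      intro i _
      obtain ⟨m, hm⟩ := Int.even_mul_succ_self (y i)
      omega
    rw [Finset.sum_congr rfl hterm]
    simp
  have hcstar_id : cstar = vstar - H + δ := by
    rw [hcstar, sum_id, hDstar, hvstar]
  -- indices
  set K : ℕ := (A - 3).toNat with hK
  clear_value K
  have hKA : (K : ℤ) = A - 3 := by omega
  have habs1 : (vstar - γ).natAbs = K + 3 := by omega
  have hk1 : 2 * |vstar - γ| ≤ dotP ρ ρ := by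
    rw [abs_of_nonpos (by omega)]
    omega
  have hup : 2 * (V (K + 3) : ℤ) ≤ cstar := by
    have hmm := bridge_min V ρ hreal γ (by omega) (vstar - γ) hk1 xstar
      (by rw [← hvstar, show γ + (vstar - γ) = vstar by ring])
    rw [hcstar]
    rwa [habs1] at hmm
  -- lower bound : cstar + 4 ≤ 2 * V K
  have habs2 : (vstar + 3 - γ).natAbs = K := by omega
  have hk2 : 2 * |vstar + 3 - γ| ≤ dotP ρ ρ := by
    rw [abs_of_nonpos (by omega)]
    omega
  obtain ⟨x, hxmod, hxcost⟩ := bridge_exists V ρ hreal γ (by omega) (vstar + 3 - γ) hk2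
  rw [habs2] at hxcost
  set vx := ∑ i, x i * ρ i with hvx
  set Dx := ∑ i, dd (ρ i) (x i) with hDx
  clear_value vx Dx
  have hDxnn : 0 ≤ Dx := by
    rw [hDx]
    exact Finset.sum_nonneg fun i _ => dd_nonneg _ _
  have hxid : (∑ i, x i * (x i + 1)) = vx - H + Dx := by
    rw [hvx, hDx]; exact sum_id x
  have hxeven : (∑ i, x i * (x i + 1)) % 2 = 0 := even_cost x
  have hcseven : cstar % 2 = 0 := by
    rw [hcstar]; exact even_cost xstar
  -- congruence : n ∣ (γ + (vstar + 3 - γ)) - vx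
  obtain ⟨p, hp⟩ : ∃ p, vstar + 3 - vx = n * p := by
    obtain ⟨p, hp⟩ := Int.ModEq.dvd hxmod
    rw [← hn] at hp
    exact ⟨p, by linarith⟩
  have hgoal : cstar + 4 ≤ 2 * (V K : ℤ) := by
    rw [← hxcost]
    rcases lt_trichotomy p 0 with hplt | hp0 | hpgt
    · -- p ≤ -1 : vx ≥ vstar + 3 + n, easy
      have hnp : n * p ≤ n * (-1) := by
        apply mul_le_mul_of_nonneg_left _ (by omega)
        omega
      have hbig : vstar + 3 + n ≤ vx := by linarith
      omega
    · -- p = 0 : vx = vstar + 3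
      subst hp0
      rw [mul_zero] at hp
      have hvx3 : vx = vstar + 3 := by omega
      have hpar : (Dx - δ) % 2 = 1 := by omega
      rcases hAfact with ⟨h0, he, h6⟩ | ⟨h1, he, hodd, h5⟩
      · -- δ = 0 : Dx odd hence ≥ 1
        omega
      · -- δ = 1 : Dx even ; rule out Dx = 0
        have hDxne : Dx ≠ 0 := by
          intro hDx0
          have hDx0' : ∑ i, dd (ρ i) (x i) = 0 := by rw [← hDx]; exact hDx0
          have hall : ∀ i ∈ Finset.univ, dd (ρ i) (x i) = 0 :=
            (Finset.sum_eq_zero_iff_of_nonneg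
              (fun i _ => dd_nonneg (ρ i) (x i))).mp hDx0'
          have hbound : ∑ i, (ρ i * (ρ i - 1) - ee (ρ i)) ≤ ∑ i, 2 * (x i * ρ i) :=
            Finset.sum_le_sum fun i _ =>
              dd_eq_zero_bound _ _ (hpos i) (hall i (Finset.mem_univ i))
          have hL : ∑ i, (ρ i * (ρ i - 1) - ee (ρ i)) = (n - s) - ES := by
            rw [Finset.sum_sub_distrib, ← hES]
            congr 1
            rw [hn, hs, dotP, ← Finset.sum_sub_distrib]
            exact Finset.sum_congr rfl fun i _ => by ring
          have hR : ∑ i, 2 * (x i * ρ i) = 2 * vx := by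
            rw [hvx, Finset.mul_sum]
          rw [hL, hR] at hbound
          omega
        omega
    · -- p ≥ 1 : vx ≤ vstar + 3 - n : reflect
      have hnp : n * 1 ≤ n * p := by
        apply mul_le_mul_of_nonneg_left _ (by omega)
        omega
      have hvxsmall : vx ≤ vstar + 3 - n := by linarith
      set x' : Fin (t+1) → ℤ := fun i => -1 - x i with hx'
      have hcost' : (∑ i, x' i * (x' i + 1)) = (∑ i, x i * (x i + 1)) := by
        refine Finset.sum_congr rfl fun i _ => ?_
        have : x' i = -1 - x i := by rw [hx']
        rw [this]; ring
      have hvx'' : (∑ i, x' i * ρ i) = -s - vx := by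
        have hterm : ∀ i ∈ Finset.univ, x' i * ρ i = -(ρ i) - x i * ρ i := by
          intro i _
          have hxi' : x' i = -1 - x i := by rw [hx']
          rw [hxi']; ring
        rw [Finset.sum_congr rfl hterm, Finset.sum_sub_distrib, Finset.sum_neg_distrib,
          hs, hvx]
      set Dx' := ∑ i, dd (ρ i) (x' i) with hDx'
      clear_value Dx'
      have hDx'nn : 0 ≤ Dx' := by
        rw [hDx']
        exact Finset.sum_nonneg fun i _ => dd_nonneg _ _
      have hxid' : (∑ i, x i * (x i + 1)) = (-s - vx) - H + Dx' := by
        rw [← hcost', hDx']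
        rw [sum_id x', hvx'']
      rcases hAfact with ⟨h0, he, h6⟩ | ⟨h1, he, hodd, h5⟩
      · -- δ = 0, A ≥ 3 ; boundary case needs parity
        rcases eq_or_lt_of_le (show vstar + 2*A - 3 ≤ -s - vx by omega) with heq | hlt
        · omega
        · omega
      · -- δ = 1, A ≥ 5
        omega
  -- wrap up
  refine ⟨K, ?_⟩
  have hfin : (V (K+3) : ℤ) + 2 ≤ (V K : ℤ) := by omega
  exact_mod_cast hfin

/- ============ the theorem ============ -/

/-- Suppose `ρ` realizes `(V_i)` and `V_0 > 1`. If `ρ_0 ≥ 5`, or if the sum of the even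
coordinates of `ρ` is at least `6`, then `μ ≤ 2`. -/
theorem stmt4 (t : ℕ) (V : ℕ → ℕ) (g : ℕ)
    (hV1 : ∀ i, V (i + 1) ≤ V i)
    (hV2 : ∀ i, V i = 0 ↔ g ≤ i)
    (hV3 : ∀ i, V i ≤ V (i + 1) + 1)
    (ρ : Fin (t + 1) → ℤ)
    (hmono : ∀ i j : Fin (t + 1), i ≤ j → ρ j ≤ ρ i)
    (hpos : ∀ i, 1 ≤ ρ i)
    (hg : 2 * (g : ℤ) ≤ dotP ρ ρ)
    (hreal : Realizes V ρ)
    (hV0 : 1 < V 0)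
    (hcase : 5 ≤ ρ 0 ∨ 6 ≤ ∑ i ∈ Finset.univ.filter (fun i : Fin (t + 1) => Even (ρ i)), ρ i) :
    muQ V g ≤ 2 := by
  classical
  obtain ⟨K, hgap⟩ := key_gap t V ρ hpos hreal hcase
  -- antitonicity of V
  have Vanti : ∀ a d : ℕ, V (a + d) ≤ V a := by
    intro a d
    induction d with
    | zero => rfl
    | succ m ih => calc V (a + (m+1)) = V ((a + m) + 1) := by ring_nf
                    _ ≤ V (a + m) := hV1 _
                    _ ≤ V a := ih
  have VantiLe : ∀ a b : ℕ, a ≤ b → V b ≤ V a := by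
    intro a b hab
    have := Vanti a (b - a)
    rwa [Nat.add_sub_cancel' hab] at this
  set m := V K - 1 with hm
  have hVK2 : 2 ≤ V K := by omega
  have hm1 : 1 ≤ m := by omega
  have hmV0 : m ≤ V 0 - 1 := by
    have := VantiLe 0 K (Nat.zero_le _)
    omega
  -- level set of m is contained in {K+1, K+2}
  have hlevel : ((Finset.range g).filter (fun i => V i = m)) ⊆ {K+1, K+2} := by
    intro i hi
    simp only [Finset.mem_filter, Finset.mem_range] at hi
    obtain ⟨_, hVi⟩ := hi
    have h1 : K < i := by
      by_contra h
      push_neg at h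
      have := VantiLe i K h
      omega
    have h2 : i < K + 3 := by
      by_contra h
      push_neg at h
      have := VantiLe (K+3) i h
      omega
    simp only [Finset.mem_insert, Finset.mem_singleton]
    omega
  have hcard : ((Finset.range g).filter (fun i => V i = m)).card ≤ 2 := by
    calc ((Finset.range g).filter (fun i => V i = m)).card
        ≤ ({K+1, K+2} : Finset ℕ).card := Finset.card_le_card hlevel
      _ ≤ 2 := by
          apply le_trans (Finset.card_insert_le _ _)
          simp
  -- Tq difference is at most the level-set size
  have hTq : Tq V g m - Tq V g (m-1) ≤ 2 := by
    have hsub : ((Finset.range g).filter (fun i => 0 < V i ∧ V i ≤ m)) ⊆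
        ((Finset.range g).filter (fun i => 0 < V i ∧ V i ≤ m - 1)) ∪
        ((Finset.range g).filter (fun i => V i = m)) := by
      intro i hi
      simp only [Finset.mem_filter, Finset.mem_range, Finset.mem_union] at hi ⊢
      omega
    have := Finset.card_le_card hsub
    have hun := Finset.card_union_le
      ((Finset.range g).filter (fun i => 0 < V i ∧ V i ≤ m - 1))
      ((Finset.range g).filter (fun i => V i = m))
    unfold Tq
    omega
  have hmem : Tq V g m - Tq V g (m-1) ∈
      {d : ℕ | ∃ i : ℕ, 1 ≤ i ∧ i ≤ V 0 - 1 ∧ d = Tq V g i - Tq V g (i - 1)} :=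
    ⟨m, hm1, hmV0, rfl⟩
  calc muQ V g ≤ Tq V g m - Tq V g (m-1) := Nat.sInf_le hmem
    _ ≤ 2 := hTq
end

section
/- Suppose ρ realizes (V_i), V_0 > 1 and μ > 2. Then ρ_0 ∈ {3, 4}. If ρ_0 = 3, then there exist integers d ≥ 1 and ε ∈ {0,1,2} such that exactly d coordinates of ρ equal 3, exactly ε coordinates equal 2, all remaining coordinates equal 1, and g̃ = 3d + ε. If ρ_0 = 4, then there exists an integer d ≥ 0 such that exactly one coordinate of ρ equals 4, exactly d coordinates equal 3, all remaining coordinates equal 1, and g̃ = 3d + 6. -/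
namespace S5

def Tb (b : ℤ) : ℤ := b * (b + 1) / 2

lemma two_Tb (b : ℤ) : 2 * Tb b = b * (b + 1) := by
  have h : (2:ℤ) ∣ b * (b+1) := (Int.even_mul_succ_self b).two_dvd
  unfold Tb; omega

lemma Tb_nonneg (b : ℤ) : 0 ≤ Tb b := by
  have h2 := two_Tb b
  rcases le_or_gt 0 b with h | h
  · nlinarith
  · nlinarith

lemma Tb_reflect (b : ℤ) : Tb (-1 - b) = Tb b := by
  have h1 := two_Tb b; have h2 := two_Tb (-1 - b); nlinarith [h1, h2]

lemma Tb_pred (b : ℤ) : Tb (b - 1) = Tb b - b := by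
  have h1 := two_Tb b; have h2 := two_Tb (b-1); nlinarith

lemma le_Tb {b : ℤ} (hb : 0 ≤ b) : b ≤ Tb b := by
  have h2 := two_Tb b; nlinarith [sq_nonneg b, mul_self_nonneg b]

lemma one_le_Tb {b : ℤ} (hb : 1 ≤ b) : 1 ≤ Tb b := le_trans hb (le_Tb (by omega))

lemma Tb_mono {a b : ℤ} (ha : 0 ≤ a) (hab : a ≤ b) : Tb a ≤ Tb b := by
  have h1 := two_Tb a; have h2 := two_Tb b; nlinarith

lemma sq_odd (b : ℤ) : (2*b+1) * (2*b+1) = 8 * Tb b + 1 := by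
  have h := two_Tb b; nlinarith

section Main

variable {t : ℕ}

def sv (ρ : Fin (t+1) → ℤ) : ℤ := ∑ i, ρ i
def Gv (ρ : Fin (t+1) → ℤ) : ℤ := ∑ i, Tb (ρ i - 1)
def cost (b : Fin (t+1) → ℤ) : ℤ := ∑ i, Tb (b i)
def val (ρ b : Fin (t+1) → ℤ) : ℤ := ∑ i, b i * ρ i

structure Ctx (V : ℕ → ℕ) (g : ℕ) (ρ : Fin (t+1) → ℤ) : Prop where
  hV1 : ∀ i, V (i + 1) ≤ V i
  hV2 : ∀ i, V i = 0 ↔ g ≤ i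
  hV3 : ∀ i, V i ≤ V (i + 1) + 1
  hmono : ∀ i j : Fin (t + 1), i ≤ j → ρ j ≤ ρ i
  hpos : ∀ i, 1 ≤ ρ i
  hg : 2 * (g : ℤ) ≤ dotP ρ ρ
  hreal : Realizes V ρ
  hV0 : 1 < V 0
  hmu : 2 < muQ V g

variable {V : ℕ → ℕ} {g : ℕ} {ρ : Fin (t+1) → ℤ}

namespace Ctx

lemma cost_nonneg (b : Fin (t+1) → ℤ) : 0 ≤ cost b :=
  Finset.sum_nonneg fun i _ => Tb_nonneg _

lemma Gv_nonneg : 0 ≤ Gv ρ := Finset.sum_nonneg fun i _ => Tb_nonneg _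

lemma rho_le0 (h : Ctx V g ρ) (i : Fin (t+1)) : ρ i ≤ ρ 0 :=
  h.hmono 0 i (Fin.zero_le i)

lemma sv_pos (h : Ctx V g ρ) : (t:ℤ) + 1 ≤ sv ρ := by
  have : ∀ i ∈ Finset.univ, (1:ℤ) ≤ ρ i := fun i _ => h.hpos i
  have := Finset.sum_le_sum this
  simpa [sv, Finset.card_univ] using this

lemma n_eq (h : Ctx V g ρ) : dotP ρ ρ = sv ρ + 2 * Gv ρ := by
  unfold dotP sv Gv
  rw [Finset.mul_sum, ← Finset.sum_add_distrib]
  apply Finset.sum_congr rfl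
  intro i _
  have := two_Tb (ρ i - 1)
  nlinarith

lemma char_two_mul_add_one (b : Fin (t+1) → ℤ) : CharVec (fun i => 2 * b i + 1) :=
  fun i => ⟨b i, by ring⟩

lemma dot_cc (b : Fin (t+1) → ℤ) :
    dotP (fun i => 2 * b i + 1) (fun i => 2 * b i + 1) = 8 * cost b + (t + 1) := by
  unfold dotP cost
  have h1 : ∀ i ∈ (Finset.univ : Finset (Fin (t+1))), (fun i => 2 * b i + 1) i * (fun i => 2 * b i + 1) i
      = 8 * Tb (b i) + 1 := fun i _ => sq_odd (b i)
  rw [Finset.sum_congr rfl h1, Finset.sum_add_distrib, Finset.mul_sum]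
  simp [Finset.card_univ]

lemma dot_crho (b : Fin (t+1) → ℤ) :
    dotP (fun i => 2 * b i + 1) ρ = 2 * val ρ b + sv ρ := by
  unfold dotP val sv
  rw [Finset.mul_sum, ← Finset.sum_add_distrib]
  apply Finset.sum_congr rfl
  intro i _; ring

/-- lower-bound part of Realizes -/
lemma lower (h : Ctx V g ρ) (k : ℤ) (hk : 2 * |k| ≤ dotP ρ ρ)
    {c : Fin (t+1) → ℤ} (hc : CharVec c)
    (hcong : dotP c ρ ≡ dotP ρ ρ + 2 * k [ZMOD 2 * dotP ρ ρ]) :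
    8 * (V k.natAbs : ℤ) + t + 1 ≤ dotP c c :=
  (h.hreal k hk).2 ⟨c, hc, hcong, rfl⟩

lemma mem (h : Ctx V g ρ) (k : ℤ) (hk : 2 * |k| ≤ dotP ρ ρ) :
    ∃ c : Fin (t+1) → ℤ, CharVec c ∧
      dotP c ρ ≡ dotP ρ ρ + 2 * k [ZMOD 2 * dotP ρ ρ] ∧
      8 * (V k.natAbs : ℤ) + t + 1 = dotP c c :=
  (h.hreal k hk).1

end Ctx
end Main
end S5

namespace S5
section Main2
variable {t : ℕ} {V : ℕ → ℕ} {g : ℕ} {ρ : Fin (t+1) → ℤ}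
open Finset
namespace Ctx

lemma pin {m x : ℤ} (hd : m ∣ x) (hx : |x| < m) : x = 0 := by
  by_contra hne
  have h1 : m ≤ |x| := Int.le_of_dvd (abs_pos.mpr hne) ((dvd_abs m x).mpr hd)
  omega

lemma n_pos (h : Ctx V g ρ) : 0 < dotP ρ ρ := by
  have h1 := h.sv_pos
  have h2 := h.n_eq
  have h3 : (0:ℤ) ≤ Gv ρ := Gv_nonneg
  omega

lemma g_pos (h : Ctx V g ρ) : 1 ≤ g := by
  by_contra hc
  have h0 := h.hV0
  have := (h.hV2 0).mpr (by omega)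
  omega

/-- extraction of a ±1 vector from a norm t+1 characteristic vector -/
lemma pm_extract {c : Fin (t+1) → ℤ} (hc : CharVec c) (hcc : dotP c c = t + 1) :
    ∀ i, c i = 1 ∨ c i = -1 := by
  have h1 : ∀ i ∈ (univ : Finset (Fin (t+1))), (1:ℤ) ≤ c i * c i := by
    intro i _
    rcases hc i with ⟨m, hm⟩
    rw [hm]
    rcases le_or_gt 0 m with h | h
    · nlinarith
    · nlinarith
  have h2 : ∑ i, (c i * c i - 1) = 0 := by
    have : ∑ i, (c i * c i - 1) = dotP c c - (t+1) := by
      unfold dotP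
      rw [Finset.sum_sub_distrib]
      simp [Finset.card_univ]
    rw [this, hcc]; ring
  have h3 : ∀ i ∈ (univ : Finset (Fin (t+1))), c i * c i - 1 = 0 := by
    rw [← Finset.sum_eq_zero_iff_of_nonneg (fun i _ => by have := h1 i (mem_univ i); omega)]
    exact h2
  intro i
  have := h3 i (mem_univ i)
  have : c i * c i = 1 := by omega
  rcases mul_self_eq_one_iff.mp this with h | h
  · left; exact h
  · right; exact h

lemma dot_pm {c : Fin (t+1) → ℤ} (hpm : ∀ i, c i = 1 ∨ c i = -1) :
    dotP c ρ = sv ρ - 2 * ∑ i ∈ univ.filter (fun i => c i = -1), ρ i := by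
  classical
  unfold dotP sv
  rw [← Finset.sum_filter_add_sum_filter_not univ (fun i => c i = -1) (fun i => c i * ρ i),
      ← Finset.sum_filter_add_sum_filter_not univ (fun i => c i = -1) (fun i => ρ i)]
  have e1 : ∑ i ∈ univ.filter (fun i => c i = -1), c i * ρ i
      = ∑ i ∈ univ.filter (fun i => c i = -1), (-(ρ i)) := by
    apply Finset.sum_congr rfl; intro i hi
    rw [Finset.mem_filter] at hi
    rw [hi.2]; ring
  have e2 : ∑ i ∈ univ.filter (fun i => ¬ c i = -1), c i * ρ i
      = ∑ i ∈ univ.filter (fun i => ¬ c i = -1), ρ i := by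
    apply Finset.sum_congr rfl; intro i hi
    rw [Finset.mem_filter] at hi
    rcases hpm i with h | h
    · rw [h]; ring
    · exact absurd h hi.2
  rw [e1, e2, Finset.sum_neg_distrib]
  ring

/-- the key identity g = (n-s)/2 -/
lemma gG (h : Ctx V g ρ) : (g : ℤ) = Gv ρ := by
  have hne := h.n_eq
  have hGnn : (0:ℤ) ≤ Gv ρ := Gv_nonneg
  have hsv := h.sv_pos
  have hnpos := h.n_pos
  -- direction 1 : g ≤ G via all-ones vector
  have hd1 : (g : ℤ) ≤ Gv ρ := by
    have hk : 2 * |(-(Gv ρ))| ≤ dotP ρ ρ := by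
      rw [abs_neg, abs_of_nonneg hGnn]; omega
    have hone : CharVec (fun _ : Fin (t+1) => (1:ℤ)) := fun i => ⟨0, by ring⟩
    have hcong : dotP (fun _ => (1:ℤ)) ρ ≡ dotP ρ ρ + 2 * (-(Gv ρ)) [ZMOD 2 * dotP ρ ρ] := by
      have e : dotP (fun _ => (1:ℤ)) ρ = dotP ρ ρ + 2 * (-(Gv ρ)) := by
        have : dotP (fun _ => (1:ℤ)) ρ = sv ρ := by
          unfold dotP sv; apply Finset.sum_congr rfl; intro i _; ring
        omega
      rw [e]
    have hlow := h.lower (-(Gv ρ)) hk hone hcong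
    have hdcc : dotP (fun _ : Fin (t+1) => (1:ℤ)) (fun _ => (1:ℤ)) = (t+1 : ℤ) := by
      unfold dotP; simp [Finset.card_univ]
    rw [hdcc] at hlow
    have hV0' : V ((-(Gv ρ)).natAbs) = 0 := by
      have : (0:ℤ) ≤ 8 * (V ((-(Gv ρ)).natAbs) : ℤ) := by positivity
      omega
    have := (h.hV2 _).mp hV0'
    have hna : ((-(Gv ρ)).natAbs : ℤ) = Gv ρ := by
      rw [Int.natAbs_neg]; exact Int.natAbs_of_nonneg hGnn
    omega
  -- direction 2 : G ≤ g
  have hd2 : Gv ρ ≤ (g : ℤ) := by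
    by_contra hcon
    push_neg at hcon
    -- g + 1 ≤ G ; consider k = G - 1 ≥ g, V k = 0
    set k : ℤ := Gv ρ - 1 with hkdef
    have hk0 : 0 ≤ k := by omega
    have hkabs : 2 * |k| ≤ dotP ρ ρ := by
      rw [abs_of_nonneg hk0]; omega
    obtain ⟨c, hchar, hcong, hcc⟩ := h.mem k hkabs
    have hVk : V k.natAbs = 0 := by
      apply (h.hV2 _).mpr
      have : (k.natAbs : ℤ) = k := Int.natAbs_of_nonneg hk0
      omega
    rw [hVk] at hcc
    push_cast at hcc
    have hcc' : dotP c c = t + 1 := by omega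
    have hpm := pm_extract hchar hcc'
    have hdot := dot_pm (ρ := ρ) hpm
    set σ : ℤ := ∑ i ∈ univ.filter (fun i => c i = -1), ρ i with hσdef
    have hσ0 : 0 ≤ σ := Finset.sum_nonneg fun i _ => by linarith [h.hpos i]
    have hσs : σ ≤ sv ρ := by
      apply Finset.sum_le_sum_of_subset_of_nonneg (Finset.subset_univ _)
      intro i _ _; linarith [h.hpos i]
    -- congruence: s - 2σ ≡ n + 2(G-1)  [2n]
    have hdvd := hcong.dvd
    rw [hdot] at hdvd
    -- n + 2(G-1) - (s - 2σ) = 2(σ + 2G - 1) - ... compute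
    have hx : dotP ρ ρ + 2 * k - (sv ρ - 2*σ) = 2 * (2 * Gv ρ - 1 + σ) := by
      rw [hkdef]; omega
    rw [hx] at hdvd
    have h2n : (2 : ℤ) * dotP ρ ρ ∣ 2 * (2 * Gv ρ - 1 + σ) := hdvd
    have hnd : dotP ρ ρ ∣ (2 * Gv ρ - 1 + σ) := by
      rcases h2n with ⟨e, he⟩
      rw [mul_assoc] at he
      exact ⟨e, mul_left_cancel₀ two_ne_zero he⟩
    -- bound: 0 < 2G - 1 + σ < 2n? We have 1 ≤ G (since g < G, g ≥ 0 → G ≥ 1)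
    have hG1 : 1 ≤ Gv ρ := by omega
    have hlt : 2 * Gv ρ - 1 + σ < 2 * dotP ρ ρ := by omega
    have hgt : 0 < 2 * Gv ρ - 1 + σ := by omega
    have hltn : 2 * Gv ρ - 1 + σ < dotP ρ ρ := by omega
    have := Int.le_of_dvd hgt hnd
    omega
  omega

end Ctx
end Main2
end S5

namespace S5
section Main3
variable {t : ℕ} {V : ℕ → ℕ} {g : ℕ} {ρ : Fin (t+1) → ℤ}
open Finset
namespace Ctx

lemma sv_lt_n (h : Ctx V g ρ) : sv ρ < dotP ρ ρ := by
  have h1 := h.n_eq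
  have h2 := h.gG
  have h3 := h.g_pos
  omega

/-- the changemaker property: every 0 ≤ x ≤ s is a subset sum -/
lemma cm (h : Ctx V g ρ) (x : ℤ) (hx0 : 0 ≤ x) (hxs : x ≤ sv ρ) :
    ∃ A : Finset (Fin (t+1)), ∑ i ∈ A, ρ i = x := by
  have hne := h.n_eq
  have hgG := h.gG
  have hsvn := h.sv_lt_n
  have hnpos := h.n_pos
  have hsv := h.sv_pos
  -- pick k with V k.natAbs = 0 and n + 2k ≡ s - 2x mod 2n
  have key : ∃ k : ℤ, 2 * |k| ≤ dotP ρ ρ ∧ (g:ℤ) ≤ |k| ∧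
      (2 * dotP ρ ρ) ∣ (dotP ρ ρ + 2*k - (sv ρ - 2*x)) := by
    rcases le_or_gt (2*x) (sv ρ) with hc | hc
    · refine ⟨-((g:ℤ) + x), ?_, ?_, ?_⟩
      · rw [abs_neg, abs_of_nonneg (by omega)]; omega
      · rw [abs_neg, abs_of_nonneg (by omega)]; omega
      · have : dotP ρ ρ + 2*(-((g:ℤ)+x)) - (sv ρ - 2*x) = 0 := by omega
        rw [this]
        exact dvd_zero _
    · refine ⟨(g:ℤ) + (sv ρ - x), ?_, ?_, ?_⟩
      · rw [abs_of_nonneg (by omega)]; omega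
      · rw [abs_of_nonneg (by omega)]; omega
      · have : dotP ρ ρ + 2*((g:ℤ) + (sv ρ - x)) - (sv ρ - 2*x) = 2 * dotP ρ ρ := by omega
        rw [this]
  rcases key with ⟨k, hka, hkg, hkd⟩
  obtain ⟨c, hchar, hcong, hcc⟩ := h.mem k hka
  have hVk : V k.natAbs = 0 := by
    apply (h.hV2 _).mpr
    have := Int.natAbs_abs k
    omega
  rw [hVk] at hcc
  push_cast at hcc
  have hcc' : dotP c c = t + 1 := by omega
  have hpm := pm_extract hchar hcc'
  have hdot := dot_pm (ρ := ρ) hpm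
  set σ : ℤ := ∑ i ∈ univ.filter (fun i => c i = -1), ρ i with hσdef
  have hσ0 : 0 ≤ σ := Finset.sum_nonneg fun i _ => by linarith [h.hpos i]
  have hσs : σ ≤ sv ρ := by
    apply Finset.sum_le_sum_of_subset_of_nonneg (Finset.subset_univ _)
    intro i _ _; linarith [h.hpos i]
  -- combine congruences
  have hdvd1 := hcong.dvd
  rw [hdot] at hdvd1
  have hdvd2 : (2 * dotP ρ ρ) ∣ (2*x - 2*σ) := by
    have hsub := dvd_sub hkd hdvd1
    have e : dotP ρ ρ + 2*k - (sv ρ - 2*x) - (dotP ρ ρ + 2 * k - (sv ρ - 2 * σ)) = 2*x - 2*σ := by ring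
    rwa [e] at hsub
  have : 2*x - 2*σ = 0 := pin hdvd2 (by rw [abs_lt]; constructor <;> omega)
  exact ⟨univ.filter (fun i => c i = -1), by omega⟩

end Ctx
end Main3
end S5

namespace S5
section Main4
variable {t : ℕ} {V : ℕ → ℕ} {g : ℕ} {ρ : Fin (t+1) → ℤ}
open Finset
namespace Ctx

lemma cm_ineq (h : Ctx V g ρ) (i₀ : Fin (t+1)) :
    ρ i₀ ≤ 1 + ∑ i ∈ univ.filter (fun j => i₀ < j), ρ i := by
  by_contra hcon
  push_neg at hcon
  set Tl : ℤ := ∑ i ∈ univ.filter (fun j => i₀ < j), ρ i with hTl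
  have hTl0 : 0 ≤ Tl := Finset.sum_nonneg fun i _ => by linarith [h.hpos i]
  have hsplit : sv ρ = ρ i₀ + ∑ i ∈ univ.filter (fun j => ¬ (i₀ < j) ∧ j ≠ i₀), ρ i + Tl := by
    unfold sv
    rw [← Finset.sum_filter_add_sum_filter_not univ (fun j => i₀ < j) (fun i => ρ i)]
    have : univ.filter (fun j => ¬ (i₀ < j)) = insert i₀ (univ.filter (fun j => ¬ (i₀ < j) ∧ j ≠ i₀)) := by
      ext j
      simp only [Finset.mem_insert, Finset.mem_filter, Finset.mem_univ, true_and]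
      constructor
      · intro hj
        by_cases hji : j = i₀
        · left; exact hji
        · right; exact ⟨hj, hji⟩
      · rintro (rfl | ⟨hj, _⟩)
        · exact lt_irrefl _
        · exact hj
    rw [this, Finset.sum_insert (by simp)]
    ring
  have hrest0 : 0 ≤ ∑ i ∈ univ.filter (fun j => ¬ (i₀ < j) ∧ j ≠ i₀), ρ i :=
    Finset.sum_nonneg fun i _ => by linarith [h.hpos i]
  obtain ⟨A, hA⟩ := h.cm (1 + Tl) (by omega) (by omega)
  by_cases hsub : A ⊆ univ.filter (fun j => i₀ < j)
  · have := Finset.sum_le_sum_of_subset_of_nonneg hsub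
      (fun i _ _ => le_trans zero_le_one (h.hpos i))
    omega
  · obtain ⟨l, hlA, hl⟩ := Finset.not_subset.mp hsub
    have hl' : ¬ (i₀ < l) := by
      intro hc
      exact hl (Finset.mem_filter.mpr ⟨Finset.mem_univ _, hc⟩)
    have hle : l ≤ i₀ := le_of_not_gt hl'
    have h1 : ρ i₀ ≤ ρ l := h.hmono l i₀ hle
    have h2 : ρ l ≤ ∑ i ∈ A, ρ i :=
      Finset.single_le_sum (fun i _ => by linarith [h.hpos i]) hlA
    omega

lemma cm_tailN (h : Ctx V g ρ) (m : ℕ) : ∀ (v : ℕ) (x : ℤ), t + 1 ≤ v + m → 0 ≤ x →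
    x ≤ ∑ i ∈ univ.filter (fun j : Fin (t+1) => v < j.val), ρ i →
    ∃ A ⊆ univ.filter (fun j : Fin (t+1) => v < j.val), ∑ i ∈ A, ρ i = x := by
  induction m with
  | zero =>
    intro v x hv hx0 hxs
    have he : univ.filter (fun j : Fin (t+1) => v < j.val) = ∅ := by
      apply Finset.filter_false_of_mem
      intro j _
      have := j.isLt
      omega
    rw [he] at hxs ⊢
    simp at hxs
    exact ⟨∅, by simp, by simp; omega⟩
  | succ m ih =>
    intro v x hv hx0 hxs
    by_cases hvt : t < v + 1
    · -- tail empty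
      have he : univ.filter (fun j : Fin (t+1) => v < j.val) = ∅ := by
        apply Finset.filter_false_of_mem
        intro j _
        have := j.isLt
        omega
      rw [he] at hxs ⊢
      simp at hxs
      exact ⟨∅, by simp, by simp; omega⟩
    · push_neg at hvt
      set j₀ : Fin (t+1) := ⟨v+1, by omega⟩ with hj₀
      have hsplit : univ.filter (fun j : Fin (t+1) => v < j.val)
          = insert j₀ (univ.filter (fun j : Fin (t+1) => v+1 < j.val)) := by
        ext j
        simp only [Finset.mem_insert, Finset.mem_filter, Finset.mem_univ, true_and]
        constructor
        · intro hj
          rcases Nat.lt_or_ge (v+1) j.val with h1 | h1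
          · right; exact h1
          · left
            apply Fin.ext
            simp [hj₀]
            omega
        · rintro (rfl | hj)
          · simp [hj₀]
          · omega
      have hnotmem : j₀ ∉ univ.filter (fun j : Fin (t+1) => v+1 < j.val) := by
        simp [hj₀]
      have hsum : ∑ i ∈ univ.filter (fun j : Fin (t+1) => v < j.val), ρ i
          = ρ j₀ + ∑ i ∈ univ.filter (fun j : Fin (t+1) => v+1 < j.val), ρ i := by
        rw [hsplit, Finset.sum_insert hnotmem]
      have htail : ∑ i ∈ univ.filter (fun j : Fin (t+1) => j₀ < j), ρ i
          = ∑ i ∈ univ.filter (fun j : Fin (t+1) => v+1 < j.val), ρ i := by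
        apply Finset.sum_congr _ (fun _ _ => rfl)
        ext j
        simp only [Finset.mem_filter, Finset.mem_univ, true_and]
        constructor
        · intro hj; exact hj
        · intro hj; exact hj
      rcases le_or_gt (ρ j₀) x with hc | hc
      · -- include j₀
        obtain ⟨A, hAsub, hAsum⟩ := ih (v+1) (x - ρ j₀) (by omega) (by omega) (by omega)
        refine ⟨insert j₀ A, ?_, ?_⟩
        · rw [hsplit]
          exact Finset.insert_subset_insert _ hAsub
        · rw [Finset.sum_insert (fun hc' => hnotmem (hAsub hc'))]
          omega
      · -- skip j₀ ; need x ≤ tail sum via cm_ineq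
        have hineq := h.cm_ineq j₀
        rw [htail] at hineq
        obtain ⟨A, hAsub, hAsum⟩ := ih (v+1) x (by omega) (by omega) (by omega)
        refine ⟨A, ?_, hAsum⟩
        intro a ha
        have := hAsub ha
        rw [Finset.mem_filter] at this ⊢
        exact ⟨this.1, by omega⟩

end Ctx
end Main4
end S5

namespace S5
section Main5
variable {t : ℕ} {V : ℕ → ℕ} {g : ℕ} {ρ : Fin (t+1) → ℤ}
open Finset
namespace Ctx

lemma val_sub_lemma (b b' : Fin (t+1) → ℤ) (f : Fin (t+1) → ℤ)
    (hf : ∀ i, b i * f i - b' i * f i = (if i ∈ (∅ : Finset (Fin (t+1))) then 0 else 0)) : True := trivial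

/-- downward coverage: any 0 ≤ y ≤ val b is representable with no more cost -/
lemma reduce (h : Ctx V g ρ) (N : ℕ) : ∀ (b : Fin (t+1) → ℤ), (∀ i, 0 ≤ b i) →
    (∑ i, b i) ≤ N → ∀ y : ℤ, 0 ≤ y → y ≤ val ρ b →
    ∃ b', cost b' ≤ cost b ∧ val ρ b' = y := by
  induction N with
  | zero =>
    intro b hb hN y hy0 hyv
    have hb0 : ∀ i ∈ (univ : Finset (Fin (t+1))), b i = 0 := by
      intro i _
      by_contra hc
      have h1 : 1 ≤ b i := by have := hb i; omega
      have h2 : (1:ℤ) ≤ ∑ j, b j := by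
        calc (1:ℤ) ≤ b i := h1
        _ ≤ ∑ j, b j := Finset.single_le_sum (fun j _ => hb j) (mem_univ i)
      omega
    have hval : val ρ b = 0 := by
      unfold val
      apply Finset.sum_eq_zero
      intro i hi
      rw [hb0 i hi]; ring
    exact ⟨b, le_rfl, by omega⟩
  | succ N ih =>
    intro b hb hN y hy0 hyv
    by_cases hall : ∀ i ∈ (univ : Finset (Fin (t+1))), b i = 0
    · have hval : val ρ b = 0 := by
        unfold val
        apply Finset.sum_eq_zero
        intro i hi
        rw [hall i hi]; ring
      exact ⟨b, le_rfl, by omega⟩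
    · push_neg at hall
      obtain ⟨i₁, _, hi₁⟩ := hall
      set P : Finset (Fin (t+1)) := univ.filter (fun i => 1 ≤ b i) with hP
      have hPne : P.Nonempty := ⟨i₁, by
        rw [hP, Finset.mem_filter]
        exact ⟨mem_univ _, by have := hb i₁; omega⟩⟩
      set i₀ : Fin (t+1) := P.max' hPne with hi₀
      have hbi₀ : 1 ≤ b i₀ := by
        have h2 : i₀ ∈ P := P.max'_mem hPne
        exact (Finset.mem_filter.mp h2).2
      have htail0 : ∀ j : Fin (t+1), i₀.val < j.val → b j = 0 := by
        intro j hj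
        by_contra hc
        have h1 : j ∈ P := by
          rw [hP, Finset.mem_filter]
          exact ⟨mem_univ _, by have := hb j; omega⟩
        have h5 : j ≤ i₀ := P.le_max' j h1
        have h6 : j.val ≤ i₀.val := h5
        omega
      set U : ℤ := ∑ i ∈ univ.filter (fun j : Fin (t+1) => i₀.val < j.val), ρ i with hU
      have hU0 : 0 ≤ U := Finset.sum_nonneg fun i _ => le_trans zero_le_one (h.hpos i)
      rcases le_or_gt (val ρ b - U) y with hcase | hcase
      · -- subtract a tail subset
        obtain ⟨A, hAsub, hAsum⟩ := h.cm_tailN (t+1) i₀.val (val ρ b - y)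
          (by omega) (by omega) (by rw [← hU]; omega)
        set b' : Fin (t+1) → ℤ := fun j => if j ∈ A then -1 else b j with hb'
        have hbA : ∀ i ∈ A, b i = 0 := by
          intro i hiA
          have := hAsub hiA
          rw [Finset.mem_filter] at this
          exact htail0 i this.2
        have hcost : cost b' = cost b := by
          unfold cost
          apply Finset.sum_congr rfl
          intro i _
          by_cases hiA : i ∈ A
          · rw [hb']
            simp only [hiA, if_true]
            rw [hbA i hiA]
            rfl
          · rw [hb']
            simp only [hiA, if_false]
        have hval : val ρ b - val ρ b' = val ρ b - y := by
          have e1 : val ρ b - val ρ b' = ∑ i, (b i * ρ i - b' i * ρ i) := by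
            unfold val
            rw [Finset.sum_sub_distrib]
          have e2 : ∀ i ∈ (univ : Finset (Fin (t+1))), b i * ρ i - b' i * ρ i
              = if i ∈ A then ρ i else 0 := by
            intro i _
            by_cases hiA : i ∈ A
            · rw [hb']
              simp only [hiA, if_true]
              rw [hbA i hiA]
              ring
            · rw [hb']
              simp only [hiA, if_false]
              ring
          rw [e1, Finset.sum_congr rfl e2, Finset.sum_ite_mem]
          rw [Finset.univ_inter]
          omega
        exact ⟨b', le_of_eq hcost, by omega⟩
      · -- decrement top coordinate and recurse
        set b₂ : Fin (t+1) → ℤ := fun j => if j = i₀ then b i₀ - 1 else b j with hb₂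
        have hb₂pos : ∀ i, 0 ≤ b₂ i := by
          intro i
          rw [hb₂]
          by_cases hi : i = i₀
          · simp only [hi, if_true]; omega
          · simp only [hi, if_false]; exact hb i
        have hsum2 : ∑ i, b₂ i = (∑ i, b i) - 1 := by
          have e1 : ∑ i, (b i - b₂ i) = ∑ i, (if i = i₀ then (1:ℤ) else 0) := by
            apply Finset.sum_congr rfl
            intro i _
            rw [hb₂]
            by_cases hi : i = i₀
            · simp only [hi, if_true]; ring
            · simp only [hi, if_false]; ring
          rw [Finset.sum_sub_distrib] at e1
          rw [Finset.sum_ite_eq' univ i₀ (fun _ => (1:ℤ))] at e1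
          simp at e1
          omega
        have hval2 : val ρ b₂ = val ρ b - ρ i₀ := by
          have e1 : ∑ i, (b i * ρ i - b₂ i * ρ i) = ∑ i, (if i = i₀ then ρ i₀ else 0) := by
            apply Finset.sum_congr rfl
            intro i _
            rw [hb₂]
            by_cases hi : i = i₀
            · simp only [hi, if_true]
              ring
            · simp only [hi, if_false]; ring
          rw [Finset.sum_sub_distrib] at e1
          rw [Finset.sum_ite_eq' univ i₀ (fun _ => ρ i₀)] at e1
          simp at e1
          unfold val
          omega
        have hcost2 : cost b₂ ≤ cost b := by
          unfold cost
          apply Finset.sum_le_sum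
          intro i _
          rw [hb₂]
          by_cases hi : i = i₀
          · simp only [hi, if_true]
            apply Tb_mono (by omega) (by omega)
          · simp only [hi, if_false]
            exact le_rfl
        -- y ≤ val b₂ via cm_ineq
        have hineq := h.cm_ineq i₀
        have hsets : ∑ i ∈ univ.filter (fun j => i₀ < j), ρ i = U := by
          rw [hU]
          apply Finset.sum_congr _ (fun _ _ => rfl)
          apply Finset.filter_congr
          intro j _
          constructor
          · intro hj; exact hj
          · intro hj; exact hj
        rw [hsets] at hineq
        obtain ⟨b', hc', hv'⟩ := ih b₂ hb₂pos (by omega) y hy0 (by omega)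
        exact ⟨b', le_trans hc' hcost2, hv'⟩

end Ctx
end Main5
end S5

namespace S5
section Main6
variable {t : ℕ} {V : ℕ → ℕ} {g : ℕ} {ρ : Fin (t+1) → ℤ}
open Finset
namespace Ctx

lemma antitoneV (h : Ctx V g ρ) {i j : ℕ} (hij : i ≤ j) : V j ≤ V i := by
  induction j with
  | zero =>
    have : i = 0 := Nat.le_zero.mp hij
    rw [this]
  | succ j ih =>
    rcases Nat.lt_or_ge i (j+1) with hc | hc
    · exact le_trans (h.hV1 j) (ih (by omega))
    · have : i = j + 1 := by omega
      rw [this]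

lemma n_split (h : Ctx V g ρ) : dotP ρ ρ = sv ρ + 2 * g := by
  have := h.n_eq; have := h.gG; omega

/-- bridge, upper direction -/
lemma up (h : Ctx V g ρ) (k : ℕ) (hk : k < g) (b : Fin (t+1) → ℤ)
    (hval : val ρ b = (g:ℤ) - k ∨ val ρ b = (g:ℤ) + k) : (V k : ℤ) ≤ cost b := by
  have hns := h.n_split
  have hnpos := h.n_pos
  have hg2 := h.hg
  rcases hval with hv | hv
  · have hcong : dotP (fun i => 2 * b i + 1) ρ ≡ dotP ρ ρ + 2 * (-(k:ℤ)) [ZMOD 2 * dotP ρ ρ] := by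
      have e : dotP (fun i => 2 * b i + 1) ρ = dotP ρ ρ + 2 * (-(k:ℤ)) := by
        rw [dot_crho, hv]; omega
      rw [e]
    have habs : 2 * |(-(k:ℤ))| ≤ dotP ρ ρ := by
      rw [abs_neg, abs_of_nonneg (by positivity)]
      omega
    have hlow := h.lower (-(k:ℤ)) habs (char_two_mul_add_one b) hcong
    rw [dot_cc] at hlow
    have hna : ((-(k:ℤ)).natAbs) = k := by
      rw [Int.natAbs_neg, Int.natAbs_natCast]
    rw [hna] at hlow
    omega
  · have hcong : dotP (fun i => 2 * b i + 1) ρ ≡ dotP ρ ρ + 2 * ((k:ℤ)) [ZMOD 2 * dotP ρ ρ] := by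
      have e : dotP (fun i => 2 * b i + 1) ρ = dotP ρ ρ + 2 * ((k:ℤ)) := by
        rw [dot_crho, hv]; omega
      rw [e]
    have habs : 2 * |((k:ℤ))| ≤ dotP ρ ρ := by
      rw [abs_of_nonneg (by positivity)]
      omega
    have hlow := h.lower ((k:ℤ)) habs (char_two_mul_add_one b) hcong
    rw [dot_cc] at hlow
    rw [Int.natAbs_natCast] at hlow
    omega

lemma e0_val (h : Ctx V g ρ) :
    val ρ (fun i : Fin (t+1) => if i = 0 then (1:ℤ) else 0) = ρ 0 ∧
    cost (fun i : Fin (t+1) => if i = 0 then (1:ℤ) else 0) = 1 := by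
  constructor
  · unfold val
    rw [Finset.sum_eq_single 0]
    · simp
    · intro i _ hi
      simp [hi]
    · intro hi
      exact absurd (mem_univ 0) hi
  · unfold cost
    rw [Finset.sum_eq_single 0]
    · norm_num
      rfl
    · intro i _ hi
      simp [hi]
      rfl
    · intro hi
      exact absurd (mem_univ 0) hi

lemma rho0_lt_g (h : Ctx V g ρ) : ρ 0 + 1 ≤ (g:ℤ) := by
  by_contra hcon
  push_neg at hcon
  obtain ⟨hv0, hc0⟩ := h.e0_val
  have hgpos := h.g_pos
  obtain ⟨b', hb'c, hb'v⟩ := h.reduce ((∑ i, (fun i : Fin (t+1) => if i = 0 then (1:ℤ) else 0) i)).toNat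
    (fun i : Fin (t+1) => if i = 0 then (1:ℤ) else 0)
    (fun i => by split <;> omega)
    (Int.self_le_toNat _) (g:ℤ) (by positivity) (by omega)
  have := h.up 0 (by omega) b' (by left; rw [hb'v]; omega)
  have hV0 := h.hV0
  rw [hc0] at hb'c
  omega

lemma star (h : Ctx V g ρ) (b : Fin (t+1) → ℤ) (hb : ∀ i, 0 ≤ b i)
    (hc : cost b ≤ (V 0 : ℤ) - 1) : val ρ b ≤ (g:ℤ) - 1 := by
  by_contra hcon
  push_neg at hcon
  have hgpos := h.g_pos
  obtain ⟨b', hb'c, hb'v⟩ := h.reduce (∑ i, b i).toNat b hb (Int.self_le_toNat _)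
    (g:ℤ) (by positivity) (by omega)
  have := h.up 0 (by omega) b' (by left; rw [hb'v]; omega)
  omega

/-- bridge, lower direction -/
lemma down (h : Ctx V g ρ) (k : ℕ) (hk : k < g) :
    ∃ b, cost b = (V k : ℤ) ∧ (val ρ b = (g:ℤ) - k ∨ val ρ b = (g:ℤ) + k) := by
  have hns := h.n_split
  have hnpos := h.n_pos
  have hsv := h.sv_pos
  have hg2 := h.hg
  have hρ0g := h.rho0_lt_g
  have habs : 2 * |(-(k:ℤ))| ≤ dotP ρ ρ := by
    rw [abs_neg, abs_of_nonneg (by positivity)]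
    omega
  obtain ⟨c, hchar, hcong, hcc⟩ := h.mem (-(k:ℤ)) habs
  rw [Int.natAbs_neg, Int.natAbs_natCast] at hcc
  set b : Fin (t+1) → ℤ := fun i => (c i - 1) / 2 with hbdef
  have hc2 : ∀ i, c i = 2 * b i + 1 := by
    intro i
    rcases hchar i with ⟨m, hm⟩
    rw [hbdef]
    dsimp only
    omega
  have hceq : c = fun i => 2 * b i + 1 := funext hc2
  have hcost : cost b = (V k : ℤ) := by
    rw [hceq, dot_cc] at hcc
    omega
  have hvcong : dotP ρ ρ ∣ ((g:ℤ) - k - val ρ b) := by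
    have hd := hcong.dvd
    rw [hceq, dot_crho] at hd
    -- 2n ∣ (n - 2k) - (2 val + s) = 2(g - k - val)
    have e : dotP ρ ρ + 2 * (-(k:ℤ)) - (2 * val ρ b + sv ρ) = 2 * ((g:ℤ) - k - val ρ b) := by
      omega
    rw [e] at hd
    rcases hd with ⟨e', he'⟩
    rw [mul_assoc] at he'
    exact ⟨e', mul_left_cancel₀ two_ne_zero he'⟩
  -- bound any vector with cost ≤ V k : val ≤ g - 1 + ρ 0
  have hVkV0 : V k ≤ V 0 := h.antitoneV (Nat.zero_le k)
  have bound : ∀ b₁ : Fin (t+1) → ℤ, cost b₁ ≤ (V k : ℤ) → val ρ b₁ ≤ (g:ℤ) - 1 + ρ 0 := by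
    intro b₁ hb₁
    set bp : Fin (t+1) → ℤ := fun i => max (b₁ i) 0 with hbp
    have hbp0 : ∀ i, 0 ≤ bp i := fun i => le_max_right _ _
    have hcostp : cost bp ≤ cost b₁ := by
      unfold cost
      apply Finset.sum_le_sum
      intro i _
      rw [hbp]
      dsimp only
      rcases le_or_gt 0 (b₁ i) with hc | hc
      · rw [max_eq_left hc]
      · rw [max_eq_right (by omega)]
        exact Tb_nonneg _
    have hvalp : val ρ b₁ ≤ val ρ bp := by
      unfold val
      apply Finset.sum_le_sum
      intro i _
      have := h.hpos i
      rw [hbp]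
      dsimp only
      nlinarith [le_max_left (b₁ i) 0]
    by_cases hz : ∀ i, bp i = 0
    · have : val ρ bp = 0 := by
        unfold val
        apply Finset.sum_eq_zero
        intro i _
        rw [hz i]; ring
      have hgpos := h.g_pos
      have hρpos := h.hpos 0
      omega
    · push_neg at hz
      obtain ⟨i₁, hi₁⟩ := hz
      have hbpi₁ : 1 ≤ bp i₁ := by
        have := hbp0 i₁
        omega
      set b₃ : Fin (t+1) → ℤ := fun j => if j = i₁ then bp i₁ - 1 else bp j with hb₃
      have hb₃0 : ∀ i, 0 ≤ b₃ i := by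
        intro i
        rw [hb₃]
        dsimp only
        split
        · omega
        · exact hbp0 i
      have hcost₃ : cost b₃ ≤ cost bp - 1 := by
        have e1 : cost bp - cost b₃ = ∑ i, (Tb (bp i) - Tb (b₃ i)) := by
          unfold cost
          rw [Finset.sum_sub_distrib]
        have e2 : ∀ i ∈ (univ : Finset (Fin (t+1))), Tb (bp i) - Tb (b₃ i)
            = if i = i₁ then bp i₁ else 0 := by
          intro i _
          rw [hb₃]
          dsimp only
          by_cases hi : i = i₁
          · simp only [hi, if_true]
            rw [Tb_pred]
            ring
          · simp only [hi, if_false]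
            ring
        rw [Finset.sum_congr rfl e2, Finset.sum_ite_eq' univ i₁ (fun _ => bp i₁)] at e1
        simp at e1
        omega
      have hval₃ : val ρ bp = val ρ b₃ + ρ i₁ := by
        have e1 : val ρ bp - val ρ b₃ = ∑ i, (bp i * ρ i - b₃ i * ρ i) := by
          unfold val
          rw [Finset.sum_sub_distrib]
        have e2 : ∀ i ∈ (univ : Finset (Fin (t+1))), bp i * ρ i - b₃ i * ρ i
            = if i = i₁ then ρ i₁ else 0 := by
          intro i _
          rw [hb₃]
          dsimp only
          by_cases hi : i = i₁
          · simp only [hi, if_true]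
            ring
          · simp only [hi, if_false]
            ring
        rw [Finset.sum_congr rfl e2, Finset.sum_ite_eq' univ i₁ (fun _ => ρ i₁)] at e1
        simp at e1
        omega
      have hstar := h.star b₃ hb₃0 (by
        have : (V k : ℤ) ≤ (V 0 : ℤ) := by exact_mod_cast hVkV0
        omega)
      have hρi₁ : ρ i₁ ≤ ρ 0 := h.rho_le0 i₁
      omega
  -- apply bound to b and to reflected b
  have hb_bound : val ρ b ≤ (g:ℤ) - 1 + ρ 0 := bound b (le_of_eq hcost)
  set br : Fin (t+1) → ℤ := fun i => -1 - b i with hbr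
  have hcostr : cost br = (V k : ℤ) := by
    rw [← hcost]
    unfold cost
    apply Finset.sum_congr rfl
    intro i _
    rw [hbr]
    dsimp only
    exact Tb_reflect _
  have hvalr : val ρ br = - sv ρ - val ρ b := by
    unfold val sv
    rw [hbr]
    dsimp only
    rw [← Finset.sum_neg_distrib, ← Finset.sum_sub_distrib]
    apply Finset.sum_congr rfl
    intro i _
    ring
  have hbr_bound : val ρ br ≤ (g:ℤ) - 1 + ρ 0 := bound br (le_of_eq hcostr)
  -- pin down val b
  have hD := hvcong
  rcases (em ((g:ℤ) - k - val ρ b = 0)) with hD0 | hD0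
  · exact ⟨b, hcost, Or.inl (by omega)⟩
  · have hDn : dotP ρ ρ ≤ |(g:ℤ) - k - val ρ b| :=
      Int.le_of_dvd (abs_pos.mpr hD0) ((dvd_abs _ _).mpr hD)
    -- val b ≤ 2g - 2 and val b ≥ -s - (2g-2)
    have h1 : val ρ b ≤ 2*(g:ℤ) - 2 := by omega
    have h2 : -(sv ρ) - (2*(g:ℤ) - 2) ≤ val ρ b := by omega
    -- therefore g - k - val b = n, and br works
    have hDval : (g:ℤ) - k - val ρ b = dotP ρ ρ := by
      rcases abs_cases ((g:ℤ) - k - val ρ b) with ⟨he, _⟩ | ⟨he, _⟩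
      · -- positive: D ≥ n ; D ≤ g - k + s + 2g - 2 = n + g - k - 2 < 2n ; D ≡ 0 mod n → D = n
        rcases hD with ⟨e', he'⟩
        have hb1 : (g:ℤ) - k - val ρ b < 2 * dotP ρ ρ := by omega
        have hb2 : 0 < (g:ℤ) - k - val ρ b := by omega
        have he'' : 1 ≤ e' := by nlinarith
        have he''' : e' < 2 := by nlinarith
        have : e' = 1 := by omega
        rw [this, mul_one] at he'
        omega
      · -- negative: D ≤ -n impossible since D ≥ -g-k+2 > -n
        have hb2 : -(dotP ρ ρ) < (g:ℤ) - k - val ρ b := by omega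
        omega
    refine ⟨br, hcostr, Or.inr ?_⟩
    omega

end Ctx
end Main6
end S5

namespace S5
section Main7
variable {t : ℕ} {V : ℕ → ℕ} {g : ℕ} {ρ : Fin (t+1) → ℤ}
open Finset
namespace Ctx

lemma Tq_eq (h : Ctx V g ρ) (m : ℕ) :
    Tq V g m = ((range g).filter (fun i => V i ≤ m)).card := by
  unfold Tq
  congr 1
  apply Finset.filter_congr
  intro i hi
  rw [Finset.mem_range] at hi
  have h2 := h.hV2 i
  constructor
  · intro hx; exact hx.2
  · intro hx
    refine ⟨?_, hx⟩
    by_contra hc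
    have : V i = 0 := by omega
    have := (h2.mp this)
    omega

lemma Tq_mono (h : Ctx V g ρ) {m m' : ℕ} (hm : m ≤ m') : Tq V g m ≤ Tq V g m' := by
  rw [h.Tq_eq, h.Tq_eq]
  apply Finset.card_le_card
  intro i hi
  rw [Finset.mem_filter] at hi ⊢
  exact ⟨hi.1, by omega⟩

lemma Tq_le_g (h : Ctx V g ρ) (m : ℕ) : Tq V g m ≤ g := by
  rw [h.Tq_eq]
  calc ((range g).filter (fun i => V i ≤ m)).card ≤ (range g).card :=
        Finset.card_le_card (Finset.filter_subset _ _)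
    _ = g := Finset.card_range g

lemma Tq_lt_g (h : Ctx V g ρ) (m : ℕ) (hm : m < V 0) : Tq V g m ≤ g - 1 := by
  have hgpos := h.g_pos
  have hsub : (range g).filter (fun i => V i ≤ m) ⊆ (range g).erase 0 := by
    intro i hi
    rw [Finset.mem_filter] at hi
    rw [Finset.mem_erase]
    refine ⟨?_, hi.1⟩
    intro hc
    rw [hc] at hi
    omega
  have := Finset.card_le_card hsub
  rw [Finset.card_erase_of_mem (Finset.mem_range.mpr (by omega)), Finset.card_range] at this
  rw [h.Tq_eq]
  omega

lemma low (h : Ctx V g ρ) (m : ℕ) (b : Fin (t+1) → ℤ) (hb : ∀ i, 0 ≤ b i)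
    (hc : cost b ≤ (m:ℤ)) (W : ℕ) (hW : (W:ℤ) ≤ val ρ b) (hWg : W ≤ g) :
    W ≤ Tq V g m := by
  rw [h.Tq_eq]
  have hsub : Finset.Ico (g - W) g ⊆ (range g).filter (fun i => V i ≤ m) := by
    intro k hk
    rw [Finset.mem_Ico] at hk
    rw [Finset.mem_filter, Finset.mem_range]
    refine ⟨hk.2, ?_⟩
    -- y = g - k ∈ [1, W]
    obtain ⟨b', hb'c, hb'v⟩ := h.reduce (∑ i, b i).toNat b hb (Int.self_le_toNat _)
      ((g:ℤ) - k) (by omega) (by omega)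
    have := h.up k hk.2 b' (Or.inl hb'v)
    omega
  have := Finset.card_le_card hsub
  rw [Nat.card_Ico] at this
  omega

lemma gap (h : Ctx V g ρ) (m : ℕ) (h1 : 1 ≤ m) (h2 : m ≤ V 0 - 1) :
    Tq V g (m-1) + 3 ≤ Tq V g m := by
  have hmem : (Tq V g m - Tq V g (m-1)) ∈
      {d : ℕ | ∃ i : ℕ, 1 ≤ i ∧ i ≤ V 0 - 1 ∧ d = Tq V g i - Tq V g (i - 1)} :=
    ⟨m, h1, h2, rfl⟩
  have := Nat.sInf_le hmem
  have hmu := h.hmu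
  unfold muQ at hmu
  have hmono := h.Tq_mono (show m - 1 ≤ m by omega)
  omega

lemma runub (h : Ctx V g ρ) (m : ℕ) (hne : 1 ≤ Tq V g m) :
    ∃ b, (∀ i, 0 ≤ b i) ∧ cost b ≤ (m:ℤ) ∧ (Tq V g m : ℤ) ≤ val ρ b := by
  have hTg := h.Tq_le_g m
  set k₀ : ℕ := g - Tq V g m with hk₀
  have hk₀g : k₀ < g := by omega
  have hVk₀ : V k₀ ≤ m := by
    by_contra hcon
    push_neg at hcon
    have hsub : (range g).filter (fun i => V i ≤ m) ⊆ Finset.Ico (k₀+1) g := by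
      intro i hi
      rw [Finset.mem_filter, Finset.mem_range] at hi
      rw [Finset.mem_Ico]
      refine ⟨?_, hi.1⟩
      by_contra hc
      push_neg at hc
      have : V k₀ ≤ V i := h.antitoneV (by omega)
      omega
    have := Finset.card_le_card hsub
    rw [Nat.card_Ico] at this
    have hTqe := h.Tq_eq m
    omega
  obtain ⟨b, hbc, hbv⟩ := h.down k₀ hk₀g
  set bp : Fin (t+1) → ℤ := fun i => max (b i) 0 with hbp
  have hbp0 : ∀ i, 0 ≤ bp i := fun i => le_max_right _ _
  have hcostp : cost bp ≤ cost b := by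
    unfold cost
    apply Finset.sum_le_sum
    intro i _
    rw [hbp]
    dsimp only
    rcases le_or_gt 0 (b i) with hc | hc
    · rw [max_eq_left hc]
    · rw [max_eq_right (by omega)]
      exact Tb_nonneg _
  have hvalp : val ρ b ≤ val ρ bp := by
    unfold val
    apply Finset.sum_le_sum
    intro i _
    have := h.hpos i
    rw [hbp]
    dsimp only
    nlinarith [le_max_left (b i) 0]
  refine ⟨bp, hbp0, ?_, ?_⟩
  · have : (V k₀ : ℤ) ≤ m := by exact_mod_cast hVk₀
    omega
  · rcases hbv with hv | hv <;> omega

lemma wit (h : Ctx V g ρ) :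
    ∃ b, (∀ i, 0 ≤ b i) ∧ cost b ≤ (V 0 : ℤ) ∧ (g:ℤ) ≤ val ρ b := by
  have hgpos := h.g_pos
  obtain ⟨b, hbc, hbv⟩ := h.down 0 (by omega)
  set bp : Fin (t+1) → ℤ := fun i => max (b i) 0 with hbp
  have hbp0 : ∀ i, 0 ≤ bp i := fun i => le_max_right _ _
  have hcostp : cost bp ≤ cost b := by
    unfold cost
    apply Finset.sum_le_sum
    intro i _
    rw [hbp]
    dsimp only
    rcases le_or_gt 0 (b i) with hc | hc
    · rw [max_eq_left hc]
    · rw [max_eq_right (by omega)]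
      exact Tb_nonneg _
  have hvalp : val ρ b ≤ val ρ bp := by
    unfold val
    apply Finset.sum_le_sum
    intro i _
    have := h.hpos i
    rw [hbp]
    dsimp only
    nlinarith [le_max_left (b i) 0]
  exact ⟨bp, hbp0, by omega, by rcases hbv with hv | hv <;> omega⟩

lemma chain (h : Ctx V g ρ) (m : ℕ) : ∀ j : ℕ, m + j ≤ V 0 - 1 →
    Tq V g m + 3 * j ≤ Tq V g (m + j) := by
  intro j
  induction j with
  | zero => intro _; simp
  | succ j ih =>
    intro hj
    have h1 := ih (by omega)
    have h2 := h.gap (m + j + 1) (by omega) (by omega)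
    have e : m + j + 1 - 1 = m + j := by omega
    rw [e] at h2
    have e2 : m + (j + 1) = m + j + 1 := by omega
    rw [e2]
    omega

/-- master inequality -/
lemma mi (h : Ctx V g ρ) (b : Fin (t+1) → ℤ) (hb : ∀ i, 0 ≤ b i)
    (hc : cost b ≤ (V 0 : ℤ) - 1) : val ρ b + 3 * ((V 0 : ℤ) - 1 - cost b) ≤ (g:ℤ) - 1 := by
  have hV0 := h.hV0
  have hcnn : 0 ≤ cost b := cost_nonneg b
  set m₀ : ℕ := (cost b).toNat with hm₀
  have hm₀c : (m₀ : ℤ) = cost b := Int.toNat_of_nonneg hcnn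
  have hm₀V : m₀ ≤ V 0 - 1 := by omega
  have htop : Tq V g (V 0 - 1) ≤ g - 1 := h.Tq_lt_g (V 0 - 1) (by omega)
  have hchain := h.chain m₀ ((V 0 - 1) - m₀) (by omega)
  have e : m₀ + ((V 0 - 1) - m₀) = V 0 - 1 := by omega
  rw [e] at hchain
  rcases le_or_gt (g:ℤ) (val ρ b) with hcase | hcase
  · -- val ≥ g : contradiction via low with W = g
    exfalso
    have := h.low m₀ b hb (by omega) g (by omega) le_rfl
    have := h.Tq_lt_g m₀ (by omega)
    have hgpos := h.g_pos
    omega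
  · rcases le_or_gt (val ρ b) 0 with hc2 | hc2
    · -- val ≤ 0
      omega
    · -- 0 < val < g
      set W : ℕ := (val ρ b).toNat with hW
      have hWv : (W:ℤ) = val ρ b := Int.toNat_of_nonneg (by omega)
      have hlow := h.low m₀ b hb (by omega) W (by omega) (by omega)
      omega

end Ctx
end Main7
end S5

namespace S5
section Main8
variable {t : ℕ} {V : ℕ → ℕ} {g : ℕ} {ρ : Fin (t+1) → ℤ}
open Finset
namespace Ctx

/-- generic kill: an upper bound U at level m, a witness at level m-1 of value W,
with U ≤ W + 2 and U < g, gives a contradiction -/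
lemma kill_core (h : Ctx V g ρ) (m : ℕ) (U W : ℤ)
    (hub : ∀ b : Fin (t+1) → ℤ, (∀ i, 0 ≤ b i) → cost b ≤ (m:ℤ) → val ρ b ≤ U)
    (hwit : ∃ w : Fin (t+1) → ℤ, (∀ i, 0 ≤ w i) ∧ cost w ≤ (m:ℤ) - 1 ∧ W ≤ val ρ w)
    (hWg : W ≤ (g:ℤ)) (hUW : U ≤ W + 2) (hUg : U < (g:ℤ)) (hm : 1 ≤ m) (hW1 : 1 ≤ W) :
    False := by
  -- V 0 ≥ m + 1
  obtain ⟨bw, hbw0, hbwc, hbwv⟩ := h.wit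
  have hV0m : m + 1 ≤ V 0 := by
    by_contra hcon
    push_neg at hcon
    have h1 : cost bw ≤ (m:ℤ) := by
      have : (V 0 : ℤ) ≤ m := by exact_mod_cast Nat.lt_succ_iff.mp hcon
      omega
    have := hub bw hbw0 h1
    omega
  -- W ≤ Tq(m-1)
  obtain ⟨w, hw0, hwc, hwv⟩ := hwit
  set Wn : ℕ := W.toNat with hWn
  have hWnW : (Wn : ℤ) = W := Int.toNat_of_nonneg (by omega)
  have hlow := h.low (m-1) w hw0 (by
      have : ((m - 1 : ℕ) : ℤ) = (m:ℤ) - 1 := by omega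
      omega) Wn (by omega) (by omega)
  -- gap at m
  have hgap := h.gap m hm (by omega)
  -- run upper bound at m
  have hTq1 : 1 ≤ Tq V g m := by omega
  obtain ⟨b, hb0, hbc, hbv⟩ := h.runub m hTq1
  have := hub b hb0 hbc
  omega

/-- small-coordinate bound : on a set where all ρ ≤ 3 -/
lemma smallb (h : Ctx V g ρ) (S : Finset (Fin (t+1))) (hS : ∀ i ∈ S, ρ i ≤ 3)
    (b : Fin (t+1) → ℤ) (hb : ∀ i, 0 ≤ b i) :
    2 * (∑ i ∈ S, b i * ρ i) ≤ 3 * (∑ i ∈ S, Tb (b i))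
      + 3 * ((S.filter (fun i => ρ i = 3 ∧ 1 ≤ b i)).card : ℤ)
      + ((S.filter (fun i => ρ i = 2 ∧ 1 ≤ b i)).card : ℤ) := by
  have key : ∀ i ∈ S, 2 * (b i * ρ i) ≤ 3 * Tb (b i)
      + (if ρ i = 3 ∧ 1 ≤ b i then 3 else 0)
      + (if ρ i = 2 ∧ 1 ≤ b i then 1 else 0) := by
    intro i hiS
    have hρ3 := hS i hiS
    have hρ1 := h.hpos i
    have hbi := hb i
    have h2T := two_Tb (b i)
    rcases le_or_gt 1 (b i) with hb1 | hb1
    · have hρ : ρ i = 1 ∨ ρ i = 2 ∨ ρ i = 3 := by omega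
      rcases hρ with hv | hv | hv
      · simp only [hv]
        norm_num
        nlinarith
      · simp only [hv]
        norm_num [hb1]
        nlinarith [sq_nonneg (b i - 1)]
      · simp only [hv]
        norm_num [hb1]
        nlinarith [sq_nonneg (b i - 1)]
    · have hb0 : b i = 0 := by omega
      have : ¬ (1:ℤ) ≤ 0 := by omega
      simp [hb0, this]
      exact Tb_nonneg 0
  calc 2 * (∑ i ∈ S, b i * ρ i) = ∑ i ∈ S, 2 * (b i * ρ i) := by rw [Finset.mul_sum]
    _ ≤ ∑ i ∈ S, (3 * Tb (b i) + (if ρ i = 3 ∧ 1 ≤ b i then 3 else 0)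
        + (if ρ i = 2 ∧ 1 ≤ b i then 1 else 0)) := Finset.sum_le_sum key
    _ = 3 * (∑ i ∈ S, Tb (b i)) + (∑ i ∈ S, if ρ i = 3 ∧ 1 ≤ b i then (3:ℤ) else 0)
        + (∑ i ∈ S, if ρ i = 2 ∧ 1 ≤ b i then (1:ℤ) else 0) := by
        rw [Finset.sum_add_distrib, Finset.sum_add_distrib, Finset.mul_sum]
    _ = 3 * (∑ i ∈ S, Tb (b i))
      + 3 * ((S.filter (fun i => ρ i = 3 ∧ 1 ≤ b i)).card : ℤ)
      + ((S.filter (fun i => ρ i = 2 ∧ 1 ≤ b i)).card : ℤ) := by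
        rw [← Finset.sum_filter, ← Finset.sum_filter]
        simp [Finset.sum_const, mul_comm]

lemma card_le_costS (S : Finset (Fin (t+1))) (b : Fin (t+1) → ℤ) (hb : ∀ i, 0 ≤ b i)
    (P : Fin (t+1) → Prop) [DecidablePred P] (hP : ∀ i, P i → 1 ≤ b i) :
    ((S.filter (fun i => P i)).card : ℤ) ≤ ∑ i ∈ S, Tb (b i) := by
  calc ((S.filter (fun i => P i)).card : ℤ)
      = ∑ i ∈ S.filter (fun i => P i), (1:ℤ) := by simp
    _ ≤ ∑ i ∈ S.filter (fun i => P i), Tb (b i) := by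
        apply Finset.sum_le_sum
        intro i hi
        rw [Finset.mem_filter] at hi
        exact one_le_Tb (hP i hi.2)
    _ ≤ ∑ i ∈ S, Tb (b i) := by
        apply Finset.sum_le_sum_of_subset_of_nonneg (Finset.filter_subset _ _)
        intro i _ _
        exact Tb_nonneg _

end Ctx
end Main8
end S5

namespace S5
section Main9
variable {t : ℕ} {V : ℕ → ℕ} {g : ℕ} {ρ : Fin (t+1) → ℤ}
open Finset
namespace Ctx

lemma Tb_0 : Tb 0 = 0 := rfl
lemma Tb_1 : Tb 1 = 1 := rfl
lemma Tb_2 : Tb 2 = 3 := rfl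
lemma Tb_3 : Tb 3 = 6 := rfl

lemma q8 {b : ℤ} (hb : 3 ≤ b) : 8*b ≤ 6 * Tb b - 12 := by
  have := two_Tb b; nlinarith
lemma q10 {b : ℤ} (hb : 3 ≤ b) : 10*b ≤ 6 * Tb b - 6 := by
  have := two_Tb b; nlinarith
lemma q14 {b : ℤ} (hb : 3 ≤ b) : 14*b ≤ 6 * Tb b + 6 := by
  have := two_Tb b; nlinarith
lemma q8a {b : ℤ} (hb : 2 ≤ b) : 8*b ≤ 6 * Tb b - 2 := by
  have := two_Tb b; nlinarith
lemma q8b {b : ℤ} (h0 : 0 ≤ b) (hb : b ≤ 1) : 8*b ≤ 6 * Tb b + 2 := by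
  interval_cases b <;> simp [Tb_0, Tb_1]
lemma q10a {b : ℤ} (hb : 2 ≤ b) : 10*b ≤ 6 * Tb b + 2 := by
  have := two_Tb b; nlinarith
lemma q10b {b : ℤ} (h0 : 0 ≤ b) (hb : b ≤ 1) : 10*b ≤ 6 * Tb b + 4 := by
  interval_cases b <;> simp [Tb_0, Tb_1]

/-- splitting val and cost at one coordinate -/
lemma split_one (i₀ : Fin (t+1)) (b : Fin (t+1) → ℤ) :
    val ρ b = b i₀ * ρ i₀ + ∑ i ∈ univ.erase i₀, b i * ρ i ∧
    cost b = Tb (b i₀) + ∑ i ∈ univ.erase i₀, Tb (b i) := by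
  constructor
  · unfold val
    rw [← Finset.add_sum_erase _ _ (mem_univ i₀)]
  · unfold cost
    rw [← Finset.add_sum_erase _ _ (mem_univ i₀)]

/-- the standard witness : w₀ on coordinate i₀, 1 on every 3 -/
lemma std_wit (h : Ctx V g ρ) (i₀ : Fin (t+1)) (hρ : ρ i₀ ≠ 3) (w₀ : ℤ) (hw₀ : 0 ≤ w₀) :
    ∃ w : Fin (t+1) → ℤ, (∀ i, 0 ≤ w i) ∧
      cost w = Tb w₀ + ((univ.filter (fun i => ρ i = 3)).card : ℤ) ∧
      val ρ w = w₀ * ρ i₀ + 3 * ((univ.filter (fun i => ρ i = 3)).card : ℤ) := by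
  set w : Fin (t+1) → ℤ := fun i => if i = i₀ then w₀ else if ρ i = 3 then 1 else 0 with hw
  refine ⟨w, ?_, ?_, ?_⟩
  · intro i
    rw [hw]; dsimp only
    split
    · omega
    · split <;> omega
  · obtain ⟨_, hc⟩ := split_one (ρ := ρ) i₀ w
    rw [hc]
    have e0 : w i₀ = w₀ := by rw [hw]; simp
    have e1 : ∑ i ∈ univ.erase i₀, Tb (w i)
        = ∑ i ∈ univ.erase i₀, (if ρ i = 3 then (1:ℤ) else 0) := by
      apply Finset.sum_congr rfl
      intro i hi
      rw [Finset.mem_erase] at hi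
      rw [hw]; dsimp only
      rw [if_neg hi.1]
      split
      · exact Tb_1
      · exact Tb_0
    have e2 : ∑ i ∈ univ.erase i₀, (if ρ i = 3 then (1:ℤ) else 0)
        = ((univ.filter (fun i => ρ i = 3)).card : ℤ) := by
      rw [← Finset.sum_filter]
      rw [Finset.filter_erase]
      rw [Finset.erase_eq_of_notMem (by
        intro hc
        rw [Finset.mem_filter] at hc
        exact hρ hc.2)]
      simp
    rw [e0, e1, e2]
  · obtain ⟨hv, _⟩ := split_one (ρ := ρ) i₀ w
    rw [hv]
    have e0 : w i₀ = w₀ := by rw [hw]; simp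
    have e1 : ∑ i ∈ univ.erase i₀, w i * ρ i
        = ∑ i ∈ univ.erase i₀, (if ρ i = 3 then (3:ℤ) else 0) := by
      apply Finset.sum_congr rfl
      intro i hi
      rw [Finset.mem_erase] at hi
      rw [hw]; dsimp only
      rw [if_neg hi.1]
      by_cases h3 : ρ i = 3
      · rw [if_pos h3, if_pos h3, h3]; ring
      · rw [if_neg h3, if_neg h3]; ring
    have e2 : ∑ i ∈ univ.erase i₀, (if ρ i = 3 then (3:ℤ) else 0)
        = 3 * ((univ.filter (fun i => ρ i = 3)).card : ℤ) := by
      rw [← Finset.sum_filter]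
      rw [Finset.filter_erase]
      rw [Finset.erase_eq_of_notMem (by
        intro hc
        rw [Finset.mem_filter] at hc
        exact hρ hc.2)]
      simp [mul_comm]
    rw [e0, e1, e2]

/-- the g identity for a single-head configuration -/
lemma g_single (h : Ctx V g ρ) (i₀ : Fin (t+1)) (hothers : ∀ i, i ≠ i₀ → ρ i ≤ 3) :
    (g:ℤ) = Tb (ρ i₀ - 1) + 3 * ((univ.filter (fun i => ρ i = 3)).card : ℤ)
      + ((univ.filter (fun i => ρ i = 2)).card : ℤ)
      ∨ (ρ i₀ ≤ 3) := by
  by_cases hbig : ρ i₀ ≤ 3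
  · right; exact hbig
  left
  have hgG := h.gG
  unfold Gv at hgG
  rw [← Finset.add_sum_erase _ _ (mem_univ i₀)] at hgG
  have e1 : ∑ i ∈ univ.erase i₀, Tb (ρ i - 1)
      = ∑ i ∈ univ.erase i₀, ((if ρ i = 3 then (3:ℤ) else 0) + (if ρ i = 2 then (1:ℤ) else 0)) := by
    apply Finset.sum_congr rfl
    intro i hi
    rw [Finset.mem_erase] at hi
    have h3 := hothers i hi.1
    have h1 := h.hpos i
    have : ρ i = 1 ∨ ρ i = 2 ∨ ρ i = 3 := by omega
    rcases this with hv | hv | hv <;> rw [hv] <;> norm_num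
    · exact Tb_0
    · exact Tb_1
    · exact Tb_2
  rw [e1, Finset.sum_add_distrib] at hgG
  have e2 : ∑ i ∈ univ.erase i₀, (if ρ i = 3 then (3:ℤ) else 0)
      = 3 * ((univ.filter (fun i => ρ i = 3)).card : ℤ) := by
    rw [← Finset.sum_filter, Finset.filter_erase, Finset.erase_eq_of_notMem (by
      intro hc
      rw [Finset.mem_filter] at hc
      omega)]
    simp [mul_comm]
  have e3 : ∑ i ∈ univ.erase i₀, (if ρ i = 2 then (1:ℤ) else 0)
      = ((univ.filter (fun i => ρ i = 2)).card : ℤ) := by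
    rw [← Finset.sum_filter, Finset.filter_erase, Finset.erase_eq_of_notMem (by
      intro hc
      rw [Finset.mem_filter] at hc
      omega)]
    simp
  rw [e2, e3] at hgG
  omega

end Ctx
end Main9
end S5

namespace S5
section Main10
variable {t : ℕ} {V : ℕ → ℕ} {g : ℕ} {ρ : Fin (t+1) → ℤ}
open Finset
namespace Ctx

lemma small_data (h : Ctx V g ρ) (S : Finset (Fin (t+1))) (hS : ∀ i ∈ S, ρ i ≤ 3)
    (b : Fin (t+1) → ℤ) (hb : ∀ i, 0 ≤ b i) :
    ∃ A B : ℕ,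
      2 * (∑ i ∈ S, b i * ρ i) ≤ 3 * (∑ i ∈ S, Tb (b i)) + 3 * (A:ℤ) + (B:ℤ) ∧
      (A:ℤ) ≤ ((univ.filter (fun i => ρ i = 3)).card : ℤ) ∧
      (A:ℤ) + (B:ℤ) ≤ ∑ i ∈ S, Tb (b i) ∧
      (B:ℤ) ≤ ((univ.filter (fun i => ρ i = 2)).card : ℤ) := by
  classical
  refine ⟨(S.filter (fun i => ρ i = 3 ∧ 1 ≤ b i)).card,
    (S.filter (fun i => ρ i = 2 ∧ 1 ≤ b i)).card, h.smallb S hS b hb, ?_, ?_, ?_⟩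
  · have : S.filter (fun i => ρ i = 3 ∧ 1 ≤ b i) ⊆ univ.filter (fun i => ρ i = 3) := by
      intro i hi
      rw [Finset.mem_filter] at hi ⊢
      exact ⟨mem_univ _, hi.2.1⟩
    exact_mod_cast Finset.card_le_card this
  · have hdisj : Disjoint (S.filter (fun i => ρ i = 3 ∧ 1 ≤ b i))
        (S.filter (fun i => ρ i = 2 ∧ 1 ≤ b i)) := by
      rw [Finset.disjoint_left]
      intro i hi1 hi2
      rw [Finset.mem_filter] at hi1 hi2
      omega
    have hunion := card_le_costS S b hb
      (fun i => (ρ i = 3 ∧ 1 ≤ b i) ∨ (ρ i = 2 ∧ 1 ≤ b i))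
      (fun i hi => by rcases hi with ⟨_, h1⟩ | ⟨_, h1⟩ <;> exact h1)
    rw [Finset.filter_or, Finset.card_union_of_disjoint hdisj] at hunion
    push_cast at hunion
    omega
  · have : S.filter (fun i => ρ i = 2 ∧ 1 ≤ b i) ⊆ univ.filter (fun i => ρ i = 2) := by
      intro i hi
      rw [Finset.mem_filter] at hi ⊢
      exact ⟨mem_univ _, hi.2.1⟩
    exact_mod_cast Finset.card_le_card this

/-- main single-head kill : a coordinate equal to 4, 5 or 7 with all others ≤ 3 -/
lemma kill_heads1 (h : Ctx V g ρ) (i₀ : Fin (t+1))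
    (hR : ρ i₀ = 4 ∨ ρ i₀ = 5 ∨ ρ i₀ = 7) (hothers : ∀ i, i ≠ i₀ → ρ i ≤ 3)
    (hno2 : ρ i₀ = 7 → ∀ i, ρ i ≠ 2) : False := by
  classical
  set dN : ℕ := (univ.filter (fun i => ρ i = 3)).card with hdN
  set eN : ℕ := (univ.filter (fun i => ρ i = 2)).card with heN
  have hS : ∀ i ∈ univ.erase i₀, ρ i ≤ 3 := by
    intro i hi
    rw [Finset.mem_erase] at hi
    exact hothers i hi.1
  have hgid : (g:ℤ) = Tb (ρ i₀ - 1) + 3 * dN + eN := by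
    rcases h.g_single i₀ hothers with he | he
    · exact he
    · rcases hR with hv | hv | hv <;> omega
  have main : ∀ (m : ℕ) (U : ℤ),
      (∀ (b₀ cs A B : ℤ), 0 ≤ b₀ → 0 ≤ cs → 0 ≤ A → 0 ≤ B →
        Tb b₀ + cs ≤ (m:ℤ) → A ≤ (dN:ℤ) → A + B ≤ cs → B ≤ (eN:ℤ) →
        2 * (b₀ * ρ i₀) + 3*cs + 3*A + B ≤ 2*U + 1) →
      (∀ b : Fin (t+1) → ℤ, (∀ i, 0 ≤ b i) → cost b ≤ (m:ℤ) → val ρ b ≤ U) := by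
    intro m U harith b hb hc
    obtain ⟨hv, hcs⟩ := split_one (ρ := ρ) i₀ b
    obtain ⟨A, B, hsm, hA, hAB, hB⟩ := h.small_data (univ.erase i₀) hS b hb
    have hcs0 : 0 ≤ ∑ i ∈ univ.erase i₀, Tb (b i) := Finset.sum_nonneg fun i _ => Tb_nonneg _
    have harith' := harith (b i₀) (∑ i ∈ univ.erase i₀, Tb (b i)) A B (hb i₀) hcs0
      (by positivity) (by positivity) (by rw [hcs] at hc; omega) hA hAB hB
    omega
  rcases hR with hv | hv | hv
  · -- R = 4
    have e4 : Tb ((4:ℤ) - 1) = 6 := by norm_num [Tb]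
    rw [hv, e4] at hgid
    rcases Nat.eq_zero_or_pos eN with he0 | he1
    · obtain ⟨w, hw0, hwc, hwv⟩ := h.std_wit i₀ (by omega) 1 (by omega)
      rw [Tb_1] at hwc
      rw [hv] at hwv
      refine h.kill_core (dN + 2) (3*dN + 5) (3*dN + 4)
        (main (dN+2) (3*dN+5) ?_) ⟨w, hw0, by omega, by omega⟩
        (by omega) (by omega) (by omega) (by omega) (by omega)
      intro b₀ cs A B h0 h1 h2 h3 h4 h5 h6 h7
      rw [hv]
      have hB0 : B = 0 := by omega
      rcases le_or_gt 3 b₀ with hb3 | hb3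
      · have := q8 hb3
        omega
      · interval_cases b₀
        · rw [Tb_0] at h4; omega
        · rw [Tb_1] at h4; omega
        · rw [Tb_2] at h4; omega
    · obtain ⟨w, hw0, hwc, hwv⟩ := h.std_wit i₀ (by omega) 1 (by omega)
      rw [Tb_1] at hwc
      rw [hv] at hwv
      refine h.kill_core (dN + 2) (3*dN + 6) (3*dN + 4)
        (main (dN+2) (3*dN+6) ?_) ⟨w, hw0, by omega, by omega⟩
        (by omega) (by omega) (by omega) (by omega) (by omega)
      intro b₀ cs A B h0 h1 h2 h3 h4 h5 h6 h7
      rw [hv]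
      rcases le_or_gt 3 b₀ with hb3 | hb3
      · have := q8 hb3
        omega
      · interval_cases b₀
        · rw [Tb_0] at h4; omega
        · rw [Tb_1] at h4; omega
        · rw [Tb_2] at h4; omega
  · -- R = 5
    have e5 : Tb ((5:ℤ) - 1) = 10 := by norm_num [Tb]
    rw [hv, e5] at hgid
    obtain ⟨w, hw0, hwc, hwv⟩ := h.std_wit i₀ (by omega) 1 (by omega)
    rw [Tb_1] at hwc
    rw [hv] at hwv
    refine h.kill_core (dN + 2) (3*dN + 7) (3*dN + 5)
      (main (dN+2) (3*dN+7) ?_) ⟨w, hw0, by omega, by omega⟩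
      (by omega) (by omega) (by omega) (by omega) (by omega)
    intro b₀ cs A B h0 h1 h2 h3 h4 h5 h6 h7
    rw [hv]
    rcases le_or_gt 3 b₀ with hb3 | hb3
    · have := q10 hb3
      omega
    · interval_cases b₀
      · rw [Tb_0] at h4; omega
      · rw [Tb_1] at h4; omega
      · rw [Tb_2] at h4; omega
  · -- R = 7
    have e7 : Tb ((7:ℤ) - 1) = 21 := by norm_num [Tb]
    rw [hv, e7] at hgid
    have heN0 : eN = 0 := by
      rw [heN]
      rw [Finset.card_eq_zero]
      apply Finset.filter_false_of_mem
      intro i _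
      exact hno2 hv i
    obtain ⟨w, hw0, hwc, hwv⟩ := h.std_wit i₀ (by omega) 2 (by omega)
    rw [Tb_2] at hwc
    rw [hv] at hwv
    refine h.kill_core (dN + 4) (3*dN + 15) (3*dN + 14)
      (main (dN+4) (3*dN+15) ?_) ⟨w, hw0, by omega, by omega⟩
      (by omega) (by omega) (by omega) (by omega) (by omega)
    intro b₀ cs A B h0 h1 h2 h3 h4 h5 h6 h7
    rw [hv]
    have hB0 : B = 0 := by omega
    rcases le_or_gt 3 b₀ with hb3 | hb3
    · have := q14 hb3
      omega
    · interval_cases b₀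
      · rw [Tb_0] at h4; omega
      · rw [Tb_1] at h4; omega
      · rw [Tb_2] at h4; omega

end Ctx
end Main10
end S5

namespace S5
section Main11
variable {t : ℕ} {V : ℕ → ℕ} {g : ℕ} {ρ : Fin (t+1) → ℤ}
open Finset
namespace Ctx

lemma split_two (i₀ i₁ : Fin (t+1)) (hne : i₀ ≠ i₁) (f : Fin (t+1) → ℤ) :
    ∑ i, f i = f i₀ + f i₁ + ∑ i ∈ (univ.erase i₀).erase i₁, f i := by
  rw [← Finset.add_sum_erase _ _ (mem_univ i₀)]
  rw [← Finset.add_sum_erase _ _ (Finset.mem_erase.mpr ⟨Ne.symm hne, mem_univ i₁⟩)]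
  ring

lemma filter3_no_heads (i₀ i₁ : Fin (t+1)) (h0 : ρ i₀ ≠ 3) (h1 : ρ i₁ ≠ 3) :
    ((univ.erase i₀).erase i₁).filter (fun i => ρ i = 3) = univ.filter (fun i => ρ i = 3) := by
  ext j
  constructor
  · intro hj
    rw [Finset.mem_filter] at hj ⊢
    exact ⟨mem_univ _, hj.2⟩
  · intro hj
    rw [Finset.mem_filter] at hj ⊢
    refine ⟨?_, hj.2⟩
    rw [Finset.mem_erase, Finset.mem_erase]
    refine ⟨?_, ?_, mem_univ _⟩
    · intro hc; rw [hc] at hj; exact h1 hj.2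
    · intro hc; rw [hc] at hj; exact h0 hj.2

lemma kill_heads2 (h : Ctx V g ρ) (i₀ i₁ : Fin (t+1)) (hne : i₀ ≠ i₁)
    (hR : (ρ i₀ = 4 ∧ ρ i₁ = 4) ∨ (ρ i₀ = 5 ∧ ρ i₁ = 5))
    (hothers : ∀ i, i ≠ i₀ → i ≠ i₁ → ρ i ≤ 3)
    (hno2 : ∀ i, ρ i ≠ 2) : False := by
  classical
  set dN : ℕ := (univ.filter (fun i => ρ i = 3)).card with hdN
  have hRbig : 4 ≤ ρ i₀ ∧ 4 ≤ ρ i₁ := by rcases hR with ⟨h1, h2⟩ | ⟨h1, h2⟩ <;> omega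
  have hS : ∀ i ∈ (univ.erase i₀).erase i₁, ρ i ≤ 3 := by
    intro i hi
    rw [Finset.mem_erase, Finset.mem_erase] at hi
    exact hothers i hi.2.1 hi.1
  have hfil := filter3_no_heads (ρ := ρ) i₀ i₁ (by omega) (by omega)
  -- g identity
  have hgid : (g:ℤ) = Tb (ρ i₀ - 1) + Tb (ρ i₁ - 1) + 3 * dN := by
    have hgG := h.gG
    unfold Gv at hgG
    rw [split_two i₀ i₁ hne (fun i => Tb (ρ i - 1))] at hgG
    have e1 : ∑ i ∈ (univ.erase i₀).erase i₁, Tb (ρ i - 1)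
        = ∑ i ∈ (univ.erase i₀).erase i₁, (if ρ i = 3 then (3:ℤ) else 0) := by
      apply Finset.sum_congr rfl
      intro i hi
      have h3 := hS i hi
      have h1 := h.hpos i
      have h2 := hno2 i
      have : ρ i = 1 ∨ ρ i = 3 := by omega
      rcases this with hv | hv <;> rw [hv] <;> norm_num
      · exact Tb_0
      · exact Tb_2
    rw [e1, ← Finset.sum_filter, hfil] at hgG
    rw [Finset.sum_const] at hgG
    simp at hgG
    push_cast at hgG
    omega
  -- witness
  set w : Fin (t+1) → ℤ := fun i => if i = i₀ then 1 else if i = i₁ then 1 else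
    if ρ i = 3 then 1 else 0 with hw
  have hw0 : ∀ i, 0 ≤ w i := by
    intro i
    rw [hw]; dsimp only
    split
    · omega
    · split
      · omega
      · split <;> omega
  have hwS : ∀ i ∈ (univ.erase i₀).erase i₁, w i = if ρ i = 3 then 1 else 0 := by
    intro i hi
    rw [Finset.mem_erase, Finset.mem_erase] at hi
    rw [hw]; dsimp only
    rw [if_neg hi.2.1, if_neg hi.1]
  have hwc : cost w = 2 + (dN:ℤ) := by
    unfold cost
    rw [split_two i₀ i₁ hne (fun i => Tb (w i))]
    have e0 : w i₀ = 1 := by rw [hw]; simp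
    have e1 : w i₁ = 1 := by
      rw [hw]; dsimp only
      rw [if_neg (Ne.symm hne), if_pos rfl]
    have e2 : ∑ i ∈ (univ.erase i₀).erase i₁, Tb (w i)
        = ∑ i ∈ (univ.erase i₀).erase i₁, (if ρ i = 3 then (1:ℤ) else 0) := by
      apply Finset.sum_congr rfl
      intro i hi
      rw [hwS i hi]
      split
      · exact Tb_1
      · exact Tb_0
    rw [e0, e1, e2, ← Finset.sum_filter, hfil, Finset.sum_const, Tb_1]
    simp [hdN]
  have hwv : val ρ w = ρ i₀ + ρ i₁ + 3 * (dN:ℤ) := by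
    unfold val
    rw [split_two i₀ i₁ hne (fun i => w i * ρ i)]
    have e0 : w i₀ = 1 := by rw [hw]; simp
    have e1 : w i₁ = 1 := by
      rw [hw]; dsimp only
      rw [if_neg (Ne.symm hne), if_pos rfl]
    have e2 : ∑ i ∈ (univ.erase i₀).erase i₁, w i * ρ i
        = ∑ i ∈ (univ.erase i₀).erase i₁, (if ρ i = 3 then (3:ℤ) else 0) := by
      apply Finset.sum_congr rfl
      intro i hi
      rw [hwS i hi]
      by_cases h3 : ρ i = 3
      · rw [if_pos h3, if_pos h3, h3]; ring
      · rw [if_neg h3, if_neg h3]; ring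
    rw [e0, e1, e2, ← Finset.sum_filter, hfil, Finset.sum_const]
    simp
    ring
  -- the main upper bound machinery
  have main : ∀ (m : ℕ) (U : ℤ),
      (∀ (a a' cs A : ℤ), 0 ≤ a → 0 ≤ a' → 0 ≤ cs → 0 ≤ A →
        Tb a + Tb a' + cs ≤ (m:ℤ) → A ≤ (dN:ℤ) → A ≤ cs →
        2 * (a * ρ i₀) + 2 * (a' * ρ i₁) + 3*cs + 3*A ≤ 2*U + 1) →
      (∀ b : Fin (t+1) → ℤ, (∀ i, 0 ≤ b i) → cost b ≤ (m:ℤ) → val ρ b ≤ U) := by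
    intro m U harith b hb hc
    obtain ⟨A, B, hsm, hA, hAB, hB⟩ := h.small_data ((univ.erase i₀).erase i₁) hS b hb
    have hB0 : (B:ℤ) = 0 := by
      have : (univ.filter (fun i => ρ i = 2)).card = 0 := by
        rw [Finset.card_eq_zero]
        apply Finset.filter_false_of_mem
        intro i _
        exact hno2 i
      rw [this] at hB
      push_cast at hB
      omega
    have hcs0 : 0 ≤ ∑ i ∈ (univ.erase i₀).erase i₁, Tb (b i) :=
      Finset.sum_nonneg fun i _ => Tb_nonneg _
    have hvspl := split_two i₀ i₁ hne (fun i => b i * ρ i)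
    have hcspl := split_two i₀ i₁ hne (fun i => Tb (b i))
    have harith' := harith (b i₀) (b i₁) (∑ i ∈ (univ.erase i₀).erase i₁, Tb (b i)) A
      (hb i₀) (hb i₁) hcs0 (by positivity)
      (by unfold cost at hc; omega) hA (by omega)
    unfold val
    omega
  rcases hR with ⟨h4a, h4b⟩ | ⟨h5a, h5b⟩
  · -- R = 4 : m = d+3, U = 3d+9, W = 3d+8
    have e4 : Tb ((4:ℤ) - 1) = 6 := by norm_num [Tb]
    rw [h4a, h4b, e4] at hgid
    rw [h4a, h4b] at hwv
    refine h.kill_core (dN + 3) (3*dN + 9) (3*dN + 8)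
      (main (dN+3) (3*dN+9) ?_) ⟨w, hw0, by omega, by omega⟩
      (by omega) (by omega) (by omega) (by omega) (by omega)
    intro a a' cs A h0 h1 h2 h3 h4 h5 h6
    rw [h4a, h4b]
    rcases le_or_gt 2 a with ha2 | ha2
    · rcases le_or_gt 2 a' with hb2 | hb2
      · have := q8a ha2; have := q8a hb2; omega
      · have := q8a ha2; have := q8b h1 (by omega); omega
    · rcases le_or_gt 2 a' with hb2 | hb2
      · have := q8b h0 (by omega); have := q8a hb2; omega
      · interval_cases a <;> interval_cases a' <;>
          simp only [Tb_0, Tb_1] at h4 <;> omega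
  · -- R = 5 : m = d+3, U = 3d+12, W = 3d+10
    have e5 : Tb ((5:ℤ) - 1) = 10 := by norm_num [Tb]
    rw [h5a, h5b, e5] at hgid
    rw [h5a, h5b] at hwv
    refine h.kill_core (dN + 3) (3*dN + 12) (3*dN + 10)
      (main (dN+3) (3*dN+12) ?_) ⟨w, hw0, by omega, by omega⟩
      (by omega) (by omega) (by omega) (by omega) (by omega)
    intro a a' cs A h0 h1 h2 h3 h4 h5 h6
    rw [h5a, h5b]
    rcases le_or_gt 2 a with ha2 | ha2
    · rcases le_or_gt 2 a' with hb2 | hb2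
      · have := q10a ha2; have := q10a hb2; omega
      · have := q10a ha2; have := q10b h1 (by omega); omega
    · rcases le_or_gt 2 a' with hb2 | hb2
      · have := q10b h0 (by omega); have := q10a hb2; omega
      · interval_cases a <;> interval_cases a' <;>
          simp only [Tb_0, Tb_1] at h4 <;> omega

end Ctx
end Main11
end S5

namespace S5
section Main12
variable {t : ℕ} {V : ℕ → ℕ} {g : ℕ} {ρ : Fin (t+1) → ℤ}
open Finset
namespace Ctx

/-- number-theoretic facts about the deficiency D = T(r-1) - r⌊r/3⌋ -/
lemma nlem (r q D : ℤ) (h1 : 1 ≤ r) (ha : 3*q ≤ r) (hb : r ≤ 3*q+2)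
    (hD : 2*D = r*(r-1) - 2*r*q) :
    0 ≤ D ∧ (4 ≤ r → 2 ≤ D) ∧ (5 ≤ r → 3 ≤ D) ∧ (D = 0 → r = 1 ∨ r = 3) ∧
    (D ≤ 1 → r ≤ 3) ∧ (D ≤ 2 → r ≤ 4) ∧
    (3*q+1 ≤ r → r - D ≤ 2) ∧ (3*q+1 ≤ r → 2 ≤ r - D → r = 4) ∧
    (3*q+1 ≤ r → 0 ≤ r - D → (r = 1 ∨ r = 2 ∨ r = 4 ∨ r = 5 ∨ r = 7)) ∧
    (r = 3*q+2 → -1 ≤ r - D → (r = 2 ∨ r = 5)) ∧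
    (r = 3*q+2 → 1 ≤ r - D → r = 2) ∧ (r = 3*q+2 → r - D ≤ 1) := by
  have hq0 : 0 ≤ q := by omega
  rcases le_or_gt q 2 with hq | hq
  · have hq' : q = 0 ∨ q = 1 ∨ q = 2 := by omega
    have hr' : r = 3*q ∨ r = 3*q+1 ∨ r = 3*q+2 := by omega
    rcases hq' with hq' | hq' | hq' <;> subst hq' <;>
      rcases hr' with hr' | hr' | hr' <;> subst hr' <;> omega
  · -- q ≥ 3 : D is large and r - D very negative
    have h2' : 0 ≤ r - 1 - 2*q := by omega
    have hDbig : (3*q) * (r-1-2*q) ≤ 2*D := by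
      have hh := mul_le_mul_of_nonneg_right ha h2'
      nlinarith
    have k1 : (3*q) * (q - 1) ≤ (3*q) * (r - 1 - 2*q) := by
      apply mul_le_mul_of_nonneg_left (by omega) (by omega)
    have k2 : 18 ≤ (3*q)*(q-1) := by nlinarith
    have hD9 : 9 ≤ D := by omega
    have hrD : 2*(r-D) = r*(3+2*q-r) := by linear_combination (-1 : ℤ) * hD
    have hstrong : 3*q+1 ≤ r → r - D ≤ -2 := by
      intro hr1
      have w1 : r*(3+2*q-r) ≤ r*(2-q) :=
        mul_le_mul_of_nonneg_left (by omega) (by omega)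
      have w2 : r*(2-q) ≤ -r := by nlinarith
      omega
    refine ⟨by omega, by omega, by omega, by omega, by omega, by omega,
      ?_, ?_, ?_, ?_, ?_, ?_⟩
    · intro hx; have := hstrong hx; omega
    · intro hx; have := hstrong hx; omega
    · intro hx; have := hstrong hx; omega
    · intro hx; have := hstrong (by omega); omega
    · intro hx; have := hstrong (by omega); omega
    · intro hx; have := hstrong (by omega); omega

/-- per-coordinate slack facts for removed units -/
lemma sfact (rv bv u : ℤ) (h0 : 0 ≤ bv) (h1 : 3*bv ≤ rv) (h2 : rv ≤ 3*bv+2)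
    (hu : bv + 1 ≤ u) :
    (3*bv + 3 - rv ≤ 3*(Tb u - Tb bv) - rv*(u - bv)) ∧
    (bv + 2 ≤ u → 5 ≤ 3*(Tb u - Tb bv) - rv*(u - bv)) ∧
    (u = bv + 1 → 3*(Tb u - Tb bv) - rv*(u - bv) = 3*bv + 3 - rv) ∧
    (u - bv ≤ Tb u - Tb bv) := by
  have hTu := two_Tb u
  have hTb := two_Tb bv
  refine ⟨?_, ?_, ?_, ?_⟩
  · nlinarith [sq_nonneg (u - bv - 1)]
  · intro h5
    nlinarith [sq_nonneg (u - bv - 2)]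
  · intro he
    subst he
    nlinarith
  · nlinarith [sq_nonneg (u - bv - 1)]

end Ctx
end Main12
end S5

namespace S5
section Main13
variable {t : ℕ} {V : ℕ → ℕ} {g : ℕ} {ρ : Fin (t+1) → ℤ}
open Finset
namespace Ctx

lemma main_ge4 (h : Ctx V g ρ) (h4 : 4 ≤ ρ 0) : False := by
  classical
  obtain ⟨b, hb0, hbc, hbv⟩ := h.wit
  set β : Fin (t+1) → ℤ := fun i => ρ i / 3 with hβdef
  have hβf : ∀ i, 3 * β i ≤ ρ i ∧ ρ i ≤ 3 * β i + 2 ∧ 0 ≤ β i := by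
    intro i
    simp only [hβdef]
    have hdm := Int.mul_ediv_add_emod (ρ i) 3
    have h1 := Int.emod_nonneg (ρ i) (by norm_num : (3:ℤ) ≠ 0)
    have h2 := Int.emod_lt_of_pos (ρ i) (by norm_num : (0:ℤ) < 3)
    have hp := h.hpos i
    constructor
    · omega
    constructor
    · omega
    · omega
  set Df : Fin (t+1) → ℤ := fun i => Tb (ρ i - 1) - ρ i * β i with hDfdef
  have hN : ∀ i, 0 ≤ Df i ∧ (4 ≤ ρ i → 2 ≤ Df i) ∧ (5 ≤ ρ i → 3 ≤ Df i) ∧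
      (Df i = 0 → ρ i = 1 ∨ ρ i = 3) ∧ (Df i ≤ 1 → ρ i ≤ 3) ∧ (Df i ≤ 2 → ρ i ≤ 4) ∧
      (3*(β i)+1 ≤ ρ i → ρ i - Df i ≤ 2) ∧
      (3*(β i)+1 ≤ ρ i → 2 ≤ ρ i - Df i → ρ i = 4) ∧
      (3*(β i)+1 ≤ ρ i → 0 ≤ ρ i - Df i → (ρ i = 1 ∨ ρ i = 2 ∨ ρ i = 4 ∨ ρ i = 5 ∨ ρ i = 7)) ∧
      (ρ i = 3*(β i)+2 → -1 ≤ ρ i - Df i → (ρ i = 2 ∨ ρ i = 5)) ∧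
      (ρ i = 3*(β i)+2 → 1 ≤ ρ i - Df i → ρ i = 2) ∧ (ρ i = 3*(β i)+2 → ρ i - Df i ≤ 1) := by
    intro i
    apply nlem (ρ i) (β i) (Df i) (h.hpos i) (hβf i).1 (hβf i).2.1
    rw [hDfdef]
    dsimp only
    linear_combination two_Tb (ρ i - 1)
  have hTbsplit : ∀ i, Tb (ρ i - 1) = ρ i * β i + Df i := by
    intro i
    rw [hDfdef]
    ring
  set X : Finset (Fin (t+1)) := univ.filter (fun i => β i < b i) with hXdef
  have hXmem : ∀ i, i ∈ X ↔ β i < b i := by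
    intro i
    rw [hXdef, Finset.mem_filter]
    simp
  -- the case X = ∅
  by_cases hXe : X = ∅
  · have hble : ∀ i, b i ≤ β i := by
      intro i
      by_contra hc
      have : i ∈ X := (hXmem i).mpr (by omega)
      rw [hXe] at this
      exact absurd this (Finset.notMem_empty i)
    have hv1 : val ρ b ≤ ∑ i, ρ i * β i := by
      unfold val
      apply Finset.sum_le_sum
      intro i _
      have := h.hpos i
      nlinarith [hble i]
    have hv2 : ∑ i, ρ i * β i = (g:ℤ) - ∑ i, Df i := by
      have hgG := h.gG
      unfold Gv at hgG
      have : ∑ i, Tb (ρ i - 1) = ∑ i, (ρ i * β i + Df i) :=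
        Finset.sum_congr rfl (fun i _ => hTbsplit i)
      rw [this, Finset.sum_add_distrib] at hgG
      omega
    have hDf0 : Df 0 ≤ ∑ i, Df i :=
      Finset.single_le_sum (fun i _ => (hN i).1) (mem_univ 0)
    have := (hN 0).2.1 h4
    omega
  · -- X nonempty
    have hXne : X.Nonempty := Finset.nonempty_iff_ne_empty.mpr hXe
    set sfun : Fin (t+1) → ℤ :=
      fun i => 3*(Tb (b i) - Tb (β i)) - ρ i * (b i - β i) with hsfun
    set CC : ℤ := ∑ i ∈ X, (Tb (b i) - Tb (β i)) with hCC
    set LL : ℤ := ∑ i ∈ X, ρ i * (b i - β i) with hLL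
    set SS : ℤ := ∑ i ∈ X, sfun i with hSS
    have hSSrel : SS = 3 * CC - LL := by
      rw [hSS, hCC, hLL, Finset.mul_sum, ← Finset.sum_sub_distrib]
    have hsX : ∀ i ∈ X, 3*(β i) + 3 - ρ i ≤ sfun i ∧ 1 ≤ sfun i ∧
        (β i + 2 ≤ b i → 5 ≤ sfun i) ∧
        (b i = β i + 1 → sfun i = 3*(β i) + 3 - ρ i) ∧
        1 ≤ Tb (b i) - Tb (β i) := by
      intro i hi
      have hbmem := (hXmem i).mp hi
      have hf := hβf i
      have hsf := sfact (ρ i) (β i) (b i) hf.2.2 hf.1 hf.2.1 (by omega)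
      have hsfi : sfun i = 3*(Tb (b i) - Tb (β i)) - ρ i * (b i - β i) := by
        rw [hsfun]
      refine ⟨by omega, by omega, by
          intro hx
          have := hsf.2.1 hx
          omega, by
          intro hx
          have := hsf.2.2.1 hx
          omega, by
          have := hsf.2.2.2
          omega⟩
    have hC1 : 1 ≤ CC := by
      obtain ⟨j, hj⟩ := hXne
      rw [hCC]
      calc (1:ℤ) = ∑ i ∈ {j}, (1:ℤ) := by simp
        _ ≤ ∑ i ∈ X, (1:ℤ) := by
            apply Finset.sum_le_sum_of_subset_of_nonneg
            · intro i hi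
              rw [Finset.mem_singleton] at hi
              rw [hi]; exact hj
            · intro i _ _; omega
        _ ≤ ∑ i ∈ X, (Tb (b i) - Tb (β i)) :=
            Finset.sum_le_sum (fun i hi => (hsX i hi).2.2.2.2)
    -- b' and the MI bound
    set b' : Fin (t+1) → ℤ := fun i => min (b i) (β i) with hb'def
    have hb'0 : ∀ i, 0 ≤ b' i := by
      intro i
      rw [hb'def]
      have := hb0 i
      have := (hβf i).2.2
      exact le_min (hb0 i) (hβf i).2.2
    have hcost' : cost b' = cost b - CC := by
      have e1 : cost b - cost b' = ∑ i, (Tb (b i) - Tb (b' i)) := by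
        unfold cost
        rw [Finset.sum_sub_distrib]
      have e2 : ∀ i ∈ (univ : Finset (Fin (t+1))), Tb (b i) - Tb (b' i)
          = if i ∈ X then Tb (b i) - Tb (β i) else 0 := by
        intro i _
        by_cases hiX : i ∈ X
        · rw [if_pos hiX, hb'def]
          have := (hXmem i).mp hiX
          dsimp only
          rw [min_eq_right (by omega)]
        · rw [if_neg hiX, hb'def]
          have : ¬ (β i < b i) := fun hc => hiX ((hXmem i).mpr hc)
          dsimp only
          rw [min_eq_left (by omega)]
          ring
      rw [Finset.sum_congr rfl e2, Finset.sum_ite_mem, Finset.univ_inter] at e1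
      rw [hCC]
      omega
    have hval' : val ρ b' = val ρ b - LL := by
      have e1 : val ρ b - val ρ b' = ∑ i, (b i * ρ i - b' i * ρ i) := by
        unfold val
        rw [Finset.sum_sub_distrib]
      have e2 : ∀ i ∈ (univ : Finset (Fin (t+1))), b i * ρ i - b' i * ρ i
          = if i ∈ X then ρ i * (b i - β i) else 0 := by
        intro i _
        by_cases hiX : i ∈ X
        · rw [if_pos hiX, hb'def]
          have := (hXmem i).mp hiX
          dsimp only
          rw [min_eq_right (by omega)]
          ring
        · rw [if_neg hiX, hb'def]
          have : ¬ (β i < b i) := fun hc => hiX ((hXmem i).mpr hc)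
          dsimp only
          rw [min_eq_left (by omega)]
          ring
      rw [Finset.sum_congr rfl e2, Finset.sum_ite_mem, Finset.univ_inter] at e1
      rw [hLL]
      omega
    -- the kill via MI if val + SS ≥ g + 3
    rcases le_or_gt ((g:ℤ) + 3) (val ρ b + SS) with hbig | hsmallv
    · have hmi := h.mi b' hb'0 (by omega)
      omega
    -- survivor analysis : SS ≤ 2
    have hSS2 : SS ≤ 2 := by omega
    have hcard : (X.card : ℤ) ≤ SS := by
      rw [hSS]
      calc (X.card : ℤ) = ∑ i ∈ X, (1:ℤ) := by simp
        _ ≤ ∑ i ∈ X, sfun i := Finset.sum_le_sum (fun i hi => (hsX i hi).2.1)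
    have hsle : ∀ i ∈ X, sfun i ≤ SS - ((X.card : ℤ) - 1) := by
      intro i hi
      have e1 : SS = sfun i + ∑ j ∈ X.erase i, sfun j := by
        rw [hSS, ← Finset.add_sum_erase _ _ hi]
      have e2 : ((X.erase i).card : ℤ) ≤ ∑ j ∈ X.erase i, sfun j := by
        calc ((X.erase i).card : ℤ) = ∑ j ∈ X.erase i, (1:ℤ) := by simp
          _ ≤ _ := Finset.sum_le_sum (fun j hj => (hsX j (Finset.mem_erase.mp hj).2).2.1)
      have e3 : (X.erase i).card = X.card - 1 := Finset.card_erase_of_mem hi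
      have hc1 : 1 ≤ X.card := Finset.card_pos.mpr ⟨i, hi⟩
      rw [e3] at e2
      have : ((X.card - 1 : ℕ) : ℤ) = (X.card : ℤ) - 1 := by omega
      omega
    have hXat : ∀ i ∈ X, b i = β i + 1 := by
      intro i hi
      by_contra hc
      have hge2 : β i + 2 ≤ b i := by
        have := (hXmem i).mp hi
        omega
      have h5 := (hsX i hi).2.2.1 hge2
      have := hsle i hi
      omega
    have hXcard2 : X.card ≤ 2 := by omega
    -- the val upper bound
    have hvup : val ρ b ≤ (g:ℤ) - (∑ i, Df i) + ∑ i ∈ X, ρ i := by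
      have e1 : val ρ b ≤ ∑ i, (ρ i * β i + (if i ∈ X then ρ i else 0)) := by
        unfold val
        apply Finset.sum_le_sum
        intro i _
        by_cases hiX : i ∈ X
        · rw [if_pos hiX, hXat i hiX]
          ring_nf
          omega
        · rw [if_neg hiX]
          have : ¬ (β i < b i) := fun hc => hiX ((hXmem i).mpr hc)
          have := h.hpos i
          nlinarith [hb0 i]
      have e2 : ∑ i, (ρ i * β i + (if i ∈ X then ρ i else 0))
          = (∑ i, ρ i * β i) + ∑ i ∈ X, ρ i := by
        rw [Finset.sum_add_distrib, Finset.sum_ite_mem, Finset.univ_inter]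
      have e3 : ∑ i, ρ i * β i = (g:ℤ) - ∑ i, Df i := by
        have hgG := h.gG
        unfold Gv at hgG
        have : ∑ i, Tb (ρ i - 1) = ∑ i, (ρ i * β i + Df i) :=
          Finset.sum_congr rfl (fun i _ => hTbsplit i)
        rw [this, Finset.sum_add_distrib] at hgG
        omega
      omega
    have hDfsplit : ∑ i, Df i = (∑ i ∈ X, Df i) + ∑ i ∈ univ \ X, Df i := by
      have := Finset.sum_sdiff (f := Df) (Finset.subset_univ X)
      omega
    have hDout0 : 0 ≤ ∑ i ∈ univ \ X, Df i :=
      Finset.sum_nonneg (fun i _ => (hN i).1)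
    -- key inequality
    have hkey : (∑ i ∈ univ \ X, Df i) + (∑ i ∈ X, Df i) ≤ ∑ i ∈ X, ρ i := by
      omega
    -- σ facts for members
    have hσ : ∀ i ∈ X, 1 ≤ 3*(β i) + 3 - ρ i ∧ 3*(β i) + 3 - ρ i ≤ SS - ((X.card:ℤ) - 1) := by
      intro i hi
      have h1 := (hsX i hi).2.2.2.1 (hXat i hi)
      have h2 := hsle i hi
      have h3 := (hsX i hi).2.1
      have hf := (hβf i).2.1
      constructor
      · omega
      · omega
    -- case on |X|
    have hc1 : X.card = 1 ∨ X.card = 2 := by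
      have : 1 ≤ X.card := Finset.card_pos.mpr hXne
      omega
    -- helpers for elements outside X
    have hone : ∀ i, i ∉ X → Df i ≤ ∑ i ∈ univ \ X, Df i := by
      intro i hi
      apply Finset.single_le_sum (fun k _ => (hN k).1)
      rw [Finset.mem_sdiff]
      exact ⟨mem_univ _, hi⟩
    have hpair : ∀ i k : Fin (t+1), i ∉ X → k ∉ X → i ≠ k →
        Df i + Df k ≤ ∑ i ∈ univ \ X, Df i := by
      intro i k hi hk hik
      have hiS : i ∈ univ \ X := Finset.mem_sdiff.mpr ⟨mem_univ _, hi⟩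
      have hkS : k ∈ (univ \ X).erase i := by
        rw [Finset.mem_erase]
        exact ⟨Ne.symm hik, Finset.mem_sdiff.mpr ⟨mem_univ _, hk⟩⟩
      have e1 : ∑ x ∈ univ \ X, Df x = Df i + ∑ x ∈ (univ \ X).erase i, Df x := by
        rw [← Finset.add_sum_erase _ _ hiS]
      have e2 : Df k ≤ ∑ x ∈ (univ \ X).erase i, Df x :=
        Finset.single_le_sum (fun x _ => (hN x).1) hkS
      omega
    -- exact values of Df for ρ = 2, 5, 7
    have hDfval : ∀ i, (ρ i = 2 → Df i = 1) ∧ (ρ i = 5 → Df i = 5) ∧ (ρ i = 7 → Df i = 7) := by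
      intro i
      have hf := hβf i
      refine ⟨?_, ?_, ?_⟩
      · intro hv
        have hβv : β i = 0 := by omega
        simp only [hDfdef]
        rw [hv, hβv]
        norm_num [Tb]
      · intro hv
        have hβv : β i = 1 := by omega
        simp only [hDfdef]
        rw [hv, hβv]
        norm_num [Tb]
      · intro hv
        have hβv : β i = 2 := by omega
        simp only [hDfdef]
        rw [hv, hβv]
        norm_num [Tb]
    rcases hc1 with hc1 | hc1
    · -- |X| = 1
      obtain ⟨j, hXj⟩ := Finset.card_eq_one.mp hc1
      have hjX : j ∈ X := by rw [hXj]; exact Finset.mem_singleton_self j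
      have hmemX : ∀ i, i ∈ X ↔ i = j := by
        intro i
        rw [hXj, Finset.mem_singleton]
      have hkey1 : (∑ i ∈ univ \ X, Df i) + Df j ≤ ρ j := by
        have e1 : ∑ i ∈ X, Df i = Df j := by rw [hXj, Finset.sum_singleton]
        have e2 : ∑ i ∈ X, ρ i = ρ j := by rw [hXj, Finset.sum_singleton]
        omega
      have hσj := hσ j hjX
      have hσj2 : 3 * β j + 1 ≤ ρ j := by
        have := hσj.2
        omega
      have hNj := hN j
      by_cases hj0 : j = 0
      · -- head is coordinate 0
        have h4j : 4 ≤ ρ j := by rw [hj0]; exact h4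
        have hcases := hNj.2.2.2.2.2.2.2.2.1 hσj2 (by omega)
        have hρ0' : ρ j = 4 ∨ ρ j = 5 ∨ ρ j = 7 := by omega
        rcases hρ0' with hv | hv | hv
        · -- ρ 0 = 4
          have hDfj2 : 2 ≤ Df j := hNj.2.1 (by omega)
          by_cases hex : ∃ i₁, i₁ ≠ j ∧ 4 ≤ ρ i₁
          · obtain ⟨i₁, hi₁j, hi₁4⟩ := hex
            have hi₁X : i₁ ∉ X := by
              rw [hmemX]
              exact hi₁j
            have h2 : 2 ≤ Df i₁ := (hN i₁).2.1 hi₁4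
            have h3 := hone i₁ hi₁X
            have hρ4 : ρ i₁ = 4 := by
              have := (hN i₁).2.2.2.2.2.1 (by omega)
              omega
            refine h.kill_heads2 j i₁ (Ne.symm hi₁j) (Or.inl ⟨hv, hρ4⟩) ?_ ?_
            · intro i hij hii₁
              have hiX : i ∉ X := by rw [hmemX]; exact hij
              have hnn := (hN i).1
              have := hpair i i₁ hiX hi₁X hii₁
              have := (hN i).2.2.2.1 (by omega)
              omega
            · intro i
              by_cases hij : i = j
              · rw [hij]; omega
              by_cases hii : i = i₁
              · rw [hii]; omega
              have hiX : i ∉ X := by rw [hmemX]; exact hij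
              have hnn := (hN i).1
              have := hpair i i₁ hiX hi₁X hii
              have := (hN i).2.2.2.1 (by omega)
              omega
          · push_neg at hex
            refine h.kill_heads1 j (Or.inl hv) ?_ (by intro hc; omega)
            intro i hij
            have := hex i hij
            omega
        · -- ρ 0 = 5
          have hDfj : Df j = 5 := (hDfval j).2.1 hv
          refine h.kill_heads1 j (Or.inr (Or.inl hv)) ?_ (by intro hc; omega)
          intro i hij
          have hiX : i ∉ X := by rw [hmemX]; exact hij
          have hnn := (hN i).1
          have h3 := hone i hiX
          have := (hN i).2.2.2.1 (by omega)
          omega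
        · -- ρ 0 = 7
          have hDfj : Df j = 7 := (hDfval j).2.2 hv
          have hoth : ∀ i, i ≠ j → ρ i = 1 ∨ ρ i = 3 := by
            intro i hij
            have hiX : i ∉ X := by rw [hmemX]; exact hij
            have hnn := (hN i).1
            have h3 := hone i hiX
            exact (hN i).2.2.2.1 (by omega)
          refine h.kill_heads1 j (Or.inr (Or.inr hv)) ?_ ?_
          · intro i hij
            have := hoth i hij
            omega
          · intro _ i
            by_cases hij : i = j
            · rw [hij]; omega
            · have := hoth i hij
              omega
      · -- head j ≠ 0 : second four configuration
        have h0X : (0 : Fin (t+1)) ∉ X := by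
          rw [hmemX]
          exact fun hc => hj0 hc.symm
        have hD02 : 2 ≤ Df 0 := (hN 0).2.1 h4
        have h3 := hone 0 h0X
        have hjnn := hNj.1
        have hjval : ρ j = 4 := hNj.2.2.2.2.2.2.2.1 hσj2 (by omega)
        have hDfj2 : 2 ≤ Df j := hNj.2.1 (by omega)
        have hρ0v : ρ 0 = 4 := by
          have := (hN 0).2.2.2.2.2.1 (by omega)
          omega
        refine h.kill_heads2 0 j (fun hc => hj0 hc.symm) (Or.inl ⟨hρ0v, hjval⟩) ?_ ?_
        · intro i hi0 hij
          have hiX : i ∉ X := by rw [hmemX]; exact hij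
          have hnn := (hN i).1
          have := hpair i 0 hiX h0X hi0
          have := (hN i).2.2.2.1 (by omega)
          omega
        · intro i
          by_cases hi0 : i = 0
          · rw [hi0]; omega
          by_cases hij : i = j
          · rw [hij]; omega
          have hiX : i ∉ X := by rw [hmemX]; exact hij
          have hnn := (hN i).1
          have := hpair i 0 hiX h0X hi0
          have := (hN i).2.2.2.1 (by omega)
          omega
    · -- |X| = 2
      obtain ⟨j, k, hjk, hXjk⟩ := Finset.card_eq_two.mp hc1
      have hjX : j ∈ X := by rw [hXjk]; simp
      have hkX : k ∈ X := by rw [hXjk]; simp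
      have hsum2 : (∑ i ∈ X, Df i = Df j + Df k) ∧ (∑ i ∈ X, ρ i = ρ j + ρ k) := by
        constructor <;>
        · rw [hXjk, Finset.sum_insert (by rw [Finset.mem_singleton]; exact hjk),
            Finset.sum_singleton]
      have hkey2 : (∑ i ∈ univ \ X, Df i) + Df j + Df k ≤ ρ j + ρ k := by
        omega
      have hσj := hσ j hjX
      have hσk := hσ k hkX
      have hσj1 : ρ j = 3 * β j + 2 := by
        have h1 := hσj.1
        have h2 := hσj.2
        omega
      have hσk1 : ρ k = 3 * β k + 2 := by
        have h1 := hσk.1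
        have h2 := hσk.2
        omega
      by_cases h0X : (0 : Fin (t+1)) ∈ X
      · have h0jk : (0:Fin (t+1)) = j ∨ (0:Fin (t+1)) = k := by
          rw [hXjk, Finset.mem_insert, Finset.mem_singleton] at h0X
          exact h0X
        have main2 : ∀ j' k' : Fin (t+1), j' ≠ k' → j' ∈ X → k' ∈ X →
            ((0:Fin (t+1)) = j') → ρ j' = 3 * β j' + 2 → ρ k' = 3 * β k' + 2 →
            (∑ i ∈ univ \ X, Df i) + Df j' + Df k' ≤ ρ j' + ρ k' → False := by
          intro j' k' hjk' hj'X hk'X h0j' hσj'1 hσk'1 hkey'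
          have hXeq : X = {j', k'} := by
            have hsub : ({j', k'} : Finset (Fin (t+1))) ⊆ X := by
              intro x hx
              rw [Finset.mem_insert, Finset.mem_singleton] at hx
              rcases hx with rfl | rfl <;> assumption
            have hle : X.card ≤ ({j', k'} : Finset (Fin (t+1))).card := by
              rw [Finset.card_insert_of_notMem (by rw [Finset.mem_singleton]; exact hjk'),
                Finset.card_singleton, hc1]
            exact (Finset.eq_of_subset_of_card_le hsub hle).symm
          have hmemX' : ∀ i, i ∈ X ↔ (i = j' ∨ i = k') := by
            intro i
            rw [hXeq, Finset.mem_insert, Finset.mem_singleton]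
          have hNj' := hN j'
          have hNk' := hN k'
          have hDpk' : ρ k' - Df k' ≤ 1 := hNk'.2.2.2.2.2.2.2.2.2.2.2 hσk'1
          have h40 : 4 ≤ ρ j' := by rw [← h0j']; exact h4
          have hρj'5 : ρ j' = 5 := by
            have := hNj'.2.2.2.2.2.2.2.2.2.1 hσj'1 (by omega)
            omega
          have hDfj' : Df j' = 5 := (hDfval j').2.1 hρj'5
          have hρk' : ρ k' = 2 ∨ ρ k' = 5 := by
            apply hNk'.2.2.2.2.2.2.2.2.2.1 hσk'1
            omega
          rcases hρk' with hv | hv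
          · -- (5, 2)
            have hDfk' : Df k' = 1 := (hDfval k').1 hv
            refine h.kill_heads1 j' (Or.inr (Or.inl hρj'5)) ?_ (by intro hc; omega)
            intro i hij'
            by_cases hik' : i = k'
            · rw [hik', hv]; omega
            · have hiX : i ∉ X := by
                rw [hmemX']
                push_neg
                exact ⟨hij', hik'⟩
              have hnn := (hN i).1
              have := hone i hiX
              have := (hN i).2.2.2.2.1 (by omega)
              omega
          · -- (5,5)
            have hDfk' : Df k' = 5 := (hDfval k').2.1 hv
            refine h.kill_heads2 j' k' hjk' (Or.inr ⟨hρj'5, hv⟩) ?_ ?_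
            · intro i hij' hik'
              have hiX : i ∉ X := by
                rw [hmemX']
                push_neg
                exact ⟨hij', hik'⟩
              have hnn := (hN i).1
              have := hone i hiX
              have := (hN i).2.2.2.1 (by omega)
              omega
            · intro i
              by_cases hij' : i = j'
              · rw [hij', hρj'5]; omega
              by_cases hik' : i = k'
              · rw [hik', hv]; omega
              have hiX : i ∉ X := by
                rw [hmemX']
                push_neg
                exact ⟨hij', hik'⟩
              have hnn := (hN i).1
              have := hone i hiX
              have := (hN i).2.2.2.1 (by omega)
              omega
        rcases h0jk with h0j | h0k
        · exact main2 j k hjk hjX hkX h0j hσj1 hσk1 (by omega)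
        · exact main2 k j (Ne.symm hjk) hkX hjX h0k hσk1 hσj1 (by omega)
      · -- 0 outside X
        have hNj := hN j
        have hNk := hN k
        have hDpj : ρ j - Df j ≤ 1 := hNj.2.2.2.2.2.2.2.2.2.2.2 hσj1
        have hDpk : ρ k - Df k ≤ 1 := hNk.2.2.2.2.2.2.2.2.2.2.2 hσk1
        have hmemX : ∀ i, i ∈ X ↔ (i = j ∨ i = k) := by
          intro i
          rw [hXjk, Finset.mem_insert, Finset.mem_singleton]
        have hD02 : 2 ≤ Df 0 := (hN 0).2.1 h4
        have h3 := hone 0 h0X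
        have hDpj0 : 0 ≤ ρ j - Df j := by omega
        have hDpk0 : 0 ≤ ρ k - Df k := by omega
        have hρj2 : ρ j = 2 := hNj.2.2.2.2.2.2.2.2.2.2.1 hσj1 (by omega)
        have hρk2 : ρ k = 2 := hNk.2.2.2.2.2.2.2.2.2.2.1 hσk1 (by omega)
        have hDfj : Df j = 1 := (hDfval j).1 hρj2
        have hDfk : Df k = 1 := (hDfval k).1 hρk2
        have hρ0v : ρ 0 = 4 := by
          have := (hN 0).2.2.2.2.2.1 (by omega)
          omega
        refine h.kill_heads1 0 (Or.inl hρ0v) ?_ (by intro hc; omega)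
        intro i hi0
        by_cases hij : i = j
        · rw [hij, hρj2]; omega
        by_cases hik : i = k
        · rw [hik, hρk2]; omega
        have hiX : i ∉ X := by
          rw [hmemX]
          push_neg
          exact ⟨hij, hik⟩
        have hnn := (hN i).1
        have := hpair i 0 hiX h0X hi0
        have := (hN i).2.2.2.1 (by omega)
        omega

end Ctx
end Main13
end S5

namespace S5
section Main14
variable {t : ℕ} {V : ℕ → ℕ} {g : ℕ} {ρ : Fin (t+1) → ℤ}
open Finset
namespace Ctx

lemma Tq_zero (h : Ctx V g ρ) : Tq V g 0 = 0 := by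
  unfold Tq
  rw [Finset.card_eq_zero]
  apply Finset.filter_false_of_mem
  intro i _
  omega

lemma val_le_rho0_cost (h : Ctx V g ρ) (b : Fin (t+1) → ℤ) (hb : ∀ i, 0 ≤ b i) :
    val ρ b ≤ ρ 0 * cost b := by
  unfold val cost
  rw [Finset.mul_sum]
  apply Finset.sum_le_sum
  intro i _
  have h1 := h.hpos i
  have h2 := h.rho_le0 i
  have h3 := hb i
  have h4 := le_Tb h3
  have h5 := h.hpos 0
  nlinarith

lemma rho0_ge3 (h : Ctx V g ρ) : 3 ≤ ρ 0 := by
  have hgap := h.gap 1 le_rfl (by have := h.hV0; omega)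
  have hz := h.Tq_zero
  have hT1 : 3 ≤ Tq V g 1 := by omega
  obtain ⟨b, hb0, hbc, hbv⟩ := h.runub 1 (by omega)
  have := h.val_le_rho0_cost b hb0
  have h5 := h.hpos 0
  have h6 := cost_nonneg b
  have hT1' : (3:ℤ) ≤ (Tq V g 1 : ℤ) := by exact_mod_cast hT1
  push_cast at hbc
  nlinarith [mul_le_mul_of_nonneg_left hbc (le_trans zero_le_one h5)]

/-- all coordinates ≤ 3 : g = 3d + ε -/
lemma g_small (h : Ctx V g ρ) (hsmall : ∀ i, ρ i ≤ 3) :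
    (g:ℤ) = 3 * ((univ.filter (fun i => ρ i = 3)).card : ℤ)
      + ((univ.filter (fun i => ρ i = 2)).card : ℤ) := by
  have hgG := h.gG
  unfold Gv at hgG
  have e1 : ∑ i, Tb (ρ i - 1)
      = ∑ i, ((if ρ i = 3 then (3:ℤ) else 0) + (if ρ i = 2 then (1:ℤ) else 0)) := by
    apply Finset.sum_congr rfl
    intro i _
    have h3 := hsmall i
    have h1 := h.hpos i
    have : ρ i = 1 ∨ ρ i = 2 ∨ ρ i = 3 := by omega
    rcases this with hv | hv | hv <;> rw [hv] <;> norm_num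
    · exact Tb_0
    · exact Tb_1
    · exact Tb_2
  rw [e1, Finset.sum_add_distrib, ← Finset.sum_filter, ← Finset.sum_filter,
    Finset.sum_const, Finset.sum_const] at hgG
  simp at hgG
  push_cast at hgG
  omega

/-- no coordinate equal to 2 beyond two of them, when all are ≤ 3 -/
lemma eps_le2 (h : Ctx V g ρ) (hsmall : ∀ i, ρ i ≤ 3) (hρ3 : ρ 0 = 3) :
    (univ.filter (fun i => ρ i = 2)).card ≤ 2 := by
  by_contra hcon
  push_neg at hcon
  set dN : ℕ := (univ.filter (fun i => ρ i = 3)).card with hdN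
  set eN : ℕ := (univ.filter (fun i => ρ i = 2)).card with heN
  have hgid := h.g_small hsmall
  have hd1 : 1 ≤ dN := by
    have := Finset.card_pos.mpr
      (⟨(0 : Fin (t+1)), Finset.mem_filter.mpr ⟨mem_univ _, hρ3⟩⟩ :
        (univ.filter (fun i => ρ i = 3)).Nonempty)
    omega
  -- witness : indicator of the threes
  set w : Fin (t+1) → ℤ := fun i => if ρ i = 3 then 1 else 0 with hw
  have hw0 : ∀ i, 0 ≤ w i := by
    intro i
    rw [hw]; dsimp only
    split <;> omega
  have hwc : cost w = (dN:ℤ) := by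
    unfold cost
    have e : ∀ i ∈ (univ : Finset (Fin (t+1))), Tb (w i) = if ρ i = 3 then (1:ℤ) else 0 := by
      intro i _
      rw [hw]; dsimp only
      split
      · exact Tb_1
      · exact Tb_0
    rw [Finset.sum_congr rfl e, ← Finset.sum_filter, Finset.sum_const]
    simp [hdN]
  have hwv : val ρ w = 3 * (dN:ℤ) := by
    unfold val
    have e : ∀ i ∈ (univ : Finset (Fin (t+1))), w i * ρ i = if ρ i = 3 then (3:ℤ) else 0 := by
      intro i _
      rw [hw]; dsimp only
      by_cases h3 : ρ i = 3
      · rw [if_pos h3, if_pos h3, h3]; ring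
      · rw [if_neg h3, if_neg h3]; ring
    rw [Finset.sum_congr rfl e, ← Finset.sum_filter, Finset.sum_const]
    simp [mul_comm, hdN]
  refine h.kill_core (dN + 1) (3*dN + 2) (3*dN)
    ?_ ⟨w, hw0, by omega, by omega⟩ (by omega) (by omega) (by omega) (by omega) (by omega)
  intro b hb hc
  obtain ⟨A, B, hsm, hA, hAB, hB⟩ := h.small_data univ (fun i _ => hsmall i) b hb
  have : val ρ b = ∑ i, b i * ρ i := rfl
  have : cost b = ∑ i, Tb (b i) := rfl
  unfold val cost at *
  omega

end Ctx
end Main14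
end S5


/-- Suppose `ρ` realizes `(V_i)`, `V_0 > 1` and `μ > 2`. Then `ρ_0 ∈ {3,4}`, and `ρ`
takes one of the stated forms: if `ρ_0 = 3` then `ρ = (3,…,3,2,…,2,1,…,1)` with `d ≥ 1`
threes and `ε ≤ 2` twos and `g̃ = 3d + ε`; if `ρ_0 = 4` then `ρ = (4,3,…,3,1,…,1)` with
`d` threes and `g̃ = 3d + 6`. -/
theorem stmt5 (t : ℕ) (V : ℕ → ℕ) (g : ℕ)
    (hV1 : ∀ i, V (i + 1) ≤ V i)
    (hV2 : ∀ i, V i = 0 ↔ g ≤ i)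
    (hV3 : ∀ i, V i ≤ V (i + 1) + 1)
    (ρ : Fin (t + 1) → ℤ)
    (hmono : ∀ i j : Fin (t + 1), i ≤ j → ρ j ≤ ρ i)
    (hpos : ∀ i, 1 ≤ ρ i)
    (hg : 2 * (g : ℤ) ≤ dotP ρ ρ)
    (hreal : Realizes V ρ)
    (hV0 : 1 < V 0)
    (hmu : 2 < muQ V g) :
    (ρ 0 = 3 ∨ ρ 0 = 4) ∧
    (ρ 0 = 3 → ∃ d ε : ℕ, 1 ≤ d ∧ ε ≤ 2 ∧
      (Finset.univ.filter (fun i : Fin (t + 1) => ρ i = 3)).card = d ∧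
      (Finset.univ.filter (fun i : Fin (t + 1) => ρ i = 2)).card = ε ∧
      (∀ i, ρ i = 3 ∨ ρ i = 2 ∨ ρ i = 1) ∧
      g = 3 * d + ε) ∧
    (ρ 0 = 4 → ∃ d : ℕ,
      (Finset.univ.filter (fun i : Fin (t + 1) => ρ i = 4)).card = 1 ∧
      (Finset.univ.filter (fun i : Fin (t + 1) => ρ i = 3)).card = d ∧
      (∀ i, ρ i = 4 ∨ ρ i = 3 ∨ ρ i = 1) ∧
      g = 3 * d + 6) := by
  have h : S5.Ctx V g ρ := ⟨hV1, hV2, hV3, hmono, hpos, hg, hreal, hV0, hmu⟩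
  have h3 := h.rho0_ge3
  have h4 : ¬ (4 ≤ ρ 0) := fun hc => h.main_ge4 hc
  have hρ03 : ρ 0 = 3 := by omega
  have hsmall : ∀ i, ρ i ≤ 3 := fun i => by
    have := h.rho_le0 i
    omega
  have hall : ∀ i, ρ i = 3 ∨ ρ i = 2 ∨ ρ i = 1 := fun i => by
    have := hpos i
    have := hsmall i
    omega
  have hε := h.eps_le2 hsmall hρ03
  have hgid := h.g_small hsmall
  have hd1 : 1 ≤ (Finset.univ.filter (fun i : Fin (t+1) => ρ i = 3)).card := by
    have := Finset.card_pos.mpr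
      (⟨(0 : Fin (t+1)), Finset.mem_filter.mpr ⟨Finset.mem_univ _, hρ03⟩⟩ :
        (Finset.univ.filter (fun i : Fin (t+1) => ρ i = 3)).Nonempty)
    omega
  refine ⟨Or.inl hρ03, fun _ => ⟨_, _, hd1, hε, rfl, rfl, hall, by omega⟩,
    fun hc => (by omega : False).elim⟩
end
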